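/- arXiv:1910.13546 — 9 statements merged into one kernel-verified Lean document; each statement's English description precedes it below -/
import Mathlib

section
/- Let G be a graph on n vertices and let S = Σ_{u} C(d_G(u), 2) be the number of paths of length 2 (cherries) in G. Then 3·T(G) ≤ S ≤ C(n,3) + 2·T(G), where T(G) is the number of triangles in G. -/
open scoped Classical

/-- For a graph `G` on `n` vertices, with `S = Σ_u C(d_G(u), 2)` the number of cherries,
we have `3·T(G) ≤ S ≤ C(n,3) + 2·T(G)`, where `T(G)` is the number of triangles. -/
theorem stmt_2 {V : Type*} [Fintype V] (G : SimpleGraph V) :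
    3 * (G.cliqueFinset 3).card ≤ ∑ u : V, (G.degree u).choose 2 ∧
      ∑ u : V, (G.degree u).choose 2 ≤
        (Fintype.card V).choose 3 + 2 * (G.cliqueFinset 3).card := by
  classical
  set Ch : Finset ((_ : V) × Finset V) :=
    Finset.univ.sigma (fun u : V => (G.neighborFinset u).powersetCard 2) with hCh
  set f : ((_ : V) × Finset V) → Finset V := fun p => insert p.1 p.2 with hf
  set A : Finset (Finset V) := Finset.univ.powersetCard 3 with hA
  -- basic facts about members of Ch
  have hChmem : ∀ p ∈ Ch, p.2 ⊆ G.neighborFinset p.1 ∧ p.2.card = 2 ∧ p.1 ∉ p.2 := by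
    intro p hp
    rw [hCh, Finset.mem_sigma] at hp
    obtain ⟨-, hp⟩ := hp
    rw [Finset.mem_powersetCard] at hp
    refine ⟨hp.1, hp.2, fun hmem => ?_⟩
    have := hp.1 hmem
    simp [SimpleGraph.mem_neighborFinset] at this
  have hcard : Ch.card = ∑ u : V, (G.degree u).choose 2 := by
    rw [hCh, Finset.card_sigma]
    simp [Finset.card_powersetCard]
  have hmaps : ∀ p ∈ Ch, f p ∈ A := by
    intro p hp
    obtain ⟨h1, h2, h3⟩ := hChmem p hp
    rw [hA, Finset.mem_powersetCard]
    exact ⟨Finset.subset_univ _, by rw [hf]; simp [Finset.card_insert_of_notMem h3, h2]⟩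
  have hfib := Finset.card_eq_sum_card_fiberwise hmaps
  -- triangles are in A
  have hTsubA : G.cliqueFinset 3 ⊆ A := by
    intro t ht
    rw [SimpleGraph.mem_cliqueFinset_iff] at ht
    rw [hA, Finset.mem_powersetCard]
    exact ⟨Finset.subset_univ _, ht.2⟩
  -- fibers over triangles have at least 3 elements
  have hfib_ge : ∀ t ∈ G.cliqueFinset 3, 3 ≤ (Ch.filter (fun p => f p = t)).card := by
    intro t ht
    rw [SimpleGraph.mem_cliqueFinset_iff] at ht
    have himg : t.image (fun u => (⟨u, t.erase u⟩ : (_ : V) × Finset V)) ⊆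
        Ch.filter (fun p => f p = t) := by
      intro p hp
      rw [Finset.mem_image] at hp
      obtain ⟨u, hu, rfl⟩ := hp
      rw [Finset.mem_filter]
      constructor
      · rw [hCh, Finset.mem_sigma]
        refine ⟨Finset.mem_univ _, ?_⟩
        rw [Finset.mem_powersetCard]
        constructor
        · intro w hw
          rw [Finset.mem_erase] at hw
          rw [SimpleGraph.mem_neighborFinset]
          exact (ht.1 hu hw.2 (Ne.symm hw.1))
        · rw [Finset.card_erase_of_mem hu, ht.2]
      · show insert u (t.erase u) = t
        exact Finset.insert_erase hu
    have : (t.image (fun u => (⟨u, t.erase u⟩ : (_ : V) × Finset V))).card = 3 := by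
      rw [Finset.card_image_of_injOn (fun a _ b _ h => congrArg Sigma.fst h), ht.2]
    calc 3 = _ := this.symm
      _ ≤ _ := Finset.card_le_card himg
  -- on a fiber, the first coordinate determines the element
  have hkey : ∀ t, ∀ p ∈ Ch.filter (fun p => f p = t), ∀ q ∈ Ch.filter (fun p => f p = t),
      p.1 = q.1 → p = q := by
    intro t p hp q hq h1
    rw [Finset.mem_filter] at hp hq
    have hp3 := (hChmem p hp.1).2.2
    have hq3 := (hChmem q hq.1).2.2
    have : p.2 = q.2 := by
      have e1 : p.2 = (insert p.1 p.2).erase p.1 := (Finset.erase_insert hp3).symm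
      have e2 : q.2 = (insert q.1 q.2).erase q.1 := (Finset.erase_insert hq3).symm
      rw [e1, e2]
      show ((f p).erase p.1) = ((f q).erase q.1)
      rw [hp.2, hq.2, h1]
    exact Sigma.ext h1 (heq_of_eq this)
  -- fibers over triangles have at most 3 elements
  have hfib_le3 : ∀ t ∈ A, (Ch.filter (fun p => f p = t)).card ≤ 3 := by
    intro t htA
    rw [hA, Finset.mem_powersetCard] at htA
    have : (Ch.filter (fun p => f p = t)).card
        = ((Ch.filter (fun p => f p = t)).image Sigma.fst).card := by
      rw [Finset.card_image_of_injOn]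
      intro p hp q hq h
      exact hkey t p hp q hq h
    rw [this, ← htA.2]
    apply Finset.card_le_card
    intro u hu
    rw [Finset.mem_image] at hu
    obtain ⟨p, hp, rfl⟩ := hu
    rw [Finset.mem_filter] at hp
    rw [← hp.2]
    exact Finset.mem_insert_self _ _
  -- fibers over non-triangles have at most 1 element
  have hfib_le1 : ∀ t ∈ A, t ∉ G.cliqueFinset 3 → (Ch.filter (fun p => f p = t)).card ≤ 1 := by
    intro t htA hnt
    rw [Finset.card_le_one]
    intro p hp q hq
    by_cases h1 : p.1 = q.1
    · exact hkey t p hp q hq h1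
    · exfalso
      apply hnt
      rw [SimpleGraph.mem_cliqueFinset_iff]
      rw [hA, Finset.mem_powersetCard] at htA
      rw [Finset.mem_filter] at hp hq
      obtain ⟨hpn, hp2, hp3⟩ := hChmem p hp.1
      obtain ⟨hqn, hq2, hq3⟩ := hChmem q hq.1
      have hpt : t = insert p.1 p.2 := hp.2.symm
      have hqt : t = insert q.1 q.2 := hq.2.symm
      have hadjp : ∀ w ∈ t, w ≠ p.1 → G.Adj p.1 w := by
        intro w hw hwp
        have : w ∈ p.2 := by
          rw [hpt] at hw
          rcases Finset.mem_insert.mp hw with h | h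
          · exact absurd h hwp
          · exact h
        have := hpn this
        rwa [SimpleGraph.mem_neighborFinset] at this
      have hadjq : ∀ w ∈ t, w ≠ q.1 → G.Adj q.1 w := by
        intro w hw hwq
        have : w ∈ q.2 := by
          rw [hqt] at hw
          rcases Finset.mem_insert.mp hw with h | h
          · exact absurd h hwq
          · exact h
        have := hqn this
        rwa [SimpleGraph.mem_neighborFinset] at this
      have hp1t : p.1 ∈ t := by rw [hpt]; exact Finset.mem_insert_self _ _
      have hq1t : q.1 ∈ t := by rw [hqt]; exact Finset.mem_insert_self _ _
      constructor
      · intro a ha b hb hab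
        by_cases hap : a = p.1
        · subst hap; exact hadjp b hb (Ne.symm hab)
        · by_cases hbp : b = p.1
          · subst hbp; exact (hadjp a ha hab).symm
          · -- a, b ∈ t \ {p.1} = p.2, card 2, and q.1 ∈ p.2; so a = q.1 or b = q.1
            have hap2 : a ∈ p.2 := by
              rw [hpt] at ha
              rcases Finset.mem_insert.mp ha with h | h
              · exact absurd h hap
              · exact h
            have hbp2 : b ∈ p.2 := by
              rw [hpt] at hb
              rcases Finset.mem_insert.mp hb with h | h
              · exact absurd h hbp
              · exact h
            have hq12 : q.1 ∈ p.2 := by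
              rw [hpt] at hq1t
              rcases Finset.mem_insert.mp hq1t with h | h
              · exact absurd h (Ne.symm h1)
              · exact h
            -- p.2 has two elements, a b distinct, q.1 ∈ p.2
            have : a = q.1 ∨ b = q.1 := by
              by_contra hcon
              push_neg at hcon
              have : 3 ≤ p.2.card := by
                have : ({a, b, q.1} : Finset V) ⊆ p.2 := by
                  intro x hx
                  simp only [Finset.mem_insert, Finset.mem_singleton] at hx
                  rcases hx with rfl | rfl | rfl <;> assumption
                calc 3 = ({a, b, q.1} : Finset V).card := by
                        rw [Finset.card_insert_of_notMem, Finset.card_insert_of_notMem,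
                          Finset.card_singleton]
                        · simp [hcon.2]
                        · simp [hab, hcon.1]
                  _ ≤ _ := Finset.card_le_card this
              omega
            rcases this with rfl | rfl
            · exact hadjq b hb (Ne.symm hab)
            · exact (hadjq a ha hab).symm
      · exact htA.2
  constructor
  · -- lower bound
    rw [← hcard, hfib]
    calc 3 * (G.cliqueFinset 3).card = ∑ _t ∈ G.cliqueFinset 3, 3 := by
          rw [Finset.sum_const, smul_eq_mul, mul_comm]
      _ ≤ ∑ t ∈ G.cliqueFinset 3, (Ch.filter (fun p => f p = t)).card :=
          Finset.sum_le_sum hfib_ge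
      _ ≤ ∑ t ∈ A, (Ch.filter (fun p => f p = t)).card :=
          Finset.sum_le_sum_of_subset hTsubA
  · -- upper bound
    rw [← hcard, hfib]
    have hAcard : A.card = (Fintype.card V).choose 3 := by
      rw [hA, Finset.card_powersetCard, Finset.card_univ]
    calc ∑ t ∈ A, (Ch.filter (fun p => f p = t)).card
        ≤ ∑ t ∈ A, (1 + if t ∈ G.cliqueFinset 3 then 2 else 0) := by
          apply Finset.sum_le_sum
          intro t ht
          by_cases h : t ∈ G.cliqueFinset 3
          · simp only [h, if_true]
            exact hfib_le3 t ht
          · simp only [h, if_false]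
            simpa using hfib_le1 t ht h
      _ = A.card + ∑ t ∈ A, (if t ∈ G.cliqueFinset 3 then 2 else 0) := by
          rw [Finset.sum_add_distrib, Finset.sum_const, smul_eq_mul, mul_one]
      _ = A.card + 2 * (A ∩ G.cliqueFinset 3).card := by
          rw [Finset.sum_ite_mem, Finset.sum_const, smul_eq_mul, mul_comm]
      _ ≤ (Fintype.card V).choose 3 + 2 * (G.cliqueFinset 3).card := by
          rw [hAcard]
          exact Nat.add_le_add_left (Nat.mul_le_mul_left 2
            (Finset.card_le_card Finset.inter_subset_right)) _
end

section
/- If the edges of K_n are partitioned into two graphs G and H, then Σ_u [C(d_G(u),2) + C(d_H(u),2)] = C(n,3) + 2·T(G) + 2·T(H), where T(·) counts triangles. -/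
open scoped Classical

section Aux
open Finset
set_option linter.unusedSectionVars false
set_option maxHeartbeats 1000000

variable {V : Type*} [Fintype V]

private lemma two_mul_choose_two' (n : ℕ) : n * n = 2 * n.choose 2 + n := by
  induction n with
  | zero => simp
  | succ k ih =>
    rw [Nat.choose_succ_succ, Nat.choose_one_right]
    ring_nf
    ring_nf at ih
    omega

private noncomputable def ind (G : SimpleGraph V) (u v : V) : ℕ :=
  if G.Adj u v then 1 else 0

private noncomputable def eind (u v : V) : ℕ := if u = v then 0 else 1

private lemma ind_self (G : SimpleGraph V) (u : V) : ind G u u = 0 := by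
  simp [ind]

private lemma ind_symm (G : SimpleGraph V) (u v : V) : ind G u v = ind G v u := by
  simp [ind, SimpleGraph.adj_comm]

private lemma ind_sq (G : SimpleGraph V) (u v : V) : ind G u v * ind G u v = ind G u v := by
  unfold ind; split <;> simp

private lemma degree_eq_sum (G : SimpleGraph V) (u : V) :
    G.degree u = ∑ v : V, ind G u v := by
  classical
  rw [SimpleGraph.degree, SimpleGraph.neighborFinset_eq_filter, Finset.card_filter]
  simp [ind]

private lemma sum_eind (u : V) : ∑ v : V, eind u v = Fintype.card V - 1 := by
  classical
  have : ∑ v : V, eind u v = (univ.filter fun v => ¬ (u = v)).card := by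
    rw [Finset.card_filter]; unfold eind
    exact Finset.sum_congr rfl fun v _ => by split <;> simp_all
  rw [this]
  simp [Finset.filter_not, Finset.filter_eq, Finset.card_sdiff_of_subset, Finset.card_univ]

private lemma sum_eind2 (u v : V) (huv : u ≠ v) :
    ∑ w : V, eind u w * eind v w = Fintype.card V - 2 := by
  classical
  have : ∑ w : V, eind u w * eind v w
      = (univ.filter fun w => ¬ (u = w ∨ v = w)).card := by
    rw [Finset.card_filter]; unfold eind
    refine Finset.sum_congr rfl fun w _ => by
      by_cases h1 : u = w <;> by_cases h2 : v = w <;> simp_all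
  rw [this]
  have : (univ.filter fun w => ¬ (u = w ∨ v = w)) = univ \ {u, v} := by
    ext w; simp [eq_comm, and_comm]
  rw [this, Finset.card_univ_diff, Finset.card_insert_of_notMem (by simp [huv]),
    Finset.card_singleton]

private lemma sum_eee :
    ∑ u : V, ∑ v : V, ∑ w : V, eind u v * eind u w * eind v w
      = Fintype.card V * ((Fintype.card V - 1) * (Fintype.card V - 2)) := by
  have h1 : ∀ u v : V, ∑ w : V, eind u v * eind u w * eind v w
      = eind u v * (Fintype.card V - 2) := by
    intro u v
    by_cases huv : u = v
    · subst huv; simp [eind]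
    · simp only [mul_assoc, ← Finset.mul_sum, sum_eind2 u v huv]
  calc ∑ u : V, ∑ v : V, ∑ w : V, eind u v * eind u w * eind v w
      = ∑ u : V, ∑ v : V, eind u v * (Fintype.card V - 2) :=
        Finset.sum_congr rfl fun u _ => Finset.sum_congr rfl fun v _ => h1 u v
    _ = ∑ u : V, (Fintype.card V - 1) * (Fintype.card V - 2) := by
        refine Finset.sum_congr rfl fun u _ => ?_
        rw [← Finset.sum_mul, sum_eind u]
    _ = _ := by simp [Finset.card_univ, mul_comm]

private lemma sum_triangle (G : SimpleGraph V) :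
    ∑ u : V, ∑ v : V, ∑ w : V, ind G u v * ind G u w * ind G v w
      = 6 * (G.cliqueFinset 3).card := by
  classical
  set T : Finset (V × V × V) :=
    univ.filter (fun t => G.Adj t.1 t.2.1 ∧ G.Adj t.1 t.2.2 ∧ G.Adj t.2.1 t.2.2) with hT
  have h1 : ∑ u : V, ∑ v : V, ∑ w : V, ind G u v * ind G u w * ind G v w = T.card := by
    rw [hT, Finset.card_filter, Fintype.sum_prod_type]
    refine Finset.sum_congr rfl fun u _ => ?_
    rw [Fintype.sum_prod_type]
    refine Finset.sum_congr rfl fun v _ => Finset.sum_congr rfl fun w _ => ?_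
    unfold ind
    by_cases h1 : G.Adj u v <;> by_cases h2 : G.Adj u w <;> by_cases h3 : G.Adj v w <;> simp_all
  rw [h1]
  have hmap : ∀ t ∈ T, ({t.1, t.2.1, t.2.2} : Finset V) ∈ G.cliqueFinset 3 := by
    rintro ⟨u, v, w⟩ ht
    simp only [hT, Finset.mem_filter] at ht
    rw [SimpleGraph.mem_cliqueFinset_iff, SimpleGraph.is3Clique_triple_iff]
    exact ht.2
  rw [Finset.card_eq_sum_card_fiberwise hmap]
  have hfiber : ∀ s ∈ G.cliqueFinset 3,
      (T.filter fun t => ({t.1, t.2.1, t.2.2} : Finset V) = s).card = 6 := by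
    intro s hs
    rw [SimpleGraph.mem_cliqueFinset_iff] at hs
    obtain ⟨a, b, c, hab, hac, hbc, rfl⟩ := Finset.card_eq_three.1 hs.card_eq
    obtain ⟨hAab, hAac, hAbc⟩ := SimpleGraph.is3Clique_triple_iff.1 hs
    have key : (T.filter fun t => ({t.1, t.2.1, t.2.2} : Finset V) = {a, b, c})
        = ({(a,b,c), (a,c,b), (b,a,c), (b,c,a), (c,a,b), (c,b,a)} : Finset (V×V×V)) := by
      ext ⟨x, y, z⟩
      simp only [hT, Finset.mem_filter, Finset.mem_univ, true_and, Finset.mem_insert,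
        Finset.mem_singleton, Prod.mk.injEq]
      constructor
      · rintro ⟨⟨h1, h2, h3⟩, heq⟩
        have hx : x = a ∨ x = b ∨ x = c := by
          have : x ∈ ({a,b,c} : Finset V) := heq ▸ (by simp)
          simpa using this
        have hy : y = a ∨ y = b ∨ y = c := by
          have : y ∈ ({a,b,c} : Finset V) := heq ▸ (by simp)
          simpa using this
        have hz : z = a ∨ z = b ∨ z = c := by
          have : z ∈ ({a,b,c} : Finset V) := heq ▸ (by simp)
          simpa using this
        have ha' : a ∈ ({x,y,z} : Finset V) := heq ▸ (by simp)
        have hb' : b ∈ ({x,y,z} : Finset V) := heq ▸ (by simp)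
        have hc' : c ∈ ({x,y,z} : Finset V) := heq ▸ (by simp)
        simp only [Finset.mem_insert, Finset.mem_singleton] at ha' hb' hc'
        have hxy := h1.ne
        have hxz := h2.ne
        have hyz := h3.ne
        rcases hx with rfl|rfl|rfl <;> rcases hy with rfl|rfl|rfl <;>
          rcases hz with rfl|rfl|rfl <;> simp_all
      · rintro (⟨rfl,rfl,rfl⟩|⟨rfl,rfl,rfl⟩|⟨rfl,rfl,rfl⟩|⟨rfl,rfl,rfl⟩|
            ⟨rfl,rfl,rfl⟩|⟨rfl,rfl,rfl⟩) <;>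
          refine ⟨⟨?_, ?_, ?_⟩, ?_⟩ <;>
          first
          | assumption
          | exact hAab.symm | exact hAac.symm | exact hAbc.symm
          | (ext w; simp; try tauto)
    rw [key]
    repeat rw [Finset.card_insert_of_notMem (by simp [Prod.ext_iff]; tauto)]
    simp
  rw [Finset.sum_congr rfl hfiber, Finset.sum_const, smul_eq_mul, mul_comm]

private lemma sym_swap1 (p q : V → V → ℕ) (hp : ∀ u v, p u v = p v u) :
    (∑ u : V, ∑ v : V, ∑ w : V, p u v * p u w * q v w)
      = ∑ u : V, ∑ v : V, ∑ w : V, p u v * q u w * p v w := by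
  refine Finset.sum_comm.trans ?_
  refine Finset.sum_congr rfl fun v _ => Finset.sum_congr rfl fun u _ =>
    Finset.sum_congr rfl fun w _ => ?_
  rw [hp u v]; ring

private lemma sym_swap2 (p q : V → V → ℕ) (hp : ∀ u v, p u v = p v u) :
    (∑ u : V, ∑ v : V, ∑ w : V, p u v * q u w * p v w)
      = ∑ u : V, ∑ v : V, ∑ w : V, q u v * p u w * p v w := by
  refine Finset.sum_congr rfl fun u _ => Finset.sum_comm.trans ?_
  refine Finset.sum_congr rfl fun v _ => Finset.sum_congr rfl fun w _ => ?_
  rw [hp w v]; ring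

/-- Decomposition of the "cherry" sum. -/
private lemma cherry_decomp (A B : SimpleGraph V)
    (h : ∀ v w : V, ind A v w + ind B v w = eind v w) :
    (∑ u : V, ∑ v : V, ∑ w : V, ind A u v * ind A u w)
      = (∑ u : V, ∑ v : V, ∑ w : V, ind A u v * ind A u w * ind A v w)
        + (∑ u : V, ∑ v : V, ∑ w : V, ind A u v * ind A u w * ind B v w)
        + ∑ u : V, A.degree u := by
  have hpt : ∀ u v w : V, ind A u v * ind A u w
      = ind A u v * ind A u w * ind A v w + ind A u v * ind A u w * ind B v w
        + (if v = w then ind A u v else 0) := by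
    intro u v w
    by_cases hvw : v = w
    · subst hvw
      rw [ind_self, ind_self, if_pos rfl, ind_sq]
      ring
    · have h1 : ind A v w + ind B v w = 1 := by rw [h v w]; simp [eind, hvw]
      rw [if_neg hvw]
      calc ind A u v * ind A u w = ind A u v * ind A u w * (ind A v w + ind B v w) := by
            rw [h1]; ring
        _ = _ := by ring
  calc (∑ u : V, ∑ v : V, ∑ w : V, ind A u v * ind A u w)
      = ∑ u : V, ∑ v : V, ∑ w : V, (ind A u v * ind A u w * ind A v w
          + ind A u v * ind A u w * ind B v w + (if v = w then ind A u v else 0)) :=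
        Finset.sum_congr rfl fun u _ => Finset.sum_congr rfl fun v _ =>
          Finset.sum_congr rfl fun w _ => hpt u v w
    _ = _ := by
        simp only [Finset.sum_add_distrib]
        congr 1
        refine Finset.sum_congr rfl fun u _ => ?_
        rw [degree_eq_sum]
        refine Finset.sum_congr rfl fun v _ => ?_
        simp

end Aux

/-- If the edges of `K_n` are partitioned into two graphs `G` and `H`, then
`Σ_u [C(d_G(u),2) + C(d_H(u),2)] = C(n,3) + 2·T(G) + 2·T(H)`. -/
theorem stmt_4 {V : Type*} [Fintype V] (G H : SimpleGraph V)
    (hpart : ∀ u v : V, u ≠ v → (G.Adj u v ↔ ¬ H.Adj u v)) :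
    ∑ u : V, ((G.degree u).choose 2 + (H.degree u).choose 2) =
      (Fintype.card V).choose 3 + 2 * (G.cliqueFinset 3).card
        + 2 * (H.cliqueFinset 3).card := by
  classical
  set n := Fintype.card V with hn
  -- the partition fact, in indicator form
  have hab : ∀ u v : V, ind G u v + ind H u v = eind u v := by
    intro u v
    by_cases huv : u = v
    · subst huv; simp [ind, eind]
    · have hiff := hpart u v huv
      unfold ind eind
      by_cases hG : G.Adj u v
      · simp [hG, hiff.1 hG, huv]
      · have hH : H.Adj u v := by
          by_contra hH; exact hG (hiff.2 hH)
        simp [hG, hH, huv]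
  have hba : ∀ u v : V, ind H u v + ind G u v = eind u v := fun u v => by
    rw [add_comm]; exact hab u v
  -- names for the eight triple sums
  set Saaa := ∑ u : V, ∑ v : V, ∑ w : V, ind G u v * ind G u w * ind G v w with hSaaa
  set Sbbb := ∑ u : V, ∑ v : V, ∑ w : V, ind H u v * ind H u w * ind H v w with hSbbb
  set X := ∑ u : V, ∑ v : V, ∑ w : V, ind G u v * ind G u w * ind H v w with hX
  set Y := ∑ u : V, ∑ v : V, ∑ w : V, ind H u v * ind H u w * ind G v w with hY
  -- degree sums
  have hdeg : ∑ u : V, (G.degree u + H.degree u) = n * (n - 1) := by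
    have : ∀ u : V, G.degree u + H.degree u = n - 1 := by
      intro u
      rw [degree_eq_sum, degree_eq_sum, ← Finset.sum_add_distrib]
      calc ∑ v : V, (ind G u v + ind H u v) = ∑ v : V, eind u v :=
            Finset.sum_congr rfl fun v _ => hab u v
        _ = n - 1 := sum_eind u
    rw [Finset.sum_congr rfl fun u _ => this u, Finset.sum_const, smul_eq_mul,
      Finset.card_univ, hn]
  -- square sums via sum_mul_sum
  have hsq : ∀ (A : SimpleGraph V),
      (∑ u : V, ∑ v : V, ∑ w : V, ind A u v * ind A u w)
        = ∑ u : V, A.degree u * A.degree u := by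
    intro A
    refine Finset.sum_congr rfl fun u _ => ?_
    rw [degree_eq_sum, Finset.sum_mul_sum]
  -- cherry decompositions
  have hG2 := cherry_decomp G H hab
  have hH2 := cherry_decomp H G hba
  rw [hsq G, ← hSaaa, ← hX] at hG2
  rw [hsq H, ← hSbbb, ← hY] at hH2
  -- the big expansion over all ordered triples
  have hexp : n * ((n - 1) * (n - 2)) = Saaa + Sbbb + 3 * X + 3 * Y := by
    have e1 : ∑ u : V, ∑ v : V, ∑ w : V, eind u v * eind u w * eind v w
        = ∑ u : V, ∑ v : V, ∑ w : V,
            (ind G u v * ind G u w * ind G v w + ind G u v * ind G u w * ind H v w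
              + ind G u v * ind H u w * ind G v w + ind H u v * ind G u w * ind G v w
              + ind G u v * ind H u w * ind H v w + ind H u v * ind G u w * ind H v w
              + ind H u v * ind H u w * ind G v w + ind H u v * ind H u w * ind H v w) := by
      refine Finset.sum_congr rfl fun u _ => Finset.sum_congr rfl fun v _ =>
        Finset.sum_congr rfl fun w _ => ?_
      rw [← hab u v, ← hab u w, ← hab v w]
      ring
    rw [sum_eee, ← hn] at e1
    rw [e1]
    simp only [Finset.sum_add_distrib]
    have hXa : (∑ u : V, ∑ v : V, ∑ w : V, ind G u v * ind H u w * ind G v w) = X := by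
      rw [← sym_swap1 (ind G) (ind H) (ind_symm G), hX]
    have hXb : (∑ u : V, ∑ v : V, ∑ w : V, ind H u v * ind G u w * ind G v w) = X := by
      rw [← sym_swap2 (ind G) (ind H) (ind_symm G), hXa]
    have hYa : (∑ u : V, ∑ v : V, ∑ w : V, ind H u v * ind G u w * ind H v w) = Y := by
      rw [← sym_swap1 (ind H) (ind G) (ind_symm H), hY]
    have hYb : (∑ u : V, ∑ v : V, ∑ w : V, ind G u v * ind H u w * ind H v w) = Y := by
      rw [← sym_swap2 (ind H) (ind G) (ind_symm H), hYa]
    rw [hXa, hXb, hYa, hYb, ← hSaaa, ← hSbbb, ← hX, ← hY]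
    ring
  -- relate choose 3 to the falling factorial
  have hchoose3 : 6 * n.choose 3 = n * ((n - 1) * (n - 2)) := by
    have h := Nat.descFactorial_eq_factorial_mul_choose n 3
    have h2 : n.descFactorial 3 = (n - 2) * ((n - 1) * (n * 1)) := rfl
    rw [h2] at h
    have h3 : Nat.factorial 3 = 6 := rfl
    rw [h3] at h
    rw [← h]; ring
  -- relate the choose-2 sums to the square sums
  have hL : 2 * (∑ u : V, ((G.degree u).choose 2 + (H.degree u).choose 2))
        + ∑ u : V, (G.degree u + H.degree u)
      = (∑ u : V, G.degree u * G.degree u) + ∑ u : V, H.degree u * H.degree u := by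
    rw [Finset.mul_sum, ← Finset.sum_add_distrib, ← Finset.sum_add_distrib]
    refine Finset.sum_congr rfl fun u _ => ?_
    have g1 := two_mul_choose_two' (G.degree u)
    have g2 := two_mul_choose_two' (H.degree u)
    omega
  -- triangle counts
  have htG : Saaa = 6 * (G.cliqueFinset 3).card := sum_triangle G
  have htH : Sbbb = 6 * (H.cliqueFinset 3).card := sum_triangle H
  -- final arithmetic
  rw [hdeg] at hL
  rw [hG2, hH2] at hL
  -- hL : 2 * L + n*(n-1) = (Saaa + X + ΣdegG) + (Sbbb + Y + ΣdegH)
  have hdeg' : (∑ u : V, G.degree u) + ∑ u : V, H.degree u = n * (n - 1) := by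
    rw [← Finset.sum_add_distrib]; exact hdeg
  generalize hLv : (∑ u : V, ((G.degree u).choose 2 + (H.degree u).choose 2)) = L at hL ⊢
  generalize (∑ u : V, G.degree u) = DG at hL hdeg'
  generalize (∑ u : V, H.degree u) = DH at hL hdeg'
  generalize (G.cliqueFinset 3).card = tG at htG ⊢
  generalize (H.cliqueFinset 3).card = tH at htH ⊢
  generalize n * ((n - 1) * (n - 2)) = m3 at hexp hchoose3
  generalize n * (n - 1) = m2 at hL hdeg'
  generalize n.choose 3 = C3 at hchoose3 ⊢
  omega
end

section
/- For every ε with 0 < ε < 1/100 there exists n₀ such that for all n > n₀: if E(K_n) = E(G) ⊔ E(H) is any 2-coloring, then T(G) + T(H) ≥ (1/4 - ε)·C(n,3). -/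
open scoped Classical

open Finset

namespace GoodmanAux

variable {V : Type} [Fintype V]

/-- `v` is a "mixed" vertex of `S`: it has both a `G`-neighbour and an `H`-neighbour in `S`. -/
def Mixed (G H : SimpleGraph V) (S : Finset V) (v : V) : Prop :=
  (∃ b ∈ S, G.Adj v b) ∧ (∃ c ∈ S, H.Adj v c)

lemma clique_of_aux (G H : SimpleGraph V)
    (hGH : ∀ u v : V, u ≠ v → (G.Adj u v ↔ ¬ H.Adj u v))
    {S : Finset V} (hS : S.card = 3) {v w : V} (hv : v ∈ S) (hw : w ∈ S) (hvw : v ≠ w)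
    (hvall : ∀ x ∈ S, x ≠ v → G.Adj v x)
    (hwmix : ¬ Mixed G H S w) : G.IsClique S := by
  have hGwv : G.Adj w v := (hvall w hw (Ne.symm hvw)).symm
  have hwall : ∀ x ∈ S, x ≠ w → G.Adj w x := by
    intro x hx hxw
    rcases not_and_or.mp hwmix with h | h
    · exact absurd ⟨v, hv, hGwv⟩ h
    · push_neg at h
      exact (hGH w x (Ne.symm hxw)).mpr (h x hx)
  have hw' : w ∈ S.erase v := mem_erase.mpr ⟨Ne.symm hvw, hw⟩
  have hthird : ((S.erase v).erase w).card = 1 := by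
    rw [card_erase_of_mem hw', card_erase_of_mem hv, hS]
  rw [SimpleGraph.isClique_iff]
  intro a ha b hb hab
  simp only [Finset.mem_coe] at ha hb
  by_cases hav : a = v
  · subst hav; exact hvall b hb (Ne.symm hab)
  by_cases hbv : b = v
  · subst hbv; exact (hvall a ha hab).symm
  by_cases haw : a = w
  · subst haw; exact hwall b hb (Ne.symm hab)
  by_cases hbw : b = w
  · subst hbw; exact (hwall a ha hab).symm
  · exfalso
    have ha' : a ∈ (S.erase v).erase w := mem_erase.mpr ⟨haw, mem_erase.mpr ⟨hav, ha⟩⟩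
    have hb' : b ∈ (S.erase v).erase w := mem_erase.mpr ⟨hbw, mem_erase.mpr ⟨hbv, hb⟩⟩
    exact hab (Finset.card_le_one.mp hthird.le a ha' b hb')

lemma two_le_mixed_card (G H : SimpleGraph V)
    (hGH : ∀ u v : V, u ≠ v → (G.Adj u v ↔ ¬ H.Adj u v))
    {S : Finset V} (hS : S.card = 3)
    (hG : ¬ G.IsNClique 3 S) (hH : ¬ H.IsNClique 3 S) :
    2 ≤ (S.filter (fun v => Mixed G H S v)).card := by
  have hGH' : ∀ u v : V, u ≠ v → (H.Adj u v ↔ ¬ G.Adj u v) := by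
    intro u v h; have := hGH u v h; tauto
  by_contra hlt
  push_neg at hlt
  have hsplit := Finset.card_filter_add_card_filter_not
    (s := S) (p := fun v => Mixed G H S v)
  have h2 : 1 < (S.filter (fun v => ¬ Mixed G H S v)).card := by omega
  obtain ⟨v, hv, w, hw, hvw⟩ := Finset.one_lt_card.mp h2
  rw [mem_filter] at hv hw
  rcases not_and_or.mp hv.2 with h | h
  · -- v has no G-neighbour in S, hence all its S-edges are in H
    push_neg at h
    have hvall : ∀ x ∈ S, x ≠ v → H.Adj v x := by
      intro x hx hxv
      exact (hGH' v x (Ne.symm hxv)).mpr (h x hx)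
    have hwmix : ¬ Mixed H G S w := fun ⟨a, b⟩ => hw.2 ⟨b, a⟩
    exact hH ⟨clique_of_aux H G hGH' hS hv.1 hw.1 hvw hvall hwmix, hS⟩
  · push_neg at h
    have hvall : ∀ x ∈ S, x ≠ v → G.Adj v x := by
      intro x hx hxv
      exact (hGH v x (Ne.symm hxv)).mpr (h x hx)
    exact hG ⟨clique_of_aux G H hGH hS hv.1 hw.1 hvw hvall hw.2, hS⟩

lemma per_vertex (G H : SimpleGraph V)
    (hGH : ∀ u v : V, u ≠ v → (G.Adj u v ↔ ¬ H.Adj u v)) (v : V) :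
    (((univ : Finset V).powersetCard 3).filter
        (fun S => v ∈ S ∧ Mixed G H S v)).card ≤
      (G.neighborFinset v).card * (H.neighborFinset v).card := by
  rw [← Finset.card_product]
  apply Finset.card_le_card_of_surjOn (fun p => insert v {p.1, p.2})
  intro S hS
  simp only [coe_filter, Set.mem_setOf_eq, Finset.mem_powersetCard] at hS
  obtain ⟨⟨-, hS3⟩, hvS, ⟨b, hb, hGb⟩, c, hc, hHc⟩ := hS
  have hvb : v ≠ b := hGb.ne
  have hvc : v ≠ c := hHc.ne
  have hbc : b ≠ c := by
    rintro rfl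
    exact ((hGH v b hvb).mp hGb) hHc
  have hsub : insert v ({b, c} : Finset V) ⊆ S := by
    intro x hx
    simp only [mem_insert, mem_singleton] at hx
    rcases hx with rfl | rfl | rfl <;> assumption
  have hcard : (insert v ({b, c} : Finset V)).card = 3 := by
    rw [card_insert_of_notMem (by simp [hvb, hvc]),
      card_insert_of_notMem (by simp [hbc]), card_singleton]
  refine ⟨(b, c), ?_, ?_⟩
  · simp only [coe_product, Set.mem_prod, Finset.mem_coe, SimpleGraph.mem_neighborFinset]
    exact ⟨hGb, hHc⟩
  · exact Finset.eq_of_subset_of_card_le hsub (by rw [hS3, hcard])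

lemma goodman_nat (G H : SimpleGraph V)
    (hGH : ∀ u v : V, u ≠ v → (G.Adj u v ↔ ¬ H.Adj u v)) :
    2 * ((Fintype.card V).choose 3) ≤
      2 * (G.cliqueFinset 3).card + 2 * (H.cliqueFinset 3).card +
        ∑ v : V, (G.neighborFinset v).card * (H.neighborFinset v).card := by
  set P : Finset (Finset V) := (univ : Finset V).powersetCard 3 with hP
  set T : Finset (Finset V) :=
    P.filter (fun S => ¬ G.IsNClique 3 S ∧ ¬ H.IsNClique 3 S) with hT
  have hcard3 : ∀ S ∈ P, S.card = 3 := by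
    intro S hSP
    exact (Finset.mem_powersetCard.mp hSP).2
  -- Step 1: choose 3 ≤ T(G) + T(H) + |T|
  have h1 : (Fintype.card V).choose 3 ≤
      (G.cliqueFinset 3).card + (H.cliqueFinset 3).card + T.card := by
    have hPcard : P.card = (Fintype.card V).choose 3 := by
      rw [hP, Finset.card_powersetCard, Finset.card_univ]
    have hsplit := Finset.card_filter_add_card_filter_not
      (s := P) (p := fun S => G.IsNClique 3 S ∨ H.IsNClique 3 S)
    have hTeq : (P.filter (fun S => ¬ (G.IsNClique 3 S ∨ H.IsNClique 3 S))).card = T.card := by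
      congr 1
      apply Finset.filter_congr
      intro S _
      push_neg
      rfl
    have hmono : (P.filter (fun S => G.IsNClique 3 S ∨ H.IsNClique 3 S)).card ≤
        (G.cliqueFinset 3).card + (H.cliqueFinset 3).card := by
      rw [Finset.filter_or]
      refine (Finset.card_union_le _ _).trans ?_
      gcongr
      · intro S hSf
        exact SimpleGraph.mem_cliqueFinset_iff.mpr (Finset.mem_filter.mp hSf).2
      · intro S hSf
        exact SimpleGraph.mem_cliqueFinset_iff.mpr (Finset.mem_filter.mp hSf).2
    omega
  -- Step 2: 2 * |T| ≤ ∑ d_v e_v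
  have h2 : 2 * T.card ≤
      ∑ v : V, (G.neighborFinset v).card * (H.neighborFinset v).card := by
    have hTmix : ∀ S ∈ T, 2 ≤ (S.filter (fun v => Mixed G H S v)).card := by
      intro S hST
      rw [hT, Finset.mem_filter] at hST
      exact two_le_mixed_card G H hGH (hcard3 S hST.1) hST.2.1 hST.2.2
    calc 2 * T.card = ∑ _S ∈ T, 2 := by rw [Finset.sum_const, smul_eq_mul, mul_comm]
      _ ≤ ∑ S ∈ T, (S.filter (fun v => Mixed G H S v)).card := Finset.sum_le_sum hTmix
      _ = ∑ S ∈ T, ∑ v : V, (if v ∈ S ∧ Mixed G H S v then 1 else 0) := by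
          refine Finset.sum_congr rfl fun S _ => ?_
          have : S.filter (fun v => Mixed G H S v) =
              (univ : Finset V).filter (fun v => v ∈ S ∧ Mixed G H S v) := by
            ext x; simp [Finset.mem_filter]
          rw [this, Finset.card_filter]
      _ = ∑ v : V, ∑ S ∈ T, (if v ∈ S ∧ Mixed G H S v then 1 else 0) := Finset.sum_comm
      _ = ∑ v : V, (T.filter (fun S => v ∈ S ∧ Mixed G H S v)).card := by
          refine Finset.sum_congr rfl fun v _ => ?_
          rw [Finset.card_filter]
      _ ≤ ∑ v : V, (P.filter (fun S => v ∈ S ∧ Mixed G H S v)).card := by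
          refine Finset.sum_le_sum fun v _ => Finset.card_le_card ?_
          exact Finset.filter_subset_filter _ (Finset.filter_subset _ _)
      _ ≤ ∑ v : V, (G.neighborFinset v).card * (H.neighborFinset v).card :=
          Finset.sum_le_sum fun v _ => per_vertex G H hGH v
  omega

lemma degree_sum (G H : SimpleGraph V)
    (hGH : ∀ u v : V, u ≠ v → (G.Adj u v ↔ ¬ H.Adj u v)) (v : V) :
    (G.neighborFinset v).card + (H.neighborFinset v).card = Fintype.card V - 1 := by
  have hdisj : Disjoint (G.neighborFinset v) (H.neighborFinset v) := by
    rw [Finset.disjoint_left]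
    intro x hxG hxH
    rw [SimpleGraph.mem_neighborFinset] at hxG hxH
    exact (hGH v x hxG.ne).mp hxG hxH
  have hunion : G.neighborFinset v ∪ H.neighborFinset v = (univ : Finset V).erase v := by
    ext x
    simp only [Finset.mem_union, SimpleGraph.mem_neighborFinset, Finset.mem_erase,
      Finset.mem_univ, and_true]
    constructor
    · rintro (h | h)
      · exact (Ne.symm h.ne)
      · exact (Ne.symm h.ne)
    · intro hx
      by_cases hG : G.Adj v x
      · exact Or.inl hG
      · exact Or.inr ((hGH v x (Ne.symm hx)).not_left.mp hG)
  rw [← Finset.card_union_of_disjoint hdisj, hunion, Finset.card_erase_of_mem (Finset.mem_univ v),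
    Finset.card_univ]

end GoodmanAux

/-- Approximate Goodman's theorem: for every `0 < ε < 1/100` there exists `n₀` such that
for all `n > n₀`, in every 2-colouring `E(K_n) = E(G) ⊔ E(H)` we have
`T(G) + T(H) ≥ (1/4 - ε)·C(n,3)`. -/
theorem stmt_5 (ε : ℝ) (hε : 0 < ε) (hε' : ε < 1 / 100) :
    ∃ n₀ : ℕ, ∀ n : ℕ, n₀ < n → ∀ (V : Type) [Fintype V], Fintype.card V = n →
      ∀ G H : SimpleGraph V, (∀ u v : V, u ≠ v → (G.Adj u v ↔ ¬ H.Adj u v)) →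
        (1 / 4 - ε) * (n.choose 3 : ℝ) ≤
          ((G.cliqueFinset 3).card : ℝ) + ((H.cliqueFinset 3).card : ℝ) := by
  refine ⟨max 4 ⌈3 / (4 * ε) + 2⌉₊, ?_⟩
  intro n hn V _ hcard G H hGH
  have hn4 : (4 : ℕ) < n := lt_of_le_of_lt (le_max_left _ _) hn
  have hnc : ⌈3 / (4 * ε) + 2⌉₊ < n := lt_of_le_of_lt (le_max_right _ _) hn
  have hnR : 3 / (4 * ε) + 2 ≤ (n : ℝ) := by
    calc 3 / (4 * ε) + 2 ≤ (⌈3 / (4 * ε) + 2⌉₊ : ℝ) := Nat.le_ceil _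
      _ ≤ (n : ℝ) := by exact_mod_cast hnc.le
  have hn4R : (4 : ℝ) ≤ (n : ℝ) := by exact_mod_cast hn4.le
  -- the key counting inequality over ℕ, cast to ℝ
  have hnat := GoodmanAux.goodman_nat G H hGH
  rw [hcard] at hnat
  have hnatR : (2 * (n.choose 3) : ℝ) ≤
      2 * ((G.cliqueFinset 3).card : ℝ) + 2 * ((H.cliqueFinset 3).card : ℝ) +
        ∑ v : V, ((G.neighborFinset v).card * (H.neighborFinset v).card : ℝ) := by
    have := hnat
    have h' : ((2 * (n.choose 3) : ℕ) : ℝ) ≤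
        ((2 * (G.cliqueFinset 3).card + 2 * (H.cliqueFinset 3).card +
          ∑ v : V, (G.neighborFinset v).card * (H.neighborFinset v).card : ℕ) : ℝ) := by
      exact_mod_cast this
    push_cast at h'
    convert h' using 2
  -- bound each degree product
  have hprod : ∀ v : V,
      ((G.neighborFinset v).card * (H.neighborFinset v).card : ℝ) ≤
        ((n : ℝ) - 1) ^ 2 / 4 := by
    intro v
    have hsum := GoodmanAux.degree_sum G H hGH v
    rw [hcard] at hsum
    have h1n : 1 ≤ n := by omega
    have hsumR : ((G.neighborFinset v).card : ℝ) + ((H.neighborFinset v).card : ℝ)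
        = (n : ℝ) - 1 := by
      have : (((G.neighborFinset v).card + (H.neighborFinset v).card : ℕ) : ℝ)
          = ((n - 1 : ℕ) : ℝ) := congrArg (fun k : ℕ => (k : ℝ)) hsum
      push_cast [Nat.cast_sub h1n] at this
      linarith
    nlinarith [sq_nonneg (((G.neighborFinset v).card : ℝ) - ((H.neighborFinset v).card : ℝ))]
  have hsumbound : ∑ v : V, ((G.neighborFinset v).card * (H.neighborFinset v).card : ℝ)
      ≤ (n : ℝ) * (((n : ℝ) - 1) ^ 2 / 4) := by
    calc ∑ v : V, ((G.neighborFinset v).card * (H.neighborFinset v).card : ℝ)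
        ≤ ∑ _v : V, ((n : ℝ) - 1) ^ 2 / 4 := Finset.sum_le_sum fun v _ => hprod v
      _ = (n : ℝ) * (((n : ℝ) - 1) ^ 2 / 4) := by
          rw [Finset.sum_const, Finset.card_univ, hcard, nsmul_eq_mul]
  -- choose 3 as a polynomial
  have hchoose : (n.choose 3 : ℝ) * 6 = (n : ℝ) * ((n : ℝ) - 1) * ((n : ℝ) - 2) := by
    have h6 : 6 * n.choose 3 = n.descFactorial 3 :=
      (Nat.descFactorial_eq_factorial_mul_choose n 3).symm
    have hdesc : n.descFactorial 3 = (n - 2) * ((n - 1) * (n * 1)) := by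
      simp [Nat.descFactorial]
    have h2n : 2 ≤ n := by omega
    have h1n : 1 ≤ n := by omega
    have : ((6 * n.choose 3 : ℕ) : ℝ) = (((n - 2) * ((n - 1) * (n * 1)) : ℕ) : ℝ) := by
      rw [h6, hdesc]
    push_cast [Nat.cast_sub h2n, Nat.cast_sub h1n] at this
    linarith
  -- final arithmetic
  have hεn : 3 ≤ ((n : ℝ) - 2) * (4 * ε) := by
    have h4ε : (0 : ℝ) < 4 * ε := by linarith
    have : 3 / (4 * ε) ≤ (n : ℝ) - 2 := by linarith
    calc (3 : ℝ) = 3 / (4 * ε) * (4 * ε) := by field_simp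
      _ ≤ ((n : ℝ) - 2) * (4 * ε) := by
          apply mul_le_mul_of_nonneg_right this h4ε.le
  have key : 0 ≤ (n : ℝ) * ((n : ℝ) - 1) * (((n : ℝ) - 2) * (4 * ε) - 3) := by
    apply mul_nonneg
    · apply mul_nonneg <;> linarith
    · linarith
  nlinarith [hnatR, hsumbound, hchoose, key]
end

section
/- For every ε with 0 < ε < 1/100 there exists n₀ such that for all n > n₀: in every 2-coloring E(K_n) = E(G) ⊔ E(H) there is a color class, say G, satisfying both T(G) ≥ (1/6 - ε)·Σ_u C(d_G(u),2) and Σ_u C(d_G(u),2) ≥ n³/10⁶. -/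
open scoped Classical

open Finset

namespace GoodmanAux

/-- Real-valued indicator of a proposition. -/
noncomputable def ind (p : Prop) : ℝ := if p then 1 else 0

lemma ind_nonneg {p : Prop} : 0 ≤ ind p := by unfold ind; split <;> norm_num

lemma ind_le_one {p : Prop} : ind p ≤ 1 := by unfold ind; split <;> norm_num

lemma ind_and (p q : Prop) : ind (p ∧ q) = ind p * ind q := by
  unfold ind; by_cases hp : p <;> by_cases hq : q <;> simp [hp, hq]

lemma ind_mono {p q : Prop} (h : p → q) : ind p ≤ ind q := by
  unfold ind
  by_cases hp : p
  · simp [hp, h hp]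
  · simp only [hp, if_false]; split <;> norm_num

lemma ind_sq (p : Prop) : ind p * ind p = ind p := by
  unfold ind; by_cases hp : p <;> simp [hp]

lemma ind_congr {p q : Prop} (h : p ↔ q) : ind p = ind q := by
  unfold ind; simp [h]

lemma ind_split {p q r : Prop} (hpq : p ↔ (q ∨ r)) (hqr : ¬(q ∧ r)) :
    ind p = ind q + ind r := by
  unfold ind
  by_cases hq : q <;> by_cases hr : r <;>
    simp [hpq, hq, hr] <;> exact (hqr ⟨hq, hr⟩).elim

lemma ind_not (p : Prop) : ind (¬ p) = 1 - ind p := by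
  unfold ind; by_cases hp : p <;> simp [hp]

variable {V : Type} [Fintype V]

lemma deg_eq (G : SimpleGraph V) (a : V) :
    (G.degree a : ℝ) = ∑ b, ind (G.Adj a b) := by
  rw [SimpleGraph.degree, SimpleGraph.neighborFinset_eq_filter, card_filter]
  push_cast
  refine Finset.sum_congr rfl fun b _ => ?_
  unfold ind; split <;> norm_num

/-- ordered triangles -/
noncomputable def tri (G : SimpleGraph V) : ℝ :=
  ∑ a : V, ∑ b : V, ∑ c : V, ind (G.Adj a b ∧ G.Adj a c ∧ G.Adj b c)

/-- ordered open cherries : two `G`-edges at the apex, base an `H`-edge -/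
noncomputable def opc (G H : SimpleGraph V) : ℝ :=
  ∑ a : V, ∑ b : V, ∑ c : V, ind (G.Adj a b ∧ G.Adj a c ∧ H.Adj b c)

/-- mixed ordered pairs at a vertex -/
noncomputable def mixc (G H : SimpleGraph V) : ℝ :=
  ∑ a : V, ∑ b : V, ∑ c : V, ind (G.Adj a b ∧ H.Adj a c)

noncomputable def SG (G : SimpleGraph V) : ℝ := ∑ a : V, ((G.degree a).choose 2 : ℝ)

noncomputable def TT (G : SimpleGraph V) : ℝ := ((G.cliqueFinset 3).card : ℝ)

lemma tri_nonneg (G : SimpleGraph V) : 0 ≤ tri G := by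
  refine Finset.sum_nonneg fun a _ => Finset.sum_nonneg fun b _ =>
    Finset.sum_nonneg fun c _ => ind_nonneg

lemma opc_nonneg (G H : SimpleGraph V) : 0 ≤ opc G H := by
  refine Finset.sum_nonneg fun a _ => Finset.sum_nonneg fun b _ =>
    Finset.sum_nonneg fun c _ => ind_nonneg

lemma SG_nonneg (G : SimpleGraph V) : 0 ≤ SG G := by
  exact Finset.sum_nonneg fun a _ => Nat.cast_nonneg _

lemma TT_nonneg (G : SimpleGraph V) : 0 ≤ TT G := Nat.cast_nonneg _

lemma cherry_fiber (G : SimpleGraph V) (a : V) :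
    ∑ b : V, ∑ c : V, ind (G.Adj a b ∧ G.Adj a c ∧ b ≠ c)
      = (G.degree a : ℝ)^2 - G.degree a := by
  have hb : ∀ b : V, ∑ c : V, ind (G.Adj a b ∧ G.Adj a c ∧ b ≠ c)
      = ind (G.Adj a b) * ((G.degree a : ℝ) - ind (G.Adj a b)) := by
    intro b
    have key : ∀ c : V, ind (G.Adj a b ∧ G.Adj a c ∧ b ≠ c)
        = ind (G.Adj a b) * (ind (G.Adj a c) - ind (G.Adj a c) * ind (b = c)) := by
      intro c
      rw [ind_and, ind_and, show ind (b ≠ c) = 1 - ind (b = c) from ind_not _]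
      ring
    rw [Finset.sum_congr rfl fun c _ => key c, ← Finset.mul_sum, Finset.sum_sub_distrib]
    congr 1
    rw [deg_eq]
    congr 1
    have key2 : ∀ c : V, ind (G.Adj a c) * ind (b = c)
        = if b = c then ind (G.Adj a c) else 0 := by
      intro c; unfold ind; by_cases hbc : b = c <;> simp [hbc]
    rw [Finset.sum_congr rfl fun c _ => key2 c, Finset.sum_ite_eq]
    simp
  rw [Finset.sum_congr rfl fun b _ => hb b]
  have key3 : ∀ b : V, ind (G.Adj a b) * ((G.degree a : ℝ) - ind (G.Adj a b))
      = ind (G.Adj a b) * (G.degree a : ℝ) - ind (G.Adj a b) := by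
    intro b; rw [mul_sub, ind_sq]
  rw [Finset.sum_congr rfl fun b _ => key3 b, Finset.sum_sub_distrib, ← Finset.sum_mul,
    ← deg_eq]
  ring

lemma SG_eq (G : SimpleGraph V) :
    2 * SG G = ∑ a : V, ((G.degree a : ℝ)^2 - G.degree a) := by
  rw [SG, Finset.mul_sum]
  refine Finset.sum_congr rfl fun a _ => ?_
  rw [Nat.cast_choose_two]; ring

section Compl

variable {G H : SimpleGraph V}
  (h : ∀ u v : V, u ≠ v → (G.Adj u v ↔ ¬ H.Adj u v))

include h

lemma ne_iff (b c : V) : b ≠ c ↔ (G.Adj b c ∨ H.Adj b c) := by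
  constructor
  · intro hne
    by_cases hG : G.Adj b c
    · exact Or.inl hG
    · exact Or.inr (by have := (h b c hne); tauto)
  · rintro (hG | hH)
    · exact hG.ne
    · exact hH.ne

lemma not_and_adj (b c : V) : ¬ (G.Adj b c ∧ H.Adj b c) := by
  rintro ⟨hG, hH⟩
  exact ((h b c hG.ne).mp hG) hH

lemma ne_split {b c : V} : ind (b ≠ c) = ind (G.Adj b c) + ind (H.Adj b c) :=
  ind_split (ne_iff h b c) (not_and_adj h b c)

lemma cherry : tri G + opc G H = 2 * SG G := by
  rw [SG_eq, tri, opc]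
  simp only [← Finset.sum_add_distrib]
  refine Finset.sum_congr rfl fun a _ => ?_
  rw [← cherry_fiber G a]
  refine Finset.sum_congr rfl fun b _ => Finset.sum_congr rfl fun c _ => ?_
  refine (ind_split ?_ ?_).symm
  · have := ne_iff h b c; tauto
  · have := not_and_adj h b c; tauto

lemma deg_add (a : V) :
    (G.degree a : ℝ) + (H.degree a : ℝ) = (Fintype.card V : ℝ) - 1 := by
  rw [deg_eq, deg_eq, ← Finset.sum_add_distrib]
  have : ∀ b : V, ind (G.Adj a b) + ind (H.Adj a b) = ind (a ≠ b) :=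
    fun b => (ne_split h).symm
  rw [Finset.sum_congr rfl fun b _ => this b]
  have : ∀ b : V, ind (a ≠ b) = 1 - ind (a = b) := fun b => ind_not _
  rw [Finset.sum_congr rfl fun b _ => this b, Finset.sum_sub_distrib]
  have h2 : ∑ b : V, ind (a = b) = 1 := by
    simp [ind, Finset.sum_ite_eq]
  rw [h2, Finset.sum_const, Finset.card_univ, nsmul_eq_mul, mul_one]

end Compl

lemma mix_val (G H : SimpleGraph V) :
    mixc G H = ∑ a : V, (G.degree a : ℝ) * (H.degree a : ℝ) := by
  rw [mixc]
  refine Finset.sum_congr rfl fun a _ => ?_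
  rw [deg_eq, deg_eq, Finset.sum_mul_sum]
  exact Finset.sum_congr rfl fun b _ => Finset.sum_congr rfl fun c _ => ind_and _ _

lemma opc_le (G H : SimpleGraph V) :
    opc G H ≤ (Fintype.card V : ℝ) * ∑ b : V, (H.degree b : ℝ) := by
  have h1 : opc G H ≤ ∑ a : V, ∑ b : V, ∑ c : V, ind (H.Adj b c) := by
    refine Finset.sum_le_sum fun a _ => Finset.sum_le_sum fun b _ =>
      Finset.sum_le_sum fun c _ => ind_mono fun hx => hx.2.2
  have h2 : ∑ a : V, ∑ b : V, ∑ c : V, ind (H.Adj b c)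
      = (Fintype.card V : ℝ) * ∑ b : V, (H.degree b : ℝ) := by
    rw [Finset.sum_const, card_univ, nsmul_eq_mul]
    congr 1
    exact Finset.sum_congr rfl fun b _ => (deg_eq H b).symm
  linarith

lemma sum3_rev (t : V → V → V → ℝ) :
    ∑ a : V, ∑ b : V, ∑ c : V, t a b c = ∑ a : V, ∑ b : V, ∑ c : V, t c b a := by
  have s1 : ∑ a : V, ∑ b : V, ∑ c : V, t a b c
      = ∑ a : V, ∑ c : V, ∑ b : V, t a b c :=
    Finset.sum_congr rfl fun a _ => Finset.sum_comm
  have s2 : ∑ a : V, ∑ c : V, ∑ b : V, t a b c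
      = ∑ c : V, ∑ a : V, ∑ b : V, t a b c := Finset.sum_comm
  have s3 : ∑ c : V, ∑ a : V, ∑ b : V, t a b c
      = ∑ c : V, ∑ b : V, ∑ a : V, t a b c :=
    Finset.sum_congr rfl fun c _ => Finset.sum_comm
  rw [s1, s2, s3]

lemma sum3_swap12 (t : V → V → V → ℝ) :
    ∑ a : V, ∑ b : V, ∑ c : V, t a b c = ∑ a : V, ∑ b : V, ∑ c : V, t b a c :=
  Finset.sum_comm

section Compl2

variable {G H : SimpleGraph V}
  (h : ∀ u v : V, u ≠ v → (G.Adj u v ↔ ¬ H.Adj u v))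

include h

lemma mix_split : opc G H + opc H G = mixc G H := by
  have step : ∀ a b c : V, ind (G.Adj a b ∧ H.Adj a c) =
      ind (G.Adj a b ∧ H.Adj a c ∧ G.Adj b c) +
        ind (G.Adj a b ∧ H.Adj a c ∧ H.Adj b c) := by
    intro a b c
    refine ind_split ⟨?_, ?_⟩ ?_
    · rintro ⟨hg, hh⟩
      have hbc : b ≠ c := by
        intro hbceq
        rw [← hbceq] at hh
        exact ((h a b hg.ne).mp hg) hh
      rcases (ne_iff h b c).mp hbc with hbcG | hbcH
      · exact Or.inl ⟨hg, hh, hbcG⟩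
      · exact Or.inr ⟨hg, hh, hbcH⟩
    · rintro (⟨hg, hh, _⟩ | ⟨hg, hh, _⟩) <;> exact ⟨hg, hh⟩
    · rintro ⟨⟨_, _, h1⟩, ⟨_, _, h2⟩⟩
      exact not_and_adj h b c ⟨h1, h2⟩
  have expand : mixc G H
      = (∑ a : V, ∑ b : V, ∑ c : V, ind (G.Adj a b ∧ H.Adj a c ∧ G.Adj b c))
        + ∑ a : V, ∑ b : V, ∑ c : V, ind (G.Adj a b ∧ H.Adj a c ∧ H.Adj b c) := by
    rw [mixc]
    simp only [← Finset.sum_add_distrib]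
    exact Finset.sum_congr rfl fun a _ => Finset.sum_congr rfl fun b _ =>
      Finset.sum_congr rfl fun c _ => step a b c
  have e1 : ∑ a : V, ∑ b : V, ∑ c : V, ind (G.Adj a b ∧ H.Adj a c ∧ G.Adj b c)
      = opc G H := by
    rw [sum3_swap12 (fun a b c => ind (G.Adj a b ∧ H.Adj a c ∧ G.Adj b c)), opc]
    refine Finset.sum_congr rfl fun a _ => Finset.sum_congr rfl fun b _ =>
      Finset.sum_congr rfl fun c _ => ind_congr ?_
    rw [G.adj_comm a b]
    tauto
  have e2 : ∑ a : V, ∑ b : V, ∑ c : V, ind (G.Adj a b ∧ H.Adj a c ∧ H.Adj b c)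
      = opc H G := by
    rw [sum3_rev (fun a b c => ind (G.Adj a b ∧ H.Adj a c ∧ H.Adj b c)), opc]
    refine Finset.sum_congr rfl fun a _ => Finset.sum_congr rfl fun b _ =>
      Finset.sum_congr rfl fun c _ => ind_congr ?_
    rw [G.adj_comm c b, H.adj_comm c a, H.adj_comm b a]
    tauto
  rw [expand, e1, e2]

end Compl2

lemma tri_eq_card (G : SimpleGraph V) :
    tri G = ((univ.filter fun x : V × V × V =>
      G.Adj x.1 x.2.1 ∧ G.Adj x.1 x.2.2 ∧ G.Adj x.2.1 x.2.2).card : ℝ) := by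
  rw [Finset.card_filter]
  push_cast
  rw [Fintype.sum_prod_type]
  refine Finset.sum_congr rfl fun a _ => ?_
  rw [Fintype.sum_prod_type]
  refine Finset.sum_congr rfl fun b _ => Finset.sum_congr rfl fun c _ => ?_
  by_cases hp : G.Adj a b ∧ G.Adj a c ∧ G.Adj b c <;> simp [ind, hp]

set_option maxHeartbeats 4000000 in
lemma card_ord_tri (G : SimpleGraph V) :
    (univ.filter fun x : V × V × V =>
      G.Adj x.1 x.2.1 ∧ G.Adj x.1 x.2.2 ∧ G.Adj x.2.1 x.2.2).card
      = 6 * (G.cliqueFinset 3).card := by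
  have hmaps : ∀ x ∈ (univ.filter fun x : V × V × V =>
      G.Adj x.1 x.2.1 ∧ G.Adj x.1 x.2.2 ∧ G.Adj x.2.1 x.2.2),
      ({x.1, x.2.1, x.2.2} : Finset V) ∈ G.cliqueFinset 3 := by
    intro x hx
    simp only [Finset.mem_filter] at hx
    exact SimpleGraph.mem_cliqueFinset_iff.mpr
      (SimpleGraph.is3Clique_triple_iff.mpr ⟨hx.2.1, hx.2.2.1, hx.2.2.2⟩)
  rw [Finset.card_eq_sum_card_fiberwise hmaps]
  have hfib6 : ∀ t ∈ G.cliqueFinset 3,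
      ((univ.filter fun x : V × V × V =>
        G.Adj x.1 x.2.1 ∧ G.Adj x.1 x.2.2 ∧ G.Adj x.2.1 x.2.2).filter
          fun x => ({x.1, x.2.1, x.2.2} : Finset V) = t).card = 6 := by
    intro t ht
    obtain ⟨a, b, c, hab, hac, hbc, rfl⟩ :=
      SimpleGraph.is3Clique_iff.mp (SimpleGraph.mem_cliqueFinset_iff.mp ht)
    have hab' : a ≠ b := hab.ne
    have hac' : a ≠ c := hac.ne
    have hbc' : b ≠ c := hbc.ne
    have hba' : b ≠ a := hab'.symm
    have hca' : c ≠ a := hac'.symm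
    have hcb' : c ≠ b := hbc'.symm
    have hfib : ((univ.filter fun x : V × V × V =>
        G.Adj x.1 x.2.1 ∧ G.Adj x.1 x.2.2 ∧ G.Adj x.2.1 x.2.2).filter
          fun x => ({x.1, x.2.1, x.2.2} : Finset V) = ({a, b, c} : Finset V))
        = {(a,b,c), (a,c,b), (b,a,c), (b,c,a), (c,a,b), (c,b,a)} := by
      ext ⟨x, y, z⟩
      simp only [Finset.mem_filter, Finset.mem_univ, true_and, Finset.mem_insert,
        Finset.mem_singleton, Prod.mk.injEq]
      constructor
      · rintro ⟨⟨hxy, hxz, hyz⟩, hset⟩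
        have hx : x = a ∨ x = b ∨ x = c := by
          have : x ∈ ({a, b, c} : Finset V) := by rw [← hset]; simp
          simpa using this
        have hy : y = a ∨ y = b ∨ y = c := by
          have : y ∈ ({a, b, c} : Finset V) := by rw [← hset]; simp
          simpa using this
        have hz : z = a ∨ z = b ∨ z = c := by
          have : z ∈ ({a, b, c} : Finset V) := by rw [← hset]; simp
          simpa using this
        have h1 : x ≠ y := hxy.ne
        have h2 : x ≠ z := hxz.ne
        have h3 : y ≠ z := hyz.ne
        rcases hx with rfl | rfl | rfl <;> rcases hy with rfl | rfl | rfl <;>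
          rcases hz with rfl | rfl | rfl <;> tauto
      · have e1 : ({b, a, c} : Finset V) = {a, b, c} := by
          ext w; simp; tauto
        have e2 : ({b, c, a} : Finset V) = {a, b, c} := by
          ext w; simp; tauto
        have e3 : ({c, a, b} : Finset V) = {a, b, c} := by
          ext w; simp; tauto
        have e4 : ({c, b, a} : Finset V) = {a, b, c} := by
          ext w; simp; tauto
        have e5 : ({a, c, b} : Finset V) = {a, b, c} := by
          ext w; simp; tauto
        rintro (⟨rfl, rfl, rfl⟩ | ⟨rfl, rfl, rfl⟩ | ⟨rfl, rfl, rfl⟩ | ⟨rfl, rfl, rfl⟩ |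
          ⟨rfl, rfl, rfl⟩ | ⟨rfl, rfl, rfl⟩)
        · exact ⟨⟨hab, hac, hbc⟩, rfl⟩
        · exact ⟨⟨hac, hab, hbc.symm⟩, e5⟩
        · exact ⟨⟨hab.symm, hbc, hac⟩, e1⟩
        · exact ⟨⟨hbc, hab.symm, hac.symm⟩, e2⟩
        · exact ⟨⟨hac.symm, hbc.symm, hab⟩, e3⟩
        · exact ⟨⟨hbc.symm, hac.symm, hab.symm⟩, e4⟩
    rw [hfib]
    have k1 : ((a,b,c) : V × V × V) ∉
        ({(a,c,b), (b,a,c), (b,c,a), (c,a,b), (c,b,a)} : Finset (V × V × V)) := by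
      simp [Prod.ext_iff, hab', hac', hbc', hba', hca', hcb']
    have k2 : ((a,c,b) : V × V × V) ∉
        ({(b,a,c), (b,c,a), (c,a,b), (c,b,a)} : Finset (V × V × V)) := by
      simp [Prod.ext_iff, hab', hac', hbc', hba', hca', hcb']
    have k3 : ((b,a,c) : V × V × V) ∉
        ({(b,c,a), (c,a,b), (c,b,a)} : Finset (V × V × V)) := by
      simp [Prod.ext_iff, hab', hac', hbc', hba', hca', hcb']
    have k4 : ((b,c,a) : V × V × V) ∉ ({(c,a,b), (c,b,a)} : Finset (V × V × V)) := by
      simp [Prod.ext_iff, hab', hac', hbc', hba', hca', hcb']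
    have k5 : ((c,a,b) : V × V × V) ∉ ({(c,b,a)} : Finset (V × V × V)) := by
      simp [Prod.ext_iff, hab', hac', hbc', hba', hca', hcb']
    rw [Finset.card_insert_of_notMem k1, Finset.card_insert_of_notMem k2,
      Finset.card_insert_of_notMem k3, Finset.card_insert_of_notMem k4,
      Finset.card_insert_of_notMem k5, Finset.card_singleton]
  rw [Finset.sum_congr rfl hfib6, Finset.sum_const, smul_eq_mul, mul_comm]

lemma tri_eq_TT (G : SimpleGraph V) : tri G = 6 * TT G := by
  rw [tri_eq_card, card_ord_tri, TT]
  push_cast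
  ring

/-- Aggregate (Goodman) inequality, pure arithmetic. -/
lemma arith_agg (n eps T S Q : ℝ) (g1 : 6 * T = 2 * S - Q)
    (g2 : 2 * S = n * (n - 1) * (n - 2) - 2 * Q)
    (f7 : 4 * Q ≤ n * (n - 1) ^ 2) (hQ0 : 0 ≤ Q)
    (hn : 10 ^ 6 ≤ n) (hne : 16 ≤ eps * n) (he0 : 0 < eps) (he1 : eps < 1 / 100) :
    eps * n ^ 3 / 32 ≤ T - (1 / 6 - eps) * S := by
  have hb : 23 * (eps * n) / 96 ≤ eps * (n - 3) / 4 - 1 / 12 := by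
    nlinarith [hne, he0.le, he1]
  have hn0 : (0:ℝ) < n := by linarith
  have hc : eps * n ^ 3 / 32 ≤ n * (n - 1) * (eps * (n - 3) / 4 - 1 / 12) := by
    nlinarith [hb, hn0, mul_pos hn0 hn0, mul_nonneg (mul_nonneg hn0.le hn0.le) he0.le,
      mul_nonneg hn0.le he0.le]
  have hq : eps * (4 * Q) ≤ eps * (n * (n - 1) ^ 2) :=
    mul_le_mul_of_nonneg_left f7 he0.le
  nlinarith [hc, f7, hq, hQ0]

set_option maxHeartbeats 1600000 in
lemma arith_side (n eps TG TH sG sH oGH oHG pG qG Q : ℝ)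
    (f1 : 6 * TG + oGH = 2 * sG) (f2 : 6 * TH + oHG = 2 * sH)
    (f3 : oGH + oHG = Q)
    (g2 : 2 * sG + 2 * sH = n * (n - 1) * (n - 2) - 2 * Q)
    (f7 : 4 * Q ≤ n * (n - 1) ^ 2) (hQ0 : 0 ≤ Q)
    (f8 : 2 * sG = qG - pG)
    (f10 : pG ^ 2 ≤ n * qG)
    (f11 : oHG ≤ n * pG)
    (nn1 : 0 ≤ oGH) (nn2 : 0 ≤ oHG) (nnTH : 0 ≤ TH) (nnp : 0 ≤ pG) (nnsH : 0 ≤ sH)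
    (hn : 10 ^ 6 ≤ n) (hne : 16 ≤ eps * n) (he0 : 0 < eps) (he1 : eps < 1 / 100) :
    TH < (1 / 6 - eps) * sH →
      (1 / 6 - eps) * sG ≤ TG ∧ n ^ 3 / 10 ^ 6 ≤ sG := by
  intro hfail
  have hn0 : (0:ℝ) < n := by linarith
  have g1 : 6 * (TG + TH) = 2 * (sG + sH) - Q := by linarith
  have agg : eps * n ^ 3 / 32 ≤ (TG + TH) - (1 / 6 - eps) * (sG + sH) :=
    arith_agg n eps (TG + TH) (sG + sH) Q g1 (by linarith) f7 hQ0 hn hne he0 he1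
  have hpos : 0 ≤ eps * n ^ 3 / 32 := by positivity
  constructor
  · nlinarith [agg, hfail, hpos]
  · by_contra hcon
    push_neg at hcon
    have hTG : 6 * TG ≤ 2 * sG := by linarith
    have hr1 : n * (n - 1) * (n - 2) - 3 * (n * (n - 1) ^ 2) / 4
        = n * (n - 1) * (n - 5) / 4 := by ring
    have hTH : n * (n - 1) * (n - 5) / 24 - sG / 3 ≤ TH := by linarith
    have hesH : 0 ≤ eps * sH := mul_nonneg he0.le nnsH
    have hoHG : sH ≤ oHG := by nlinarith [f2, hfail, hesH]
    have h3TH : 3 * TH ≤ sH := by linarith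
    have hm : n * (n - 1) * (n - 5) / 8 - sG ≤ n * pG := by linarith
    have hx : (0:ℝ) ≤ (n - 10 ^ 6) * n * n :=
      mul_nonneg (mul_nonneg (by linarith) hn0.le) hn0.le
    have step1 : n ^ 2 / 9 ≤ pG := by
      refine le_of_mul_le_mul_left ?_ hn0
      have hkey : n ^ 3 / 9 + n ^ 3 / 10 ^ 6 ≤ n * (n - 1) * (n - 5) / 8 := by
        nlinarith [hx, hn0.le, hn]
      rw [show n * (n ^ 2 / 9) = n ^ 3 / 9 from by ring]
      linarith [hm, hcon, hkey]
    have hq : qG = 2 * sG + pG := by linarith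
    have f10' : pG ^ 2 ≤ n * (2 * sG + pG) := by rw [← hq]; exact f10
    have hpp : pG ^ 2 - n * pG ≤ 2 * n * sG := by nlinarith [f10']
    have hs1 : 0 ≤ pG - n ^ 2 / 9 := sub_nonneg.2 step1
    have hs2 : 0 ≤ n ^ 2 / 9 - n := by
      have hx2 : (0:ℝ) ≤ (n - 9) * n := mul_nonneg (by linarith) hn0.le
      nlinarith [hx2]
    have hpn : 0 ≤ pG - n := by linarith
    have hprod : (n ^ 2 / 9) * (n ^ 2 / 9 - n) ≤ pG * (pG - n) := by
      nlinarith [mul_nonneg hs1 hpn, mul_nonneg (by positivity : (0:ℝ) ≤ n ^ 2 / 9) hs1]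
    have hx3 : (0:ℝ) ≤ (n - 10 ^ 6) * n ^ 3 :=
      mul_nonneg (by linarith) (by positivity)
    have hbig : 2 * n ^ 4 / 10 ^ 6 < n ^ 4 / 81 - n ^ 3 / 9 := by
      nlinarith [hx3, pow_pos hn0 3]
    have hsg : 2 * n * sG < 2 * n ^ 4 / 10 ^ 6 := by
      have h2n : (0:ℝ) < 2 * n := by linarith
      have := mul_lt_mul_of_pos_left hcon h2n
      nlinarith [this]
    nlinarith [hpp, hprod, hbig, hsg]

lemma arith_both (n sG sH Q : ℝ)
    (g2 : 2 * sG + 2 * sH = n * (n - 1) * (n - 2) - 2 * Q)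
    (f7 : 4 * Q ≤ n * (n - 1) ^ 2) (hn : 10 ^ 6 ≤ n) (hle : sG ≤ sH) :
    n ^ 3 / 10 ^ 6 ≤ sH := by
  have h1 : n / 2 ≤ n - 1 := by linarith
  have h2 : n / 2 ≤ n - 3 := by linarith
  have hn0 : (0:ℝ) < n := by linarith
  have h3 : n ^ 3 / 4 ≤ n * (n - 1) * (n - 3) := by nlinarith [h1, h2, hn0]
  have hr : n * (n - 1) * (n - 2) - n * (n - 1) ^ 2 / 2 = n * (n - 1) * (n - 3) / 2 := by
    ring
  nlinarith [h3, g2, f7, hle, hn0]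

section Assemble

variable {G H : SimpleGraph V}

lemma side (h : ∀ u v : V, u ≠ v → (G.Adj u v ↔ ¬ H.Adj u v))
    (eps : ℝ) (he0 : 0 < eps) (he1 : eps < 1 / 100)
    (hn : (10:ℝ) ^ 6 ≤ (Fintype.card V : ℝ))
    (hne : 16 ≤ eps * (Fintype.card V : ℝ))
    (hfail : TT H < (1 / 6 - eps) * SG H) :
    (1 / 6 - eps) * SG G ≤ TT G ∧ (Fintype.card V : ℝ) ^ 3 / 10 ^ 6 ≤ SG G := by
  classical
  set n : ℝ := (Fintype.card V : ℝ) with hnn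
  have hswap : ∀ u v : V, u ≠ v → (H.Adj u v ↔ ¬ G.Adj u v) := by
    intro u v huv
    have := h u v huv
    tauto
  have f1 : 6 * TT G + opc G H = 2 * SG G := by
    have := cherry h
    rw [tri_eq_TT] at this
    linarith
  have f2 : 6 * TT H + opc H G = 2 * SG H := by
    have := cherry hswap
    rw [tri_eq_TT] at this
    linarith
  have f3 : opc G H + opc H G = ∑ a : V, (G.degree a : ℝ) * (H.degree a : ℝ) := by
    rw [mix_split h, mix_val]
  have f6 : (∑ a : V, (G.degree a : ℝ)) + ∑ a : V, (H.degree a : ℝ) = n * (n - 1) := by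
    rw [← Finset.sum_add_distrib,
      Finset.sum_congr rfl (fun a _ => deg_add h a), Finset.sum_const, card_univ,
      nsmul_eq_mul]
  have f5 : (∑ a : V, (G.degree a : ℝ) ^ 2) + (∑ a : V, (H.degree a : ℝ) ^ 2)
      + 2 * ∑ a : V, (G.degree a : ℝ) * (H.degree a : ℝ) = n * (n - 1) ^ 2 := by
    have point : ∀ a : V, (G.degree a : ℝ) ^ 2 + (H.degree a : ℝ) ^ 2
        + 2 * ((G.degree a : ℝ) * (H.degree a : ℝ)) = (n - 1) ^ 2 := by
      intro a
      have hda := deg_add h a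
      linear_combination ((G.degree a : ℝ) + (H.degree a : ℝ) + (n - 1)) * hda
    rw [Finset.mul_sum, ← Finset.sum_add_distrib, ← Finset.sum_add_distrib,
      Finset.sum_congr rfl (fun a _ => point a), Finset.sum_const, card_univ, nsmul_eq_mul]
  have f7 : 4 * ∑ a : V, (G.degree a : ℝ) * (H.degree a : ℝ) ≤ n * (n - 1) ^ 2 := by
    have point : ∀ a : V, 4 * ((G.degree a : ℝ) * (H.degree a : ℝ)) ≤ (n - 1) ^ 2 := by
      intro a
      have hda := deg_add h a
      nlinarith [sq_nonneg ((G.degree a : ℝ) - (H.degree a : ℝ)), hda]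
    calc 4 * ∑ a : V, (G.degree a : ℝ) * (H.degree a : ℝ)
        = ∑ a : V, 4 * ((G.degree a : ℝ) * (H.degree a : ℝ)) := by
          rw [Finset.mul_sum]
      _ ≤ ∑ a : V, ((n:ℝ) - 1) ^ 2 := Finset.sum_le_sum fun a _ => point a
      _ = n * (n - 1) ^ 2 := by rw [Finset.sum_const, card_univ, nsmul_eq_mul]
  have hQ0 : 0 ≤ ∑ a : V, (G.degree a : ℝ) * (H.degree a : ℝ) :=
    Finset.sum_nonneg fun a _ => mul_nonneg (Nat.cast_nonneg _) (Nat.cast_nonneg _)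
  have f8 : 2 * SG G = (∑ a : V, (G.degree a : ℝ) ^ 2) - ∑ a : V, (G.degree a : ℝ) := by
    rw [SG_eq, Finset.sum_sub_distrib]
  have f9 : 2 * SG H = (∑ a : V, (H.degree a : ℝ) ^ 2) - ∑ a : V, (H.degree a : ℝ) := by
    rw [SG_eq, Finset.sum_sub_distrib]
  have g2 : 2 * SG G + 2 * SG H = n * (n - 1) * (n - 2)
      - 2 * ∑ a : V, (G.degree a : ℝ) * (H.degree a : ℝ) := by
    have hr : n * (n - 1) ^ 2 - n * (n - 1) = n * (n - 1) * (n - 2) := by ring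
    linarith [f5, f6, f8, f9]
  have f10 : (∑ a : V, (G.degree a : ℝ)) ^ 2 ≤ n * ∑ a : V, (G.degree a : ℝ) ^ 2 := by
    have := sq_sum_le_card_mul_sum_sq (s := (univ : Finset V))
      (f := fun a => (G.degree a : ℝ))
    simpa [card_univ] using this
  have f11 : opc H G ≤ n * ∑ a : V, (G.degree a : ℝ) := opc_le H G
  have nnp : 0 ≤ ∑ a : V, (G.degree a : ℝ) :=
    Finset.sum_nonneg fun a _ => Nat.cast_nonneg _
  exact arith_side n eps (TT G) (TT H) (SG G) (SG H) (opc G H) (opc H G)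
    (∑ a : V, (G.degree a : ℝ)) (∑ a : V, (G.degree a : ℝ) ^ 2)
    (∑ a : V, (G.degree a : ℝ) * (H.degree a : ℝ))
    f1 f2 f3 g2 f7 hQ0 f8 f10 f11 (opc_nonneg G H) (opc_nonneg H G) (TT_nonneg H)
    nnp (SG_nonneg H) hn hne he0 he1 hfail

lemma key (h : ∀ u v : V, u ≠ v → (G.Adj u v ↔ ¬ H.Adj u v))
    (eps : ℝ) (he0 : 0 < eps) (he1 : eps < 1 / 100)
    (hn : (10:ℝ) ^ 6 ≤ (Fintype.card V : ℝ))
    (hne : 16 ≤ eps * (Fintype.card V : ℝ)) :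
    ((1 / 6 - eps) * SG G ≤ TT G ∧ (Fintype.card V : ℝ) ^ 3 / 10 ^ 6 ≤ SG G) ∨
      ((1 / 6 - eps) * SG H ≤ TT H ∧ (Fintype.card V : ℝ) ^ 3 / 10 ^ 6 ≤ SG H) := by
  classical
  have hswap : ∀ u v : V, u ≠ v → (H.Adj u v ↔ ¬ G.Adj u v) := by
    intro u v huv
    have := h u v huv
    tauto
  by_cases hA : TT H < (1 / 6 - eps) * SG H
  · exact Or.inl (side h eps he0 he1 hn hne hA)
  · by_cases hB : TT G < (1 / 6 - eps) * SG G
    · exact Or.inr (side hswap eps he0 he1 hn hne hB)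
    · push_neg at hA hB
      have f1 : 6 * TT G + opc G H = 2 * SG G := by
        have := cherry h
        rw [tri_eq_TT] at this
        linarith
      have f2 : 6 * TT H + opc H G = 2 * SG H := by
        have := cherry hswap
        rw [tri_eq_TT] at this
        linarith
      have f3 : opc G H + opc H G = ∑ a : V, (G.degree a : ℝ) * (H.degree a : ℝ) := by
        rw [mix_split h, mix_val]
      have f6 : (∑ a : V, (G.degree a : ℝ)) + ∑ a : V, (H.degree a : ℝ)
          = (Fintype.card V : ℝ) * ((Fintype.card V : ℝ) - 1) := by
        rw [← Finset.sum_add_distrib,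
          Finset.sum_congr rfl (fun a _ => deg_add h a), Finset.sum_const, card_univ,
          nsmul_eq_mul]
      have f5 : (∑ a : V, (G.degree a : ℝ) ^ 2) + (∑ a : V, (H.degree a : ℝ) ^ 2)
          + 2 * ∑ a : V, (G.degree a : ℝ) * (H.degree a : ℝ)
          = (Fintype.card V : ℝ) * ((Fintype.card V : ℝ) - 1) ^ 2 := by
        have point : ∀ a : V, (G.degree a : ℝ) ^ 2 + (H.degree a : ℝ) ^ 2
            + 2 * ((G.degree a : ℝ) * (H.degree a : ℝ))
            = ((Fintype.card V : ℝ) - 1) ^ 2 := by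
          intro a
          have hda := deg_add h a
          linear_combination
            ((G.degree a : ℝ) + (H.degree a : ℝ) + ((Fintype.card V : ℝ) - 1)) * hda
        rw [Finset.mul_sum, ← Finset.sum_add_distrib, ← Finset.sum_add_distrib,
          Finset.sum_congr rfl (fun a _ => point a), Finset.sum_const, card_univ,
          nsmul_eq_mul]
      have f7 : 4 * ∑ a : V, (G.degree a : ℝ) * (H.degree a : ℝ)
          ≤ (Fintype.card V : ℝ) * ((Fintype.card V : ℝ) - 1) ^ 2 := by
        have point : ∀ a : V, 4 * ((G.degree a : ℝ) * (H.degree a : ℝ))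
            ≤ ((Fintype.card V : ℝ) - 1) ^ 2 := by
          intro a
          have hda := deg_add h a
          nlinarith [sq_nonneg ((G.degree a : ℝ) - (H.degree a : ℝ)), hda]
        calc 4 * ∑ a : V, (G.degree a : ℝ) * (H.degree a : ℝ)
            = ∑ a : V, 4 * ((G.degree a : ℝ) * (H.degree a : ℝ)) := by
              rw [Finset.mul_sum]
          _ ≤ ∑ a : V, ((Fintype.card V : ℝ) - 1) ^ 2 :=
              Finset.sum_le_sum fun a _ => point a
          _ = (Fintype.card V : ℝ) * ((Fintype.card V : ℝ) - 1) ^ 2 := by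
              rw [Finset.sum_const, card_univ, nsmul_eq_mul]
      have f8 : 2 * SG G
          = (∑ a : V, (G.degree a : ℝ) ^ 2) - ∑ a : V, (G.degree a : ℝ) := by
        rw [SG_eq, Finset.sum_sub_distrib]
      have f9 : 2 * SG H
          = (∑ a : V, (H.degree a : ℝ) ^ 2) - ∑ a : V, (H.degree a : ℝ) := by
        rw [SG_eq, Finset.sum_sub_distrib]
      have g2 : 2 * SG G + 2 * SG H
          = (Fintype.card V : ℝ) * ((Fintype.card V : ℝ) - 1) * ((Fintype.card V : ℝ) - 2)
            - 2 * ∑ a : V, (G.degree a : ℝ) * (H.degree a : ℝ) := by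
        have hr : (Fintype.card V : ℝ) * ((Fintype.card V : ℝ) - 1) ^ 2
            - (Fintype.card V : ℝ) * ((Fintype.card V : ℝ) - 1)
            = (Fintype.card V : ℝ) * ((Fintype.card V : ℝ) - 1)
              * ((Fintype.card V : ℝ) - 2) := by ring
        linarith [f5, f6, f8, f9]
      rcases le_total (SG G) (SG H) with hle | hle
      · exact Or.inr ⟨hA, arith_both _ _ _ _ g2 f7 hn hle⟩
      · exact Or.inl ⟨hB, arith_both _ _ _ _ (by linarith [g2]) f7 hn hle⟩

end Assemble

end GoodmanAux

/-- For every `0 < ε < 1/100` there exists `n₀` such that for all `n > n₀`, in every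
2-colouring `E(K_n) = E(G) ⊔ E(H)` there is a colour class, say `G`, with
`T(G) ≥ (1/6 - ε)·Σ_u C(d_G(u),2)` and `Σ_u C(d_G(u),2) ≥ n³/10⁶`. -/
theorem stmt_6 (ε : ℝ) (hε : 0 < ε) (hε' : ε < 1 / 100) :
    ∃ n₀ : ℕ, ∀ n : ℕ, n₀ < n → ∀ (V : Type) [Fintype V], Fintype.card V = n →
      ∀ G H : SimpleGraph V, (∀ u v : V, u ≠ v → (G.Adj u v ↔ ¬ H.Adj u v)) →
        ((1 / 6 - ε) * ∑ u : V, ((G.degree u).choose 2 : ℝ) ≤ ((G.cliqueFinset 3).card : ℝ) ∧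
            (n : ℝ) ^ 3 / 10 ^ 6 ≤ ∑ u : V, ((G.degree u).choose 2 : ℝ)) ∨
          ((1 / 6 - ε) * ∑ u : V, ((H.degree u).choose 2 : ℝ) ≤ ((H.cliqueFinset 3).card : ℝ) ∧
            (n : ℝ) ^ 3 / 10 ^ 6 ≤ ∑ u : V, ((H.degree u).choose 2 : ℝ)) := by
  refine ⟨max (10 ^ 6) (Nat.ceil (16 / ε)), ?_⟩
  intro n hn V _ hcard G H h
  have hc1 : (10:ℝ) ^ 6 ≤ (Fintype.card V : ℝ) := by
    rw [hcard]
    have h1 : (10 ^ 6 : ℕ) ≤ n := le_of_lt (lt_of_le_of_lt (le_max_left _ _) hn)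
    exact_mod_cast h1
  have hc2 : 16 ≤ ε * (Fintype.card V : ℝ) := by
    rw [hcard]
    have h1 : Nat.ceil (16 / ε) ≤ n := le_of_lt (lt_of_le_of_lt (le_max_right _ _) hn)
    have h2 : 16 / ε ≤ (n : ℝ) := le_trans (Nat.le_ceil _) (by exact_mod_cast h1)
    calc (16:ℝ) = ε * (16 / ε) := by field_simp
      _ ≤ ε * n := mul_le_mul_of_nonneg_left h2 hε.le
  have hk := GoodmanAux.key h ε hε hε' hc1 hc2
  rw [hcard] at hk
  simpa [GoodmanAux.SG, GoodmanAux.TT] using hk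
end

section
/- For every integer c ≥ 3 there exist n₀ and α_c > 0 such that for all n > n₀, in every c-coloring E(K_n) = G₁ ⊔ ... ⊔ G_c there is a color class G_i with T(G_i) ≥ α_c·Σ_u C(d_{G_i}(u),2) and Σ_u C(d_{G_i}(u),2) ≥ α_c·n³. -/
open scoped Classical

open Finset

/-- Recursive Ramsey bound for monochromatic triangles with `c+1` colours. -/
def rbAux : ℕ → ℕ
  | 0 => 3
  | c + 1 => (c + 2) * rbAux c + 2

lemma three_le_rbAux (c : ℕ) : 3 ≤ rbAux c := by
  induction c with
  | zero => simp [rbAux]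
  | succ c ih =>
    have : rbAux c ≤ (c + 2) * rbAux c + 2 := by nlinarith
    exact le_trans ih this

/-- Multicolour Ramsey: any covering of the pairs of a large vertex set by `c+1` graphs
contains a monochromatic triangle. -/
lemma ramsey_triangle (c : ℕ) : ∀ (V : Type) [Fintype V], rbAux c ≤ Fintype.card V →
    ∀ G : Fin (c + 1) → SimpleGraph V, (∀ u v : V, u ≠ v → ∃ i, (G i).Adj u v) →
      ∃ i s, (G i).IsNClique 3 s := by
  induction c with
  | zero =>
    intro V _ hV G hcov
    obtain ⟨s, -, hs⟩ := Finset.exists_subset_card_eq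
      (show 3 ≤ (Finset.univ : Finset V).card by simpa [rbAux] using hV)
    refine ⟨0, s, ?_, hs⟩
    intro u hu v hv huv
    obtain ⟨i, hi⟩ := hcov u v huv
    have hi0 : i = 0 := by omega
    rw [hi0] at hi
    exact hi
  | succ c ih =>
    intro V _ hV G hcov
    have hposV : 0 < Fintype.card V := by
      have := three_le_rbAux (c + 1); omega
    obtain ⟨v⟩ := Fintype.card_pos_iff.mp hposV
    -- colour of the edge from v to u
    have hcov' : ∀ u : V, u ≠ v → ∃ i, (G i).Adj v u := fun u h => hcov v u h.symm
    choose χ hχ using hcov'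
    set f : V → Fin (c + 2) := fun u => if h : u = v then 0 else χ u h with hf
    -- pigeonhole on univ.erase v
    have hmaps : ∀ a ∈ Finset.univ.erase v, f a ∈ (Finset.univ : Finset (Fin (c + 2))) :=
      fun a _ => Finset.mem_univ _
    have hcount : (Finset.univ : Finset (Fin (c + 2))).card * rbAux c ≤
        (Finset.univ.erase v).card := by
      rw [Finset.card_erase_of_mem (Finset.mem_univ v), Finset.card_univ, Finset.card_univ,
        Fintype.card_fin]
      have : (c + 2) * rbAux c + 2 ≤ Fintype.card V := by simpa [rbAux] using hV
      omega
    obtain ⟨i, -, hi⟩ := Finset.exists_le_card_fiber_of_mul_le_card_of_maps_to hmaps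
      Finset.univ_nonempty hcount
    set W : Finset V := (Finset.univ.erase v).filter (fun x => f x = i) with hW
    have hWv : ∀ u ∈ W, u ≠ v := by
      intro u hu
      exact Finset.ne_of_mem_erase (Finset.mem_of_mem_filter u hu)
    have hWadj : ∀ u ∈ W, (G i).Adj v u := by
      intro u hu
      have huv : u ≠ v := hWv u hu
      have : f u = i := (Finset.mem_filter.mp hu).2
      rw [hf] at this
      simp only [dif_neg huv] at this
      rw [← this]
      exact hχ u huv
    by_cases hedge : ∃ u ∈ W, ∃ w ∈ W, (G i).Adj u w
    · obtain ⟨u, hu, w, hw, huw⟩ := hedge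
      refine ⟨i, {v, u, w}, SimpleGraph.is3Clique_triple_iff.2 ⟨hWadj u hu, hWadj w hw, huw⟩⟩
    · push_neg at hedge
      -- restrict to W with the remaining c+1 colours
      have hcardW : rbAux c ≤ Fintype.card {x // x ∈ W} := by
        rw [Fintype.card_coe]; exact hi
      set G' : Fin (c + 1) → SimpleGraph {x // x ∈ W} :=
        fun j => (G (i.succAbove j)).comap (Subtype.val) with hG'
      have hcov'' : ∀ a b : {x // x ∈ W}, a ≠ b → ∃ j, (G' j).Adj a b := by
        intro a b hab
        have hvals : (a : V) ≠ (b : V) := fun h => hab (Subtype.ext h)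
        obtain ⟨j, hj⟩ := hcov a b hvals
        have hji : j ≠ i := by
          intro h; rw [h] at hj; exact hedge a a.2 b b.2 hj
        obtain ⟨j', hj'⟩ := Fin.exists_succAbove_eq hji
        exact ⟨j', by rw [hG']; simpa [SimpleGraph.comap_adj, hj'] using hj⟩
      obtain ⟨j, s', hs'⟩ := ih {x // x ∈ W} hcardW G' hcov''
      refine ⟨i.succAbove j, s'.image Subtype.val, ?_, ?_⟩
      · intro x hx y hy hxy
        obtain ⟨a, ha, rfl⟩ := Finset.mem_image.mp hx
        obtain ⟨b, hb, rfl⟩ := Finset.mem_image.mp hy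
        have hab : a ≠ b := fun h => hxy (by rw [h])
        exact hs'.1 ha hb hab
      · rw [Finset.card_image_of_injective _ Subtype.val_injective]
        exact hs'.2


/-- Each triangle contributes 3 "cherries". -/
lemma three_mul_triangles_le (V : Type) [Fintype V] (G : SimpleGraph V) :
    3 * (G.cliqueFinset 3).card ≤ ∑ u : V, (G.degree u).choose 2 := by
  classical
  have h1 : 3 * (G.cliqueFinset 3).card = ∑ t ∈ G.cliqueFinset 3, t.card := by
    rw [Finset.sum_congr rfl (fun t ht => ((G.mem_cliqueFinset_iff).mp ht).2)]
    simp [Finset.sum_const, mul_comm]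
  have htu : ∀ t : Finset V, t.card = ∑ u : V, if u ∈ t then 1 else 0 := by
    intro t
    rw [← Finset.card_filter]
    congr 1
    ext x
    simp
  have h2 : ∑ t ∈ G.cliqueFinset 3, t.card
      = ∑ u : V, ((G.cliqueFinset 3).filter (fun t => u ∈ t)).card := by
    simp only [htu, Finset.card_filter]
    exact Finset.sum_comm
  have h3 : ∀ u : V, ((G.cliqueFinset 3).filter (fun t => u ∈ t)).card
      ≤ (G.degree u).choose 2 := by
    intro u
    have hpc : ((G.neighborFinset u).powersetCard 2).card = (G.degree u).choose 2 := by
      rw [Finset.card_powersetCard, SimpleGraph.card_neighborFinset_eq_degree]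
    rw [← hpc]
    apply Finset.card_le_card_of_injOn (fun t => t.erase u)
    · intro t ht
      have htc := Finset.mem_filter.mp ht
      have hcl := (G.mem_cliqueFinset_iff).mp htc.1
      rw [Finset.mem_coe, Finset.mem_powersetCard]
      constructor
      · intro x hx
        rw [SimpleGraph.mem_neighborFinset]
        exact hcl.1 htc.2 (Finset.mem_of_mem_erase hx)
          (Finset.ne_of_mem_erase hx).symm
      · rw [Finset.card_erase_of_mem htc.2, hcl.2]
    · intro a ha b hb hab
      have hau : u ∈ a := (Finset.mem_filter.mp ha).2
      have hbu : u ∈ b := (Finset.mem_filter.mp hb).2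
      have hab' : a.erase u = b.erase u := hab
      rw [← Finset.insert_erase hau, ← Finset.insert_erase hbu, hab']
  calc 3 * (G.cliqueFinset 3).card = _ := h1
    _ = _ := h2
    _ ≤ _ := Finset.sum_le_sum fun u _ => h3 u

lemma sum_choose_le (V : Type) [Fintype V] (G : SimpleGraph V) :
    ∑ u : V, (G.degree u).choose 2 ≤ (Fintype.card V) ^ 3 := by
  classical
  have h : ∀ u : V, (G.degree u).choose 2 ≤ (Fintype.card V) ^ 2 := by
    intro u
    have h1 : G.degree u ≤ Fintype.card V := by
      have hne : Nonempty V := ⟨u⟩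
      exact (G.degree_lt_card_verts u).le
    calc (G.degree u).choose 2 ≤ (G.degree u) * (G.degree u) := by
          rw [Nat.choose_two_right]
          exact le_trans (Nat.div_le_self _ _) (Nat.mul_le_mul_left _ (Nat.sub_le _ _))
      _ ≤ (Fintype.card V) ^ 2 := by rw [sq]; exact Nat.mul_le_mul h1 h1
  calc ∑ u : V, (G.degree u).choose 2 ≤ ∑ _u : V, (Fintype.card V) ^ 2 :=
        Finset.sum_le_sum fun u _ => h u
    _ = (Fintype.card V) ^ 3 := by
        rw [Finset.sum_const, Finset.card_univ, smul_eq_mul, ← pow_succ']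

lemma cube_le_choose (n : ℕ) (hn : 4 ≤ n) : n ^ 3 ≤ 24 * n.choose 3 := by
  obtain ⟨m, rfl⟩ : ∃ m, n = m + 4 := ⟨n - 4, by omega⟩
  have h : (m + 4).descFactorial 3 = (m + 2) * ((m + 3) * (m + 4)) := by
    simp [Nat.descFactorial]
  have h2 : (m + 4).descFactorial 3 = 6 * (m + 4).choose 3 :=
    Nat.descFactorial_eq_factorial_mul_choose _ _
  have h3 : 24 * (m + 4).choose 3 = 4 * ((m + 2) * ((m + 3) * (m + 4))) := by omega
  rw [h3]
  nlinarith [sq_nonneg m]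

lemma isNClique_image {V : Type} {A : Finset V} {G : SimpleGraph V} {n : ℕ}
    {s' : Finset {x // x ∈ A}} (h : (G.comap Subtype.val).IsNClique n s') :
    G.IsNClique n (s'.image Subtype.val) := by
  classical
  constructor
  · intro x hx y hy hxy
    obtain ⟨a, ha, rfl⟩ := Finset.mem_image.mp hx
    obtain ⟨b, hb, rfl⟩ := Finset.mem_image.mp hy
    exact h.1 ha hb (fun hh => hxy (by rw [hh]))
  · rw [Finset.card_image_of_injective _ Subtype.val_injective]
    exact h.2

lemma supersat (c : ℕ) (V : Type) [Fintype V] (hn : rbAux c ≤ Fintype.card V)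
    (G : Fin (c + 1) → SimpleGraph V) (hcov : ∀ u v : V, u ≠ v → ∃ i, (G i).Adj u v) :
    (Fintype.card V).choose 3 ≤
      (Finset.univ.filter (fun s : Finset V => ∃ i, (G i).IsNClique 3 s)).card
        * (rbAux c).choose 3 := by
  classical
  set n := Fintype.card V with hnn
  set N := rbAux c with hNN
  set S : Finset (Finset V) :=
    Finset.univ.filter (fun s : Finset V => ∃ i, (G i).IsNClique 3 s) with hS
  set P : Finset (Finset V) := Finset.univ.powersetCard N with hP
  have h3N : 3 ≤ N := three_le_rbAux c
  -- every N-subset contains a monochromatic triangle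
  have hstep1 : ∀ A ∈ P, 1 ≤ (S.filter (fun s => s ⊆ A)).card := by
    intro A hA
    rw [Finset.mem_powersetCard] at hA
    have hcardA : N ≤ Fintype.card {x // x ∈ A} := by
      rw [Fintype.card_coe, hA.2]
    obtain ⟨i, s', hs'⟩ := ramsey_triangle c {x // x ∈ A} hcardA
      (fun i => (G i).comap Subtype.val)
      (by
        intro a b hab
        obtain ⟨j, hj⟩ := hcov a b (fun h => hab (Subtype.ext h))
        exact ⟨j, hj⟩)
    rw [Nat.one_le_iff_ne_zero, ← Nat.pos_iff_ne_zero, Finset.card_pos]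
    refine ⟨s'.image Subtype.val, Finset.mem_filter.2 ⟨Finset.mem_filter.2
      ⟨Finset.mem_univ _, ⟨i, isNClique_image hs'⟩⟩, ?_⟩⟩
    intro x hx
    obtain ⟨a, _, rfl⟩ := Finset.mem_image.mp hx
    exact a.2
  -- double counting
  have hcount : n.choose N ≤ S.card * (n - 3).choose (N - 3) := by
    have h1 : n.choose N ≤ ∑ A ∈ P, (S.filter (fun s => s ⊆ A)).card := by
      have : n.choose N = ∑ A ∈ P, 1 := by
        rw [Finset.sum_const, smul_eq_mul, mul_one, hP, Finset.card_powersetCard,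
          Finset.card_univ]
      rw [this]
      exact Finset.sum_le_sum hstep1
    have h2 : ∑ A ∈ P, (S.filter (fun s => s ⊆ A)).card
        = ∑ s ∈ S, (P.filter (fun A => s ⊆ A)).card := by
      simp only [Finset.card_filter]
      exact Finset.sum_comm
    have h3 : ∀ s ∈ S, (P.filter (fun A => s ⊆ A)).card ≤ (n - 3).choose (N - 3) := by
      intro s hs
      obtain ⟨i, hi⟩ := (Finset.mem_filter.mp hs).2
      have hcs : s.card = 3 := hi.2
      have htarget : ((Finset.univ \ s).powersetCard (N - 3)).card
          = (n - 3).choose (N - 3) := by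
        rw [Finset.card_powersetCard, Finset.card_sdiff_of_subset (Finset.subset_univ s),
          Finset.card_univ, hcs]
      rw [← htarget]
      apply Finset.card_le_card_of_injOn (fun A => A \ s)
      · intro A hA
        have hAP := Finset.mem_filter.mp hA
        have hAc := Finset.mem_powersetCard.mp hAP.1
        rw [Finset.mem_coe, Finset.mem_powersetCard]
        exact ⟨Finset.sdiff_subset_sdiff (Finset.subset_univ A) le_rfl,
          by rw [Finset.card_sdiff_of_subset hAP.2, hAc.2, hcs]⟩
      · intro A hA B hB hAB
        have hsA : s ⊆ A := (Finset.mem_filter.mp hA).2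
        have hsB : s ⊆ B := (Finset.mem_filter.mp hB).2
        have hAB' : A \ s = B \ s := hAB
        rw [← Finset.sdiff_union_of_subset hsA, ← Finset.sdiff_union_of_subset hsB, hAB']
    calc n.choose N ≤ _ := h1
      _ = _ := h2
      _ ≤ ∑ _s ∈ S, (n - 3).choose (N - 3) := Finset.sum_le_sum h3
      _ = S.card * (n - 3).choose (N - 3) := by rw [Finset.sum_const, smul_eq_mul]
  -- convert using the subset-chain identity
  have hid : n.choose N * N.choose 3 = n.choose 3 * (n - 3).choose (N - 3) :=
    Nat.choose_mul h3N
  have hpos : 0 < (n - 3).choose (N - 3) :=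
    Nat.choose_pos (by omega)
  have hmain : n.choose 3 * (n - 3).choose (N - 3)
      ≤ S.card * N.choose 3 * (n - 3).choose (N - 3) := by
    calc n.choose 3 * (n - 3).choose (N - 3) = n.choose N * N.choose 3 := hid.symm
      _ ≤ (S.card * (n - 3).choose (N - 3)) * N.choose 3 :=
          Nat.mul_le_mul_right _ hcount
      _ = S.card * N.choose 3 * (n - 3).choose (N - 3) := by ring
  exact Nat.le_of_mul_le_mul_right hmain hpos


/-- Ramsey multiplicity: for every `c ≥ 3` there exist `n₀` and `α_c > 0` such that for all
`n > n₀`, in every `c`-colouring `E(K_n) = G₁ ⊔ ... ⊔ G_c` there is a colour class `G_i` with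
`T(G_i) ≥ α_c·Σ_u C(d_{G_i}(u),2)` and `Σ_u C(d_{G_i}(u),2) ≥ α_c·n³`. -/
theorem stmt_7 (c : ℕ) (hc : 3 ≤ c) :
    ∃ (n₀ : ℕ) (α : ℝ), 0 < α ∧ ∀ n : ℕ, n₀ < n → ∀ (V : Type) [Fintype V],
      Fintype.card V = n → ∀ G : Fin c → SimpleGraph V,
        (∀ u v : V, u ≠ v → ∃! i : Fin c, (G i).Adj u v) →
          ∃ i : Fin c,
            α * ∑ u : V, (((G i).degree u).choose 2 : ℝ) ≤ (((G i).cliqueFinset 3).card : ℝ) ∧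
            α * (n : ℝ) ^ 3 ≤ ∑ u : V, (((G i).degree u).choose 2 : ℝ) := by
  classical
  obtain ⟨c', rfl⟩ : ∃ c', c = c' + 1 := ⟨c - 1, by omega⟩
  set N := rbAux c' with hN
  have h3N : 3 ≤ N := three_le_rbAux c'
  set K : ℕ := 24 * (c' + 1) * N.choose 3 with hK
  have hKpos : 0 < K := by
    have := Nat.choose_pos h3N
    positivity
  refine ⟨N + 4, 1 / (K : ℝ), by positivity, ?_⟩
  intro n hn V _ hcard G hcov
  have hcov' : ∀ u v : V, u ≠ v → ∃ i, (G i).Adj u v := by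
    intro u v huv
    obtain ⟨i, hi, -⟩ := hcov u v huv
    exact ⟨i, hi⟩
  have hNV : N ≤ Fintype.card V := by omega
  set S : Finset (Finset V) :=
    Finset.univ.filter (fun s : Finset V => ∃ i, (G i).IsNClique 3 s) with hS
  have hsat : n.choose 3 ≤ S.card * N.choose 3 := by
    have := supersat c' V hNV G hcov'
    rwa [hcard] at this
  -- S is covered by the colour classes
  have hScover : S.card ≤ ∑ i : Fin (c' + 1), ((G i).cliqueFinset 3).card := by
    calc S.card ≤ (Finset.univ.biUnion (fun i : Fin (c' + 1) => (G i).cliqueFinset 3)).card := by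
          apply Finset.card_le_card
          intro s hs
          obtain ⟨i, hi⟩ := (Finset.mem_filter.mp hs).2
          exact Finset.mem_biUnion.2 ⟨i, Finset.mem_univ _,
            SimpleGraph.mem_cliqueFinset_iff.2 hi⟩
      _ ≤ _ := Finset.card_biUnion_le
  -- pick the colour with the most triangles
  obtain ⟨i, -, hmax⟩ := Finset.exists_max_image Finset.univ
    (fun i : Fin (c' + 1) => ((G i).cliqueFinset 3).card) Finset.univ_nonempty
  set T : ℕ := ((G i).cliqueFinset 3).card with hT
  have hsum_le : ∑ j : Fin (c' + 1), ((G j).cliqueFinset 3).card ≤ (c' + 1) * T := by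
    calc ∑ j : Fin (c' + 1), ((G j).cliqueFinset 3).card ≤ ∑ _j : Fin (c' + 1), T :=
          Finset.sum_le_sum (fun j _ => hmax j (Finset.mem_univ j))
      _ = (c' + 1) * T := by simp [Finset.sum_const, mul_comm]
  have hST : S.card ≤ (c' + 1) * T := le_trans hScover hsum_le
  -- key numeric bound: n ^ 3 ≤ K * T
  have hKT : n ^ 3 ≤ K * T := by
    have h1 : n ^ 3 ≤ 24 * n.choose 3 := cube_le_choose n (by omega)
    have h2 : n.choose 3 ≤ (c' + 1) * T * N.choose 3 :=
      le_trans hsat (Nat.mul_le_mul_right _ hST)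
    calc n ^ 3 ≤ 24 * n.choose 3 := h1
      _ ≤ 24 * ((c' + 1) * T * N.choose 3) := Nat.mul_le_mul_left _ h2
      _ = K * T := by rw [hK]; ring
  set Ch : ℕ := ∑ u : V, ((G i).degree u).choose 2 with hCh
  have hTCh : 3 * T ≤ Ch := three_mul_triangles_le V (G i)
  have hChn : Ch ≤ n ^ 3 := by
    have := sum_choose_le V (G i)
    rwa [hcard] at this
  refine ⟨i, ?_, ?_⟩
  · -- α · Ch ≤ T
    have hcast : ∑ u : V, (((G i).degree u).choose 2 : ℝ) = (Ch : ℝ) := by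
      rw [hCh]; push_cast; ring
    rw [hcast, one_div, inv_mul_le_iff₀ (by exact_mod_cast hKpos)]
    have : Ch ≤ K * T := le_trans hChn hKT
    exact_mod_cast this
  · -- α · n³ ≤ Ch
    have hcast : ∑ u : V, (((G i).degree u).choose 2 : ℝ) = (Ch : ℝ) := by
      rw [hCh]; push_cast; ring
    rw [hcast, one_div, inv_mul_le_iff₀ (by exact_mod_cast hKpos)]
    have hfin : n ^ 3 ≤ K * Ch := by
      calc n ^ 3 ≤ K * T := hKT
        _ ≤ K * Ch := Nat.mul_le_mul_left _ (by omega)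
    exact_mod_cast hfin
end

section
/- Let 𝒢 be a linear r-graph and B = B(𝒢) its bowtie graph. Then every vertex of B has even degree, and the maximum degree of B is at most 2(r-1)². -/
open scoped Classical

/-- A hypergraph (finite set of hyperedges) is linear if any two distinct
hyperedges share at most one vertex. -/
def Linear {V : Type*} [DecidableEq V] (𝒢 : Finset (Finset V)) : Prop :=
  ∀ S ∈ 𝒢, ∀ T ∈ 𝒢, S ≠ T → (S ∩ T).card ≤ 1

/-- A hypergraph is `r`-uniform if every hyperedge has exactly `r` vertices. -/
def Uniform {V : Type*} (r : ℕ) (𝒢 : Finset (Finset V)) : Prop :=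
  ∀ S ∈ 𝒢, S.card = r

/-- A bowtie of `𝒢` is an unordered pair `{S, T}` of distinct hyperedges of `𝒢`
intersecting in exactly one vertex. -/
def IsBowtie {V : Type*} [DecidableEq V] (𝒢 : Finset (Finset V))
    (b : Finset (Finset V)) : Prop :=
  ∃ S T : Finset V, S ∈ 𝒢 ∧ T ∈ 𝒢 ∧ S ≠ T ∧ (S ∩ T).card = 1 ∧ b = {S, T}

/-- The bowtie graph `B(𝒢)`: vertices are the bowties of `𝒢`; bowties
`b₁ = {S₁, T}` and `b₂ = {S₂, T}` are adjacent iff `|S₁ ∩ S₂| = 1` and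
`S₁ ∩ S₂ ∩ T = ∅`. -/
def bowtieGraph {V : Type*} [DecidableEq V] (𝒢 : Finset (Finset V)) :
    SimpleGraph {b : Finset (Finset V) // IsBowtie 𝒢 b} where
  Adj b₁ b₂ := b₁ ≠ b₂ ∧ ∃ S₁ S₂ T : Finset V,
      (b₁ : Finset (Finset V)) = {S₁, T} ∧ (b₂ : Finset (Finset V)) = {S₂, T} ∧
      (S₁ ∩ S₂).card = 1 ∧ S₁ ∩ S₂ ∩ T = ∅
  symm := by
    constructor
    rintro b₁ b₂ ⟨hne, S₁, S₂, T, h₁, h₂, hc, he⟩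
    exact ⟨hne.symm, S₂, S₁, T, h₂, h₁, by rwa [Finset.inter_comm],
      by rwa [Finset.inter_comm S₂ S₁]⟩
  loopless := by constructor; rintro b ⟨hne, -⟩; exact hne rfl

/-- If two unordered pairs (as finsets) are equal, the elements match up one
of the two possible ways. -/
lemma pair_eq_cases {α : Type*} [DecidableEq α] {a b c d : α}
    (h : ({a, b} : Finset α) = {c, d}) : (a = c ∧ b = d) ∨ (a = d ∧ b = c) := by
  have ha : a ∈ ({c, d} : Finset α) := h ▸ Finset.mem_insert_self a {b}
  have hb : b ∈ ({c, d} : Finset α) :=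
    h ▸ Finset.mem_insert_of_mem (Finset.mem_singleton_self b)
  have hc : c ∈ ({a, b} : Finset α) := h ▸ Finset.mem_insert_self c {d}
  have hd : d ∈ ({a, b} : Finset α) :=
    h ▸ Finset.mem_insert_of_mem (Finset.mem_singleton_self d)
  simp only [Finset.mem_insert, Finset.mem_singleton] at ha hb hc hd
  rcases ha with h1 | h1 <;> rcases hb with h2 | h2 <;> subst_vars <;> tauto

/-- Rearranged triple intersections that are empty stay empty. -/
lemma inter3_empty_swap13 {α : Type*} [DecidableEq α] {a b c : Finset α}
    (h : a ∩ b ∩ c = ∅) : c ∩ b ∩ a = ∅ := by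
  rw [Finset.eq_empty_iff_forall_notMem] at h ⊢
  intro x hx
  simp only [Finset.mem_inter] at hx
  exact h x (by simp only [Finset.mem_inter]; tauto)

lemma inter3_empty_swap12 {α : Type*} [DecidableEq α] {a b c : Finset α}
    (h : a ∩ b ∩ c = ∅) : b ∩ a ∩ c = ∅ := by
  rw [Finset.eq_empty_iff_forall_notMem] at h ⊢
  intro x hx
  simp only [Finset.mem_inter] at hx
  exact h x (by simp only [Finset.mem_inter]; tauto)

lemma inter3_empty_swap23 {α : Type*} [DecidableEq α] {a b c : Finset α}
    (h : a ∩ b ∩ c = ∅) : a ∩ c ∩ b = ∅ := by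
  rw [Finset.eq_empty_iff_forall_notMem] at h ⊢
  intro x hx
  simp only [Finset.mem_inter] at hx
  exact h x (by simp only [Finset.mem_inter]; tauto)

/-- In the bowtie graph of a linear `r`-graph, every degree is even and the
maximum degree is at most `2(r-1)²`. -/
theorem stmt_8 {V : Type*} [Fintype V] [DecidableEq V] (r : ℕ) (hr : 3 ≤ r)
    (𝒢 : Finset (Finset V)) (hlin : Linear 𝒢) (hunif : Uniform r 𝒢)
    (b : {b : Finset (Finset V) // IsBowtie 𝒢 b}) :
    Even ((bowtieGraph 𝒢).degree b) ∧ (bowtieGraph 𝒢).degree b ≤ 2 * (r - 1) ^ 2 := by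
  classical
  obtain ⟨S, T, hS𝒢, hT𝒢, hST, hSTcard, hb⟩ := b.2
  obtain ⟨u, hu⟩ := Finset.card_eq_one.mp hSTcard
  have huS : u ∈ S := Finset.mem_of_mem_inter_left (α := V)
    (hu ▸ Finset.mem_singleton_self u)
  have huT : u ∈ T := Finset.mem_of_mem_inter_right (α := V)
    (hu ▸ Finset.mem_singleton_self u)
  have hSr : S.card = r := hunif S hS𝒢
  have hTr : T.card = r := hunif T hT𝒢
  set N : Finset (Finset V) := 𝒢.filter
    (fun A => (A ∩ S).card = 1 ∧ (A ∩ T).card = 1 ∧ A ∩ S ∩ T = ∅) with hN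
  have hNmem : ∀ A ∈ N, A ∈ 𝒢 ∧ (A ∩ S).card = 1 ∧ (A ∩ T).card = 1 ∧
      A ∩ S ∩ T = ∅ := by
    intro A hA
    rw [hN, Finset.mem_filter] at hA
    exact ⟨hA.1, hA.2.1, hA.2.2.1, hA.2.2.2⟩
  have hANe : ∀ A ∈ N, A ≠ S ∧ A ≠ T := by
    intro A hA
    obtain ⟨-, h1, h2, -⟩ := hNmem A hA
    constructor
    · rintro rfl
      rw [Finset.inter_self, hSr] at h1
      omega
    · rintro rfl
      rw [Finset.inter_self, hTr] at h2
      omega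
  -- bowtie proofs for the two kinds of neighbors
  have hbow1 : ∀ A ∈ N, IsBowtie 𝒢 {A, T} := fun A hA =>
    ⟨A, T, (hNmem A hA).1, hT𝒢, (hANe A hA).2, (hNmem A hA).2.2.1, rfl⟩
  have hbow2 : ∀ A ∈ N, IsBowtie 𝒢 {A, S} := fun A hA =>
    ⟨A, S, (hNmem A hA).1, hS𝒢, (hANe A hA).1, (hNmem A hA).2.1, rfl⟩
  -- adjacency for the two kinds of neighbors
  have hadj1 : ∀ A, ∀ hA : A ∈ N, (bowtieGraph 𝒢).Adj b ⟨{A, T}, hbow1 A hA⟩ := by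
    intro A hA
    obtain ⟨hA𝒢, h1, h2, h3⟩ := hNmem A hA
    refine ⟨?_, S, A, T, hb, rfl, by rwa [Finset.inter_comm], ?_⟩
    · intro hEq
      have hpair : ({S, T} : Finset (Finset V)) = {A, T} := by
        rw [← hb]; exact congrArg Subtype.val hEq
      rcases pair_eq_cases hpair with ⟨h, -⟩ | ⟨h, -⟩
      · exact (hANe A hA).1 h.symm
      · exact hST h
    · rw [Finset.inter_comm S A]; exact h3
  have hadj2 : ∀ A, ∀ hA : A ∈ N, (bowtieGraph 𝒢).Adj b ⟨{A, S}, hbow2 A hA⟩ := by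
    intro A hA
    obtain ⟨hA𝒢, h1, h2, h3⟩ := hNmem A hA
    refine ⟨?_, T, A, S, by rw [hb, Finset.pair_comm], rfl,
      by rwa [Finset.inter_comm T A], ?_⟩
    · intro hEq
      have hpair : ({S, T} : Finset (Finset V)) = {A, S} := by
        rw [← hb]; exact congrArg Subtype.val hEq
      rcases pair_eq_cases hpair with ⟨-, h⟩ | ⟨-, h⟩
      · exact hST h.symm
      · exact (hANe A hA).2 h.symm
    · rw [Finset.eq_empty_iff_forall_notMem]
      intro x hx
      simp only [Finset.mem_inter] at hx
      have : x ∈ A ∩ S ∩ T := by simp only [Finset.mem_inter]; tauto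
      rw [h3] at this
      exact Finset.notMem_empty x this
  -- the key structural fact used for surjectivity
  have key : ∀ X Y : Finset V, X ∩ Y = {u} →
      ∀ (b' : {b : Finset (Finset V) // IsBowtie 𝒢 b}) (S₂ : Finset V),
      (b' : Finset (Finset V)) = {S₂, Y} → (X ∩ S₂).card = 1 → X ∩ S₂ ∩ Y = ∅ →
      S₂ ∈ 𝒢 ∧ (S₂ ∩ X).card = 1 ∧ (S₂ ∩ Y).card = 1 ∧ S₂ ∩ X ∩ Y = ∅ := by
    intro X Y hXY b' S₂ hb' hcXS hempty
    have hS₂Y : S₂ ≠ Y := by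
      rintro rfl
      rw [Finset.inter_assoc, Finset.inter_self, hXY] at hempty
      exact Finset.singleton_ne_empty u hempty
    obtain ⟨S', T'', hS'𝒢, hT''𝒢, hne', hc', he'⟩ := b'.2
    have hpp : ({S', T''} : Finset (Finset V)) = {S₂, Y} := by rw [← he', hb']
    have hemp' : S₂ ∩ X ∩ Y = ∅ := inter3_empty_swap12 hempty
    rcases pair_eq_cases hpp with ⟨e1, e2⟩ | ⟨e1, e2⟩
    · subst e1; subst e2
      exact ⟨hS'𝒢, by rwa [Finset.inter_comm], hc', hemp'⟩
    · subst e1; subst e2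
      exact ⟨hT''𝒢, by rwa [Finset.inter_comm], by rwa [Finset.inter_comm], hemp'⟩
  -- identify the image of the neighborhood
  have himg : ((bowtieGraph 𝒢).neighborFinset b).image Subtype.val
      = N.image (fun A => ({A, T} : Finset (Finset V)))
        ∪ N.image (fun A => ({A, S} : Finset (Finset V))) := by
    ext x
    simp only [Finset.mem_image, Finset.mem_union, SimpleGraph.mem_neighborFinset]
    constructor
    · rintro ⟨b', hb', rfl⟩
      obtain ⟨hne, S₁, S₂, T', h1, h2, hc, hemp⟩ := hb'
      have hpair : ({S, T} : Finset (Finset V)) = {S₁, T'} := by rw [← hb, h1]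
      rcases pair_eq_cases hpair with ⟨rfl, rfl⟩ | ⟨rfl, rfl⟩
      · obtain ⟨g1, g2, g3, g4⟩ := key S T hu b' S₂ h2 hc hemp
        refine Or.inl ⟨S₂, ?_, h2.symm⟩
        rw [hN, Finset.mem_filter]
        exact ⟨g1, g2, g3, g4⟩
      · obtain ⟨g1, g2, g3, g4⟩ :=
          key T S (by rw [Finset.inter_comm]; exact hu) b' S₂ h2 hc hemp
        refine Or.inr ⟨S₂, ?_, h2.symm⟩
        rw [hN, Finset.mem_filter]
        exact ⟨g1, g3, g2, inter3_empty_swap23 g4⟩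
    · rintro (⟨A, hA, rfl⟩ | ⟨A, hA, rfl⟩)
      · exact ⟨⟨{A, T}, hbow1 A hA⟩, hadj1 A hA, rfl⟩
      · exact ⟨⟨{A, S}, hbow2 A hA⟩, hadj2 A hA, rfl⟩
  -- injectivity of the two maps and disjointness of their images
  have hinj1 : Set.InjOn (fun A => ({A, T} : Finset (Finset V))) N := by
    intro A hA A' hA' h
    rcases pair_eq_cases h with ⟨h1, -⟩ | ⟨h1, h2⟩
    · exact h1
    · exact absurd h1 (hANe A hA).2
  have hinj2 : Set.InjOn (fun A => ({A, S} : Finset (Finset V))) N := by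
    intro A hA A' hA' h
    rcases pair_eq_cases h with ⟨h1, -⟩ | ⟨h1, h2⟩
    · exact h1
    · exact absurd h1 (hANe A hA).1
  have hdisj : Disjoint (N.image (fun A => ({A, T} : Finset (Finset V))))
      (N.image (fun A => ({A, S} : Finset (Finset V)))) := by
    rw [Finset.disjoint_left]
    intro x hx1 hx2
    obtain ⟨A, hA, rfl⟩ := Finset.mem_image.mp hx1
    obtain ⟨A', hA', hx⟩ := Finset.mem_image.mp hx2
    rcases pair_eq_cases hx.symm with ⟨-, h2⟩ | ⟨h1, h2⟩
    · exact hST h2.symm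
    · exact (hANe A' hA').2 h2.symm
  -- the degree equals 2 |N|
  have hdeg : (bowtieGraph 𝒢).degree b = 2 * N.card := by
    have h0 : (bowtieGraph 𝒢).degree b
        = (((bowtieGraph 𝒢).neighborFinset b).image Subtype.val).card := by
      rw [Finset.card_image_of_injective _ Subtype.val_injective]
      rfl
    rw [h0, himg, Finset.card_union_of_disjoint hdisj,
      Finset.card_image_of_injOn hinj1, Finset.card_image_of_injOn hinj2]
    omega
  -- |N| ≤ (r-1)²
  have hpt : ∀ A ∈ N, ∀ W : Finset V, u ∈ W → (A ∩ W).card = 1 → A ∩ S ∩ T = ∅ →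
      ∃ x, A ∩ W = {x} ∧ x ∈ W ∧ x ≠ u := by
    intro A hA W huW h1 hAd
    obtain ⟨x, hx⟩ := Finset.card_eq_one.mp h1
    refine ⟨x, hx, ?_, ?_⟩
    · have : x ∈ A ∩ W := hx ▸ Finset.mem_singleton_self x
      exact (Finset.mem_inter.mp this).2
    · rintro rfl
      have hxA : x ∈ A := (Finset.mem_inter.mp (hx ▸ Finset.mem_singleton_self x)).1
      have : x ∈ A ∩ S ∩ T := by
        simp only [Finset.mem_inter]
        exact ⟨⟨hxA, huS⟩, huT⟩
      rw [hAd] at this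
      exact absurd this (Finset.notMem_empty x)
  have hNle : N.card ≤ (r - 1) ^ 2 := by
    have hmaps : ∀ A ∈ N, (A ∩ S, A ∩ T) ∈
        ((S.erase u).image (fun x => ({x} : Finset V))) ×ˢ
        ((T.erase u).image (fun x => ({x} : Finset V))) := by
      intro A hA
      obtain ⟨-, h1, h2, h3⟩ := hNmem A hA
      obtain ⟨x, hxeq, hxS, hxu⟩ := hpt A hA S huS h1 h3
      obtain ⟨y, hyeq, hyT, hyu⟩ := hpt A hA T huT h2 h3
      rw [Finset.mem_product]
      constructor
      · exact Finset.mem_image.mpr ⟨x, Finset.mem_erase.mpr ⟨hxu, hxS⟩, hxeq.symm⟩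
      · exact Finset.mem_image.mpr ⟨y, Finset.mem_erase.mpr ⟨hyu, hyT⟩, hyeq.symm⟩
    have hinj : Set.InjOn (fun A => (A ∩ S, A ∩ T)) N := by
      intro A hA A' hA' h
      simp only [Prod.mk.injEq] at h
      obtain ⟨hS', hT'⟩ := h
      by_contra hne
      obtain ⟨-, h1, h2, h3⟩ := hNmem A hA
      obtain ⟨x, hxeq, hxS, hxu⟩ := hpt A hA S huS h1 h3
      obtain ⟨y, hyeq, hyT, hyu⟩ := hpt A hA T huT h2 h3
      have hxA : x ∈ A := (Finset.mem_inter.mp (hxeq ▸ Finset.mem_singleton_self x)).1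
      have hyA : y ∈ A := (Finset.mem_inter.mp (hyeq ▸ Finset.mem_singleton_self y)).1
      have hxA' : x ∈ A' := by
        have : x ∈ A' ∩ S := by rw [← hS', hxeq]; exact Finset.mem_singleton_self x
        exact (Finset.mem_inter.mp this).1
      have hyA' : y ∈ A' := by
        have : y ∈ A' ∩ T := by rw [← hT', hyeq]; exact Finset.mem_singleton_self y
        exact (Finset.mem_inter.mp this).1
      have hxy : x ≠ y := by
        rintro rfl
        have : x ∈ S ∩ T := Finset.mem_inter.mpr ⟨hxS, hyT⟩
        rw [hu] at this
        exact hxu (Finset.mem_singleton.mp this)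
      have hsub : ({x, y} : Finset V) ⊆ A ∩ A' := by
        intro z hz
        rcases Finset.mem_insert.mp hz with rfl | hz
        · exact Finset.mem_inter.mpr ⟨hxA, hxA'⟩
        · rw [Finset.mem_singleton] at hz
          subst hz
          exact Finset.mem_inter.mpr ⟨hyA, hyA'⟩
      have h2le : 2 ≤ (A ∩ A').card := by
        have := Finset.card_le_card hsub
        rwa [Finset.card_pair hxy] at this
      have := hlin A (hNmem A hA).1 A' (hNmem A' hA').1 hne
      omega
    calc N.card ≤ (((S.erase u).image (fun x => ({x} : Finset V))) ×ˢ
        ((T.erase u).image (fun x => ({x} : Finset V)))).card :=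
          Finset.card_le_card_of_injOn _ hmaps hinj
      _ = (r - 1) ^ 2 := by
          rw [Finset.card_product,
            Finset.card_image_of_injective _ Finset.singleton_injective,
            Finset.card_image_of_injective _ Finset.singleton_injective,
            Finset.card_erase_of_mem huS, Finset.card_erase_of_mem huT, hSr, hTr]
          ring
  refine ⟨?_, ?_⟩
  · rw [hdeg]; exact ⟨N.card, by omega⟩
  · rw [hdeg]; omega
end

section
/- Let 𝒢 be a linear r-graph with underlying graph G and bowtie graph B. For every vertex u, Σ_{b ∈ B_u} d_B(b) = 2·(t_u - C(r-1,2)·d_𝒢(u)), where t_u is the number of triangles of G containing u and B_u is the set of bowties with centre u. -/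
open scoped Classical

/-- The underlying graph of a hypergraph: `x ~ y` iff `x ≠ y` and some hyperedge
contains both `x` and `y`. -/
def underlyingGraph {V : Type*} (𝒢 : Finset (Finset V)) : SimpleGraph V where
  Adj x y := x ≠ y ∧ ∃ e ∈ 𝒢, x ∈ e ∧ y ∈ e
  symm := by constructor; rintro x y ⟨h, e, he, hx, hy⟩; exact ⟨h.symm, e, he, hy, hx⟩
  loopless := by constructor; rintro x ⟨h, -⟩; exact h rfl

section Aux

variable {V : Type*} [DecidableEq V] {𝒢 : Finset (Finset V)}

/-- two distinct vertices lie in at most one hyperedge of a linear hypergraph. -/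
lemma unique_edge (hlin : Linear 𝒢) {e₁ e₂ : Finset V} (h₁ : e₁ ∈ 𝒢) (h₂ : e₂ ∈ 𝒢)
    {x y : V} (hxy : x ≠ y) (hx1 : x ∈ e₁) (hy1 : y ∈ e₁) (hx2 : x ∈ e₂) (hy2 : y ∈ e₂) :
    e₁ = e₂ := by
  by_contra hne
  have hle := hlin e₁ h₁ e₂ h₂ hne
  have hsub : ({x, y} : Finset V) ⊆ e₁ ∩ e₂ := by
    intro z hz
    simp only [Finset.mem_insert, Finset.mem_singleton] at hz
    rcases hz with rfl | rfl <;> simp [Finset.mem_inter, *]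
  have hc : ({x, y} : Finset V).card = 2 := Finset.card_pair hxy
  have := Finset.card_le_card hsub
  omega

lemma pair_eq_pair {α : Type*} [DecidableEq α] {a b c d : α} (h : ({a,b} : Finset α) = {c,d})
    (hab : a ≠ b) : (a = c ∧ b = d) ∨ (a = d ∧ b = c) := by
  have ha : a ∈ ({c,d} : Finset α) := h ▸ (by simp)
  have hb : b ∈ ({c,d} : Finset α) := h ▸ (by simp)
  simp only [Finset.mem_insert, Finset.mem_singleton] at ha hb
  rcases ha with rfl | rfl
  · rcases hb with rfl | rfl
    · exact absurd rfl hab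
    · exact Or.inl ⟨rfl, rfl⟩
  · rcases hb with rfl | rfl
    · exact Or.inr ⟨rfl, rfl⟩
    · exact absurd rfl hab

/-- The triangle associated to an adjacent pair of bowties `(b, b')` with `b`
centred at `u`. -/
def triOf (u : V) (b b' : Finset (Finset V)) : Finset V :=
  insert u (((b \ b').sup id ∩ (b' \ b).sup id) ∪ ((b' \ b).sup id ∩ (b ∩ b').sup id))

lemma pair_sdiff {S T S₂ : Finset V} (h1 : S ≠ S₂) (h2 : S ≠ T) :
    (({S,T} : Finset (Finset V)) \ {S₂,T}) = {S} := by
  ext e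
  simp only [Finset.mem_sdiff, Finset.mem_insert, Finset.mem_singleton]
  constructor
  · rintro ⟨rfl | rfl, h⟩
    · rfl
    · exact absurd (Or.inr rfl) h
  · rintro rfl
    exact ⟨Or.inl rfl, by rintro (rfl | rfl) <;> simp_all⟩

lemma pair_inter {S T S₂ : Finset V} (h1 : S ≠ S₂) (h2 : S ≠ T) (h3 : S₂ ≠ T) :
    (({S,T} : Finset (Finset V)) ∩ {S₂,T}) = {T} := by
  ext e
  simp only [Finset.mem_inter, Finset.mem_insert, Finset.mem_singleton]
  constructor
  · rintro ⟨rfl | rfl, rfl | h⟩ <;> simp_all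
  · rintro rfl; exact ⟨Or.inr rfl, Or.inr rfl⟩

/-- the full decomposition of an adjacent pair (b, b') with b centred at u. -/
lemma pair_props {r : ℕ} (hr : 3 ≤ r) (hunif : Uniform r 𝒢) {u : V}
    {b b' : Finset (Finset V)} (hb : IsBowtie 𝒢 b) (hb' : IsBowtie 𝒢 b')
    (hcen : ∃ S T : Finset V, b = {S, T} ∧ S ∩ T = {u})
    (hadj : ∃ S₁ S₂ T : Finset V,
      b = {S₁, T} ∧ b' = {S₂, T} ∧ (S₁ ∩ S₂).card = 1 ∧ S₁ ∩ S₂ ∩ T = ∅) :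
    ∃ S S₂ T : Finset V, ∃ x y : V,
      S ∈ 𝒢 ∧ S₂ ∈ 𝒢 ∧ T ∈ 𝒢 ∧
      b = {S, T} ∧ b' = {S₂, T} ∧
      S ∩ T = {u} ∧ S ∩ S₂ = {x} ∧ S₂ ∩ T = {y} ∧
      u ≠ x ∧ u ≠ y ∧ x ≠ y ∧ x ∉ T ∧ y ∉ S ∧ u ∉ S₂ ∧
      S ≠ T ∧ S ≠ S₂ ∧ S₂ ≠ T ∧
      triOf u b b' = {u, x, y} := by
  obtain ⟨S₁, S₂, T₀, hb1, hb2, hcard, hdisj⟩ := hadj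
  obtain ⟨A, B, hA, hB, hAB, hABcard, hbAB⟩ := hb
  obtain ⟨A', B', hA', hB', hA'B', hA'B'card, hb'AB⟩ := hb'
  have hS₁T₀ : S₁ ≠ T₀ := by
    rintro rfl
    have h1 : A ∈ ({S₁, S₁} : Finset (Finset V)) := by rw [← hb1, hbAB]; simp
    have h2 : B ∈ ({S₁, S₁} : Finset (Finset V)) := by rw [← hb1, hbAB]; simp
    simp only [Finset.mem_insert, Finset.mem_singleton, or_self] at h1 h2
    exact hAB (h1.trans h2.symm)
  have hpair1 := pair_eq_pair (hbAB.symm.trans hb1) hAB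
  have hS₁ : S₁ ∈ 𝒢 := by rcases hpair1 with ⟨h1, h2⟩ | ⟨h1, h2⟩ <;> simp_all
  have hT₀ : T₀ ∈ 𝒢 := by rcases hpair1 with ⟨h1, h2⟩ | ⟨h1, h2⟩ <;> simp_all
  have hS₂T₀ : S₂ ≠ T₀ := by
    rintro rfl
    have h1 : A' ∈ ({S₂, S₂} : Finset (Finset V)) := by rw [← hb2, hb'AB]; simp
    have h2 : B' ∈ ({S₂, S₂} : Finset (Finset V)) := by rw [← hb2, hb'AB]; simp
    simp only [Finset.mem_insert, Finset.mem_singleton, or_self] at h1 h2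
    exact hA'B' (h1.trans h2.symm)
  have hpair2 := pair_eq_pair (hb'AB.symm.trans hb2) hA'B'
  have hS₂ : S₂ ∈ 𝒢 := by rcases hpair2 with ⟨h1, h2⟩ | ⟨h1, h2⟩ <;> simp_all
  have hS₂T₀card : (S₂ ∩ T₀).card = 1 := by
    rcases hpair2 with ⟨h1, h2⟩ | ⟨h1, h2⟩
    · rw [← h1, ← h2]; exact hA'B'card
    · rw [← h1, ← h2, Finset.inter_comm]; exact hA'B'card
  obtain ⟨C, D, hbCD, hCDu⟩ := hcen
  have hCD : C ≠ D := by
    rintro rfl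
    have h1 : A ∈ ({C, C} : Finset (Finset V)) := by rw [← hbCD, hbAB]; simp
    have h2 : B ∈ ({C, C} : Finset (Finset V)) := by rw [← hbCD, hbAB]; simp
    simp only [Finset.mem_insert, Finset.mem_singleton, or_self] at h1 h2
    exact hAB (h1.trans h2.symm)
  have hpair3 := pair_eq_pair (hbCD.symm.trans hb1) hCD
  have hS₁T₀u : S₁ ∩ T₀ = {u} := by
    rcases hpair3 with ⟨h1, h2⟩ | ⟨h1, h2⟩
    · rw [← h1, ← h2]; exact hCDu
    · rw [← h1, ← h2, Finset.inter_comm]; exact hCDu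
  have huS₁ : u ∈ S₁ := by
    have : u ∈ S₁ ∩ T₀ := hS₁T₀u ▸ Finset.mem_singleton_self u
    exact (Finset.mem_inter.1 this).1
  have huT₀ : u ∈ T₀ := by
    have : u ∈ S₁ ∩ T₀ := hS₁T₀u ▸ Finset.mem_singleton_self u
    exact (Finset.mem_inter.1 this).2
  obtain ⟨x, hx⟩ := Finset.card_eq_one.1 hcard
  have hxS₁ : x ∈ S₁ := by
    have : x ∈ S₁ ∩ S₂ := hx ▸ Finset.mem_singleton_self x
    exact (Finset.mem_inter.1 this).1
  have hxS₂ : x ∈ S₂ := by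
    have : x ∈ S₁ ∩ S₂ := hx ▸ Finset.mem_singleton_self x
    exact (Finset.mem_inter.1 this).2
  have hS₁S₂ : S₁ ≠ S₂ := by
    rintro rfl
    rw [Finset.inter_self] at hcard
    have := hunif S₁ hS₁
    omega
  have hxT₀ : x ∉ T₀ := by
    intro hxT
    have : x ∈ S₁ ∩ S₂ ∩ T₀ := by simp [Finset.mem_inter, *]
    rw [hdisj] at this
    exact absurd this (Finset.notMem_empty x)
  have hux : u ≠ x := fun h => hxT₀ (h ▸ huT₀)
  have huS₂ : u ∉ S₂ := by
    intro h
    have : u ∈ S₁ ∩ S₂ := Finset.mem_inter.2 ⟨huS₁, h⟩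
    rw [hx] at this
    exact hux (Finset.mem_singleton.1 this)
  obtain ⟨y, hy⟩ := Finset.card_eq_one.1 hS₂T₀card
  have hyS₂ : y ∈ S₂ := by
    have : y ∈ S₂ ∩ T₀ := hy ▸ Finset.mem_singleton_self y
    exact (Finset.mem_inter.1 this).1
  have hyT₀ : y ∈ T₀ := by
    have : y ∈ S₂ ∩ T₀ := hy ▸ Finset.mem_singleton_self y
    exact (Finset.mem_inter.1 this).2
  have huy : u ≠ y := fun h => huS₂ (h ▸ hyS₂)
  have hxy : x ≠ y := fun h => hxT₀ (h ▸ hyT₀)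
  have hyS₁ : y ∉ S₁ := by
    intro h
    have : y ∈ S₁ ∩ T₀ := Finset.mem_inter.2 ⟨h, hyT₀⟩
    rw [hS₁T₀u] at this
    exact huy (Finset.mem_singleton.1 this).symm
  have htri : triOf u b b' = {u, x, y} := by
    rw [triOf, hb1, hb2, pair_sdiff hS₁S₂ hS₁T₀,
      pair_sdiff (Ne.symm hS₁S₂) hS₂T₀, pair_inter hS₁S₂ hS₁T₀ hS₂T₀]
    simp only [Finset.sup_singleton, id]
    rw [hx, hy]
    rfl
  exact ⟨S₁, S₂, T₀, x, y, hS₁, hS₂, hT₀, hb1, hb2, hS₁T₀u, hx, hy,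
    hux, huy, hxy, hxT₀, hyS₁, huS₂, hS₁T₀, hS₁S₂, hS₂T₀, htri⟩

lemma singleton_of_inter (hlin : Linear 𝒢) {S T : Finset V} (hS : S ∈ 𝒢) (hT : T ∈ 𝒢)
    (hne : S ≠ T) {v : V} (hvS : v ∈ S) (hvT : v ∈ T) : S ∩ T = {v} := by
  have h1 : ({v} : Finset V) ⊆ S ∩ T := by simp [Finset.singleton_subset_iff, *]
  exact (Finset.eq_of_subset_of_card_le h1 (by simpa using hlin S hS T hT hne)).symm

/-- decomposition of a rainbow triangle at u -/
lemma tri_decomp (hlin : Linear 𝒢) {u : V} {t : Finset V}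
    (ht : (underlyingGraph 𝒢).IsNClique 3 t) (hu : u ∈ t)
    (hnot : ¬ ∃ e ∈ 𝒢, t ⊆ e) :
    ∃ (x y : V) (S T R : Finset V), t = {u, x, y} ∧ u ≠ x ∧ u ≠ y ∧ x ≠ y ∧
      S ∈ 𝒢 ∧ T ∈ 𝒢 ∧ R ∈ 𝒢 ∧ u ∈ S ∧ x ∈ S ∧ u ∈ T ∧ y ∈ T ∧ x ∈ R ∧ y ∈ R ∧
      S ∩ T = {u} ∧ S ∩ R = {x} ∧ T ∩ R = {y} ∧ S ≠ T ∧ S ≠ R ∧ T ≠ R ∧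
      x ∉ T ∧ y ∉ S ∧ u ∉ R := by
  have hxy' : ∃ x y : V, u ≠ x ∧ u ≠ y ∧ x ≠ y ∧ t = {u, x, y} := by
    obtain ⟨a, b, c, hab, hac, hbc, ht'⟩ := Finset.card_eq_three.1 ht.card_eq
    rw [ht'] at hu
    simp only [Finset.mem_insert, Finset.mem_singleton] at hu
    rcases hu with rfl | rfl | rfl
    · exact ⟨b, c, hab, hac, hbc, ht'⟩
    · exact ⟨a, c, hab.symm, hbc, hac, by rw [ht']; ext z; simp; tauto⟩
    · exact ⟨a, b, hac.symm, hbc.symm, hab, by rw [ht']; ext z; simp; tauto⟩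
  obtain ⟨x, y, hux, huy, hxy, ht'⟩ := hxy'
  have hmu : u ∈ (t : Set V) := by rw [ht']; simp
  have hmx : x ∈ (t : Set V) := by rw [ht']; simp
  have hmy : y ∈ (t : Set V) := by rw [ht']; simp
  obtain ⟨-, S, hS, huS, hxS⟩ := ht.isClique hmu hmx hux
  obtain ⟨-, T, hT, huT, hyT⟩ := ht.isClique hmu hmy huy
  obtain ⟨-, R, hR, hxR, hyR⟩ := ht.isClique hmx hmy hxy
  have hST : S ≠ T := by
    rintro rfl
    exact hnot ⟨S, hS, by rw [ht']; intro z hz; simp at hz; rcases hz with rfl|rfl|rfl <;> assumption⟩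
  have hSR : S ≠ R := by
    rintro rfl
    exact hnot ⟨S, hS, by rw [ht']; intro z hz; simp at hz; rcases hz with rfl|rfl|rfl <;> assumption⟩
  have hTR : T ≠ R := by
    rintro rfl
    exact hnot ⟨T, hT, by rw [ht']; intro z hz; simp at hz; rcases hz with rfl|rfl|rfl <;> assumption⟩
  have hSTu : S ∩ T = {u} := singleton_of_inter hlin hS hT hST huS huT
  have hSRx : S ∩ R = {x} := singleton_of_inter hlin hS hR hSR hxS hxR
  have hTRy : T ∩ R = {y} := singleton_of_inter hlin hT hR hTR hyT hyR
  have hxT : x ∉ T := by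
    intro h
    have : x ∈ S ∩ T := Finset.mem_inter.2 ⟨hxS, h⟩
    rw [hSTu] at this
    exact hux (Finset.mem_singleton.1 this).symm
  have hyS : y ∉ S := by
    intro h
    have : y ∈ S ∩ T := Finset.mem_inter.2 ⟨h, hyT⟩
    rw [hSTu] at this
    exact huy (Finset.mem_singleton.1 this).symm
  have huR : u ∉ R := by
    intro h
    have : u ∈ S ∩ R := Finset.mem_inter.2 ⟨huS, h⟩
    rw [hSRx] at this
    exact hux (Finset.mem_singleton.1 this)
  exact ⟨x, y, S, T, R, ht', hux, huy, hxy, hS, hT, hR, huS, hxS, huT, hyT, hxR, hyR,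
    hSTu, hSRx, hTRy, hST, hSR, hTR, hxT, hyS, huR⟩

/-- the number of triangles at `u` contained in a hyperedge. -/
lemma inside_card [Fintype V] {r : ℕ} (hlin : Linear 𝒢) (hunif : Uniform r 𝒢) (u : V) :
    ((((underlyingGraph 𝒢).cliqueFinset 3).filter (fun t => u ∈ t)).filter
        (fun t => ∃ e ∈ 𝒢, t ⊆ e)).card
      = (𝒢.filter (fun e => u ∈ e)).card * (r - 1).choose 2 := by
  classical
  set D := (𝒢.filter (fun e => u ∈ e)).sigma (fun e => (e.erase u).powersetCard 2) with hD
  have himg : (((underlyingGraph 𝒢).cliqueFinset 3).filter (fun t => u ∈ t)).filter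
      (fun t => ∃ e ∈ 𝒢, t ⊆ e) = D.image (fun p => insert u p.2) := by
    ext t
    simp only [Finset.mem_filter, Finset.mem_image, SimpleGraph.mem_cliqueFinset_iff]
    constructor
    · rintro ⟨⟨ht, hu⟩, e, he, hsub⟩
      refine ⟨⟨e, t.erase u⟩, ?_, Finset.insert_erase hu⟩
      rw [hD, Finset.mem_sigma]
      refine ⟨Finset.mem_filter.2 ⟨he, hsub hu⟩, Finset.mem_powersetCard.2
        ⟨Finset.erase_subset_erase u hsub, ?_⟩⟩
      rw [Finset.card_erase_of_mem hu, ht.card_eq]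
    · rintro ⟨⟨e, s⟩, hp, rfl⟩
      rw [hD, Finset.mem_sigma] at hp
      obtain ⟨he', hs⟩ := hp
      obtain ⟨he, hue⟩ := Finset.mem_filter.1 he'
      obtain ⟨hsub, hcard⟩ := Finset.mem_powersetCard.1 hs
      have hus : u ∉ s := fun h => Finset.notMem_erase u e (hsub h)
      have htsub : insert u s ⊆ e :=
        Finset.insert_subset hue (hsub.trans (Finset.erase_subset u e))
      refine ⟨⟨⟨?_, ?_⟩, by simp⟩, e, he, htsub⟩
      · intro a ha b hb hab
        exact ⟨hab, e, he, htsub ha, htsub hb⟩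
      · rw [Finset.card_insert_of_notMem hus, hcard]
  rw [himg, Finset.card_image_of_injOn, hD, Finset.card_sigma]
  · rw [Finset.sum_congr rfl (fun e he => ?_), Finset.sum_const, smul_eq_mul]
    rw [Finset.card_powersetCard, Finset.card_erase_of_mem (Finset.mem_filter.1 he).2,
      hunif e (Finset.mem_filter.1 he).1]
  · rintro ⟨e, s⟩ hp ⟨e', s'⟩ hq heq
    rw [Finset.mem_coe, Finset.mem_sigma] at hp hq
    simp only at heq
    obtain ⟨he', hs⟩ := hp
    obtain ⟨he'', hs'⟩ := hq
    obtain ⟨hsub, hcard⟩ := Finset.mem_powersetCard.1 hs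
    obtain ⟨hsub', hcard'⟩ := Finset.mem_powersetCard.1 hs'
    have hus : u ∉ s := fun h => Finset.notMem_erase u e (hsub h)
    have hus' : u ∉ s' := fun h => Finset.notMem_erase u e' (hsub' h)
    have hss : s = s' := by
      rw [← Finset.erase_insert hus, heq, Finset.erase_insert hus']
    subst hss
    obtain ⟨a, b, hab, rfl⟩ := Finset.card_eq_two.1 hcard
    have hee : e = e' := by
      refine unique_edge hlin (Finset.mem_filter.1 he').1 (Finset.mem_filter.1 he'').1 hab
        ?_ ?_ ?_ ?_
      · exact (Finset.erase_subset u e) (hsub (by simp))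
      · exact (Finset.erase_subset u e) (hsub (by simp))
      · exact (Finset.erase_subset u e') (hsub' (by simp))
      · exact (Finset.erase_subset u e') (hsub' (by simp))
    subst hee
    rfl

end Aux

/-- For every vertex `u` of a linear `r`-graph `𝒢`,
`Σ_{b ∈ B_u} d_B(b) = 2·(t_u - C(r-1,2)·d_𝒢(u))`, where `t_u` is the number of
triangles of the underlying graph containing `u`, `B_u` is the set of bowties
with centre `u`, and `d_𝒢(u)` is the number of hyperedges containing `u`. -/
theorem stmt_10 {V : Type*} [Fintype V] [DecidableEq V] (r : ℕ) (hr : 3 ≤ r)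
    (𝒢 : Finset (Finset V)) (hlin : Linear 𝒢) (hunif : Uniform r 𝒢) (u : V) :
    ∑ b ∈ Finset.univ.filter
        (fun b : {b : Finset (Finset V) // IsBowtie 𝒢 b} =>
          ∃ S T : Finset V, (b : Finset (Finset V)) = {S, T} ∧ S ∩ T = {u}),
        ((bowtieGraph 𝒢).degree b : ℤ) =
      2 * (((((underlyingGraph 𝒢).cliqueFinset 3).filter (fun t => u ∈ t)).card : ℤ)
        - ((r - 1).choose 2 : ℤ) * ((𝒢.filter (fun e => u ∈ e)).card : ℤ)) := by
  classical
  set Bu := Finset.univ.filter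
    (fun b : {b : Finset (Finset V) // IsBowtie 𝒢 b} =>
      ∃ S T : Finset V, (b : Finset (Finset V)) = {S, T} ∧ S ∩ T = {u}) with hBu
  set Tri := ((underlyingGraph 𝒢).cliqueFinset 3).filter (fun t => u ∈ t) with hTri
  set Rain := Tri.filter (fun t => ¬ ∃ e ∈ 𝒢, t ⊆ e) with hRain
  set P := Bu.sigma (fun b => (bowtieGraph 𝒢).neighborFinset b) with hP
  -- membership facts for elements of P
  have hmemP : ∀ p ∈ P, (∃ S T : Finset V, (p.1 : Finset (Finset V)) = {S, T} ∧ S ∩ T = {u})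
      ∧ (bowtieGraph 𝒢).Adj p.1 p.2 := by
    rintro ⟨b, b'⟩ hp
    rw [hP, Finset.mem_sigma] at hp
    obtain ⟨hb, hb'⟩ := hp
    rw [hBu, Finset.mem_filter] at hb
    exact ⟨hb.2, (SimpleGraph.mem_neighborFinset _ _ _).1 hb'⟩
  -- the map into rainbow triangles
  have hmaps : ∀ p ∈ P, triOf u (p.1 : Finset (Finset V)) (p.2 : Finset (Finset V)) ∈ Rain := by
    rintro ⟨b, b'⟩ hp
    obtain ⟨hcen, hadj⟩ := hmemP _ hp
    obtain ⟨hne, hadj'⟩ := hadj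
    obtain ⟨S, S₂, T, x, y, hS, hS₂, hT, hb1, hb2, hSTu, hSS₂x, hS₂Ty, hux, huy, hxy,
      hxT, hyS, huS₂, hST, hSS₂, hS₂T, htri⟩ :=
      pair_props hr hunif b.2 b'.2 hcen hadj'
    have huS : u ∈ S := (Finset.mem_inter.1 (hSTu ▸ Finset.mem_singleton_self u)).1
    have huT : u ∈ T := (Finset.mem_inter.1 (hSTu ▸ Finset.mem_singleton_self u)).2
    have hxS : x ∈ S := (Finset.mem_inter.1 (hSS₂x ▸ Finset.mem_singleton_self x)).1
    have hxS₂ : x ∈ S₂ := (Finset.mem_inter.1 (hSS₂x ▸ Finset.mem_singleton_self x)).2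
    have hyS₂ : y ∈ S₂ := (Finset.mem_inter.1 (hS₂Ty ▸ Finset.mem_singleton_self y)).1
    have hyT : y ∈ T := (Finset.mem_inter.1 (hS₂Ty ▸ Finset.mem_singleton_self y)).2
    rw [htri, hRain, hTri, Finset.mem_filter, Finset.mem_filter,
      SimpleGraph.mem_cliqueFinset_iff]
    refine ⟨⟨SimpleGraph.is3Clique_triple_iff.2 ⟨⟨hux, S, hS, huS, hxS⟩,
      ⟨huy, T, hT, huT, hyT⟩, ⟨hxy, S₂, hS₂, hxS₂, hyS₂⟩⟩, by simp⟩, ?_⟩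
    rintro ⟨e, he, hsub⟩
    have heS : e = S := unique_edge hlin he hS hux (hsub (by simp)) (hsub (by simp)) huS hxS
    exact hyS (heS ▸ hsub (by simp))
  -- fiber cardinality
  have hfiber : ∀ t ∈ Rain,
      (P.filter (fun p => triOf u (p.1 : Finset (Finset V)) (p.2 : Finset (Finset V)) = t)).card
        = 2 := by
    intro t htR
    rw [hRain, Finset.mem_filter, hTri, Finset.mem_filter,
      SimpleGraph.mem_cliqueFinset_iff] at htR
    obtain ⟨⟨htcl, hut⟩, hnot⟩ := htR
    obtain ⟨x, y, S, T, R, ht', hux, huy, hxy, hS, hT, hR, huS, hxS, huT, hyT, hxR, hyR,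
      hSTu, hSRx, hTRy, hST, hSR, hTR, hxT, hyS, huR⟩ := tri_decomp hlin htcl hut hnot
    have hbST : IsBowtie 𝒢 ({S, T} : Finset (Finset V)) :=
      ⟨S, T, hS, hT, hST, by rw [hSTu]; simp, rfl⟩
    have hbRT : IsBowtie 𝒢 ({R, T} : Finset (Finset V)) :=
      ⟨R, T, hR, hT, Ne.symm hTR, by rw [Finset.inter_comm, hTRy]; simp, rfl⟩
    have hbRS : IsBowtie 𝒢 ({R, S} : Finset (Finset V)) :=
      ⟨R, S, hR, hS, Ne.symm hSR, by rw [Finset.inter_comm, hSRx]; simp, rfl⟩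
    set bST : {b : Finset (Finset V) // IsBowtie 𝒢 b} := ⟨{S, T}, hbST⟩ with hbST'
    set bRT : {b : Finset (Finset V) // IsBowtie 𝒢 b} := ⟨{R, T}, hbRT⟩ with hbRT'
    set bRS : {b : Finset (Finset V) // IsBowtie 𝒢 b} := ⟨{R, S}, hbRS⟩ with hbRS'
    have hvalRT : bRT ≠ bRS := by
      intro h
      have : ({R, T} : Finset (Finset V)) = {R, S} := congrArg Subtype.val h
      have hTmem : T ∈ ({R, S} : Finset (Finset V)) := this ▸ (by simp)
      simp only [Finset.mem_insert, Finset.mem_singleton] at hTmem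
      rcases hTmem with h' | h'
      · exact hTR h'
      · exact hST h'.symm
    have hSneRT : bST ≠ bRT := by
      intro h
      have : ({S, T} : Finset (Finset V)) = {R, T} := congrArg Subtype.val h
      have hSmem : S ∈ ({R, T} : Finset (Finset V)) := this ▸ (by simp)
      simp only [Finset.mem_insert, Finset.mem_singleton] at hSmem
      rcases hSmem with h' | h'
      · exact hSR h'
      · exact hST h'
    have hSneRS : bST ≠ bRS := by
      intro h
      have : ({S, T} : Finset (Finset V)) = {R, S} := congrArg Subtype.val h
      have hTmem : T ∈ ({R, S} : Finset (Finset V)) := this ▸ (by simp)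
      simp only [Finset.mem_insert, Finset.mem_singleton] at hTmem
      rcases hTmem with h' | h'
      · exact hTR h'
      · exact hST h'.symm
    -- the two elements of the fiber
    have hmem1 : (⟨bST, bRT⟩ : (_ : {b : Finset (Finset V) // IsBowtie 𝒢 b}) ×
        {b : Finset (Finset V) // IsBowtie 𝒢 b}) ∈ P := by
      rw [hP, Finset.mem_sigma, hBu, Finset.mem_filter]
      refine ⟨⟨Finset.mem_univ _, S, T, rfl, hSTu⟩, ?_⟩
      rw [SimpleGraph.mem_neighborFinset]
      refine ⟨hSneRT, S, R, T, rfl, rfl, by rw [hSRx]; simp, ?_⟩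
      rw [hSRx]
      exact Finset.singleton_inter_of_notMem hxT
    have hmem2 : (⟨bST, bRS⟩ : (_ : {b : Finset (Finset V) // IsBowtie 𝒢 b}) ×
        {b : Finset (Finset V) // IsBowtie 𝒢 b}) ∈ P := by
      rw [hP, Finset.mem_sigma, hBu, Finset.mem_filter]
      refine ⟨⟨Finset.mem_univ _, S, T, rfl, hSTu⟩, ?_⟩
      rw [SimpleGraph.mem_neighborFinset]
      refine ⟨hSneRS, T, R, S, ?_, rfl, by rw [hTRy]; simp, ?_⟩
      · show ({S, T} : Finset (Finset V)) = {T, S}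
        exact Finset.pair_comm S T
      · rw [hTRy]
        exact Finset.singleton_inter_of_notMem hyS
    have htri1 : triOf u (bST : Finset (Finset V)) (bRT : Finset (Finset V)) = t := by
      show triOf u ({S, T} : Finset (Finset V)) {R, T} = t
      rw [triOf, pair_sdiff hSR hST, pair_sdiff (Ne.symm hSR) (Ne.symm hTR),
        pair_inter hSR hST (Ne.symm hTR)]
      simp only [Finset.sup_singleton, id]
      rw [hSRx, Finset.inter_comm R T, hTRy, ht']
      rfl
    have htri2 : triOf u (bST : Finset (Finset V)) (bRS : Finset (Finset V)) = t := by
      show triOf u ({S, T} : Finset (Finset V)) {R, S} = t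
      rw [triOf, Finset.pair_comm S T, pair_sdiff hTR (Ne.symm hST),
        pair_sdiff (Ne.symm hTR) (Ne.symm hSR), pair_inter hTR (Ne.symm hST) (Ne.symm hSR)]
      simp only [Finset.sup_singleton, id]
      rw [Finset.inter_comm R S, hSRx, hTRy, ht']
      rw [Finset.union_comm]
      rfl
    have hfib : P.filter (fun p => triOf u (p.1 : Finset (Finset V))
        (p.2 : Finset (Finset V)) = t)
        = {⟨bST, bRT⟩, ⟨bST, bRS⟩} := by
      ext p
      rw [Finset.mem_filter]
      constructor
      · rintro ⟨hp, htp⟩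
        obtain ⟨hcen, hadj⟩ := hmemP _ hp
        obtain ⟨hne, hadj'⟩ := hadj
        obtain ⟨S₁, S₂, T₀, x₀, y₀, hS₁, hS₂, hT₀, hb1, hb2, hS₁T₀u, hSS₂x, hS₂Ty,
          hux₀, huy₀, hx₀y₀, hx₀T₀, hy₀S₁, huS₂, hS₁T₀, hS₁S₂, hS₂T₀, htri⟩ :=
          pair_props hr hunif p.1.2 p.2.2 hcen hadj'
        have huS₁ : u ∈ S₁ := (Finset.mem_inter.1 (hS₁T₀u ▸ Finset.mem_singleton_self u)).1
        have huT₀ : u ∈ T₀ := (Finset.mem_inter.1 (hS₁T₀u ▸ Finset.mem_singleton_self u)).2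
        have hx₀S₁ : x₀ ∈ S₁ := (Finset.mem_inter.1 (hSS₂x ▸ Finset.mem_singleton_self x₀)).1
        have hx₀S₂ : x₀ ∈ S₂ := (Finset.mem_inter.1 (hSS₂x ▸ Finset.mem_singleton_self x₀)).2
        have hy₀S₂ : y₀ ∈ S₂ := (Finset.mem_inter.1 (hS₂Ty ▸ Finset.mem_singleton_self y₀)).1
        have hy₀T₀ : y₀ ∈ T₀ := (Finset.mem_inter.1 (hS₂Ty ▸ Finset.mem_singleton_self y₀)).2
        rw [htri, ht'] at htp
        have hx₀mem : x₀ ∈ ({u, x, y} : Finset V) := htp ▸ (by simp)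
        have hy₀mem : y₀ ∈ ({u, x, y} : Finset V) := htp ▸ (by simp)
        simp only [Finset.mem_insert, Finset.mem_singleton] at hx₀mem hy₀mem
        rcases hx₀mem with h' | h' | h'
        · exact absurd h'.symm hux₀
        · -- x₀ = x
          subst h'
          rcases hy₀mem with h'' | h'' | h''
          · exact absurd h''.symm huy₀
          · exact (hx₀y₀ h''.symm).elim
          · subst h''
            have heS₁ : S₁ = S := unique_edge hlin hS₁ hS hux huS₁ hx₀S₁ huS hxS
            have heT₀ : T₀ = T := unique_edge hlin hT₀ hT huy huT₀ hy₀T₀ huT hyT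
            have heS₂ : S₂ = R := unique_edge hlin hS₂ hR hxy hx₀S₂ hy₀S₂ hxR hyR
            have hp1 : p.1 = bST := Subtype.ext (by rw [hb1, heS₁, heT₀])
            have hp2 : p.2 = bRT := Subtype.ext (by rw [hb2, heS₂, heT₀])
            have : p = ⟨p.1, p.2⟩ := rfl
            rw [Finset.mem_insert]
            left
            rw [this, hp1, hp2]
        · -- x₀ = y
          subst h'
          rcases hy₀mem with h'' | h'' | h''
          · exact absurd h''.symm huy₀
          · subst h''
            have heS₁ : S₁ = T := unique_edge hlin hS₁ hT huy huS₁ hx₀S₁ huT hyT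
            have heT₀ : T₀ = S := unique_edge hlin hT₀ hS hux huT₀ hy₀T₀ huS hxS
            have heS₂ : S₂ = R := unique_edge hlin hS₂ hR hxy hy₀S₂ hx₀S₂ hxR hyR
            have hp1 : p.1 = bST := Subtype.ext (by
              rw [hb1, heS₁, heT₀]
              show ({T, S} : Finset (Finset V)) = {S, T}
              exact Finset.pair_comm T S)
            have hp2 : p.2 = bRS := Subtype.ext (by rw [hb2, heS₂, heT₀])
            have : p = ⟨p.1, p.2⟩ := rfl
            rw [Finset.mem_insert]
            right
            rw [Finset.mem_singleton, this, hp1, hp2]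
          · exact (hx₀y₀ h''.symm).elim
      · intro hp
        rw [Finset.mem_insert, Finset.mem_singleton] at hp
        rcases hp with rfl | rfl
        · exact ⟨hmem1, htri1⟩
        · exact ⟨hmem2, htri2⟩
    rw [hfib]
    rw [Finset.card_insert_of_notMem, Finset.card_singleton]
    rw [Finset.mem_singleton]
    intro h
    exact hvalRT (congrArg Sigma.snd h)
  -- count
  have hcount : ∑ b ∈ Bu, (bowtieGraph 𝒢).degree b = 2 * Rain.card := by
    have h1 : ∑ b ∈ Bu, (bowtieGraph 𝒢).degree b = P.card := by
      rw [hP, Finset.card_sigma]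
      exact Finset.sum_congr rfl fun b _ => (SimpleGraph.card_neighborFinset_eq_degree _ _).symm
    rw [h1, Finset.card_eq_sum_card_fiberwise hmaps,
      Finset.sum_congr rfl hfiber, Finset.sum_const, smul_eq_mul, mul_comm]
  have hins := inside_card hlin hunif u
  have hsplit : (Tri.filter (fun t => ∃ e ∈ 𝒢, t ⊆ e)).card + Rain.card = Tri.card := by
    rw [hRain]
    exact Finset.card_filter_add_card_filter_not _
  rw [← hTri] at hins
  have : ∑ b ∈ Bu, ((bowtieGraph 𝒢).degree b : ℤ)
      = ((∑ b ∈ Bu, (bowtieGraph 𝒢).degree b : ℕ) : ℤ) := by push_cast; rfl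
  rw [this, hcount]
  push_cast
  rw [← hsplit, hins]
  push_cast
  ring
end

section
/- Let 𝒢 be a linear r-graph whose bowtie graph B has a connected component of size at least r^{10k²} (where k ≥ 3, r ≥ 3). Then 𝒢 contains k hyperedges spanned by at most (r-2)k + 3 vertices. -/
open scoped Classical

/-- The (finite) vertex set of a connected component of a graph. -/
noncomputable def compSupp {V : Type*} [Fintype V] (G : SimpleGraph V)
    (c : G.ConnectedComponent) : Finset V :=
  Finset.univ.filter (fun v => G.connectedComponentMk v = c)

/-- The average degree of a connected component of a graph. -/
noncomputable def compAvgDeg {V : Type*} [Fintype V] (G : SimpleGraph V)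
    (c : G.ConnectedComponent) : ℝ :=
  (∑ v ∈ compSupp G c, (G.degree v : ℝ)) / ((compSupp G c).card : ℝ)

set_option maxHeartbeats 2000000

/-- Ball of radius n has card ≤ (D+1)^n in a graph of max degree D. -/
lemma ball_card_le {V : Type*} [Fintype V] (G : SimpleGraph V) (D : ℕ)
    (hD : ∀ v, G.degree v ≤ D) (v : V) :
    ∀ n : ℕ, (Finset.univ.filter
      (fun u => G.Reachable v u ∧ G.dist v u ≤ n)).card ≤ (D+1)^n := by
  intro n
  induction n with
  | zero =>
    have : (Finset.univ.filter
        (fun u => G.Reachable v u ∧ G.dist v u ≤ 0)) ⊆ {v} := by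
      intro u hu
      simp only [Finset.mem_filter] at hu
      obtain ⟨-, hre, hd⟩ := hu
      have : G.dist v u = 0 := Nat.le_zero.mp hd
      have := hre.dist_eq_zero_iff.mp this
      simp [this]
    simpa using Finset.card_le_card this
  | succ n ih =>
    set B : Finset V := Finset.univ.filter
      (fun u => G.Reachable v u ∧ G.dist v u ≤ n) with hB
    have hsub : (Finset.univ.filter
        (fun u => G.Reachable v u ∧ G.dist v u ≤ n+1)) ⊆
        B ∪ B.biUnion (fun w => G.neighborFinset w) := by
      intro u hu
      simp only [Finset.mem_filter] at hu
      obtain ⟨-, hre, hd⟩ := hu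
      rcases Nat.lt_or_ge (G.dist v u) (n+1) with hlt | hge
      · exact Finset.mem_union_left _ (by simp [hB, hre, Nat.lt_succ_iff.mp hlt])
      · have hdist : G.dist v u = n + 1 := le_antisymm hd hge
        obtain ⟨p, hp⟩ := hre.exists_walk_length_eq_dist
        have hne : u ≠ v := by
          rintro rfl
          rw [hre.dist_eq_zero_iff.mpr rfl] at hdist; omega
        obtain ⟨w, hadj, q, hq⟩ := SimpleGraph.Walk.exists_eq_cons_of_ne hne p.reverse
        have hql : q.length = n := by
          have := congrArg SimpleGraph.Walk.length hq
          simp [hp, hdist] at this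
          omega
        have hrw : G.Reachable v w := ⟨q.reverse⟩
        have hdw : G.dist v w ≤ n := by
          have := SimpleGraph.dist_le q.reverse
          simpa [hql] using this
        refine Finset.mem_union_right _ (Finset.mem_biUnion.mpr ⟨w, ?_, ?_⟩)
        · simp [hB, hrw, hdw]
        · simp [hadj.symm]
    calc (Finset.univ.filter
        (fun u => G.Reachable v u ∧ G.dist v u ≤ n+1)).card
        ≤ (B ∪ B.biUnion (fun w => G.neighborFinset w)).card :=
          Finset.card_le_card hsub
      _ ≤ B.card + (B.biUnion (fun w => G.neighborFinset w)).card :=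
          Finset.card_union_le _ _
      _ ≤ B.card + ∑ w ∈ B, (G.neighborFinset w).card :=
          Nat.add_le_add_left (Finset.card_biUnion_le) _
      _ ≤ B.card + ∑ w ∈ B, D := by
          gcongr with w hw
          exact hD w
      _ = B.card * (D + 1) := by
          rw [Finset.sum_const, smul_eq_mul]; ring
      _ ≤ (D+1)^n * (D+1) := by gcongr
      _ = (D+1)^(n+1) := by ring


lemma ball_card_le' {V : Type*} [Fintype V] (G : SimpleGraph V) (D : ℕ)
    (hD : ∀ v, G.degree v ≤ D) (v : V) (n : ℕ) (s : Finset V)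
    (hs : ∀ u ∈ s, G.Reachable v u ∧ G.dist v u ≤ n) :
    s.card ≤ (D+1)^n :=
  (Finset.card_le_card
    (fun u hu => Finset.mem_filter.mpr ⟨Finset.mem_univ u, hs u hu⟩)).trans
    (ball_card_le G D hD v n)

lemma bowtie_card {V : Type*} [DecidableEq V] {𝒢 b : Finset (Finset V)}
    (hb : IsBowtie 𝒢 b) : b.card = 2 := by
  obtain ⟨S, T, -, -, hne, -, rfl⟩ := hb
  rw [Finset.card_insert_of_notMem (by simpa using hne), Finset.card_singleton]

lemma bowtie_pair {V : Type*} [DecidableEq V] {𝒢 b : Finset (Finset V)}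
    (hb : IsBowtie 𝒢 b) {X Y : Finset V} (h : b = {X, Y}) :
    X ∈ 𝒢 ∧ Y ∈ 𝒢 ∧ X ≠ Y ∧ (X ∩ Y).card = 1 := by
  obtain ⟨S, T, hS, hT, hne, hc, rfl⟩ := hb
  have hXY : X ≠ Y := by
    rintro rfl
    have : ({S, T} : Finset (Finset V)).card = 2 := by
      rw [Finset.card_insert_of_notMem (by simpa using hne), Finset.card_singleton]
    rw [h] at this
    simp at this
  have hX : X ∈ ({S, T} : Finset (Finset V)) := by rw [h]; simp
  have hY : Y ∈ ({S, T} : Finset (Finset V)) := by rw [h]; simp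
  simp only [Finset.mem_insert, Finset.mem_singleton] at hX hY
  rcases hX with rfl | rfl <;> rcases hY with rfl | rfl
  · exact absurd rfl hXY
  · exact ⟨hS, hT, hne, hc⟩
  · exact ⟨hT, hS, hne.symm, by rwa [Finset.inter_comm]⟩
  · exact absurd rfl hXY

section DegBound
variable {V : Type*} [Fintype V] [DecidableEq V] {r : ℕ} {𝒢 : Finset (Finset V)}

lemma neighbor_data (hlin : Linear 𝒢) (b : {b : Finset (Finset V) // IsBowtie 𝒢 b}) :
    ∀ b' : {b : Finset (Finset V) // IsBowtie 𝒢 b},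
      b' ∈ (bowtieGraph 𝒢).neighborFinset b →
      ∃ S₂ T u w, (b' : Finset (Finset V)) = {S₂, T} ∧ T ∈ (b : Finset (Finset V)) ∧
        S₂ ∈ 𝒢 ∧ u ∈ S₂ ∧ w ∈ S₂ ∧ u ≠ w ∧
        u ∈ (b : Finset (Finset V)).sup id ∧ w ∈ (b : Finset (Finset V)).sup id := by
  intro b' hb'
  rw [SimpleGraph.mem_neighborFinset] at hb'
  obtain ⟨hne, S₁, S₂, T, h1, h2, hc12, hdisj⟩ := hb'
  have hS1mem : S₁ ∈ (b : Finset (Finset V)) := by rw [h1]; simp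
  have hTmem : T ∈ (b : Finset (Finset V)) := by rw [h1]; simp
  obtain ⟨hS₂G, hTG, hST, hcST⟩ := bowtie_pair b'.2 h2
  obtain ⟨u, hu⟩ := Finset.card_pos.mp (hc12 ▸ Nat.one_pos)
  obtain ⟨w, hw⟩ := Finset.card_pos.mp (hcST ▸ Nat.one_pos)
  rw [Finset.mem_inter] at hu hw
  have hunotT : u ∉ T := by
    intro hT
    have : u ∈ S₁ ∩ S₂ ∩ T := by simp [Finset.mem_inter, hu.1, hu.2, hT]
    rw [hdisj] at this; exact absurd this (Finset.notMem_empty u)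
  refine ⟨S₂, T, u, w, h2, hTmem, hS₂G, hu.2, hw.1, fun h => hunotT (h ▸ hw.2), ?_, ?_⟩
  · exact Finset.le_sup (f := id) hS1mem hu.1
  · exact Finset.le_sup (f := id) hTmem hw.2

lemma bowtie_degree_le (hlin : Linear 𝒢) (hunif : Uniform r 𝒢)
    (b : {b : Finset (Finset V) // IsBowtie 𝒢 b}) :
    (bowtieGraph 𝒢).degree b ≤ 8 * r ^ 2 := by
  classical
  choose S₂f Tf uf wf hpair hTmem hS₂G huS hwS hneuw hus hws using neighbor_data hlin b
  have hVne : Nonempty V := by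
    obtain ⟨S, T, hS, -, -, hc, -⟩ := b.2
    obtain ⟨x, hx⟩ := Finset.card_pos.mp (hc ▸ Nat.one_pos)
    exact ⟨x⟩
  let f : {b : Finset (Finset V) // IsBowtie 𝒢 b} → Finset V × V × V :=
    fun b' => if h : b' ∈ (bowtieGraph 𝒢).neighborFinset b
      then (Tf b' h, uf b' h, wf b' h) else (∅, Classical.arbitrary V, Classical.arbitrary V)
  have hcard : (bowtieGraph 𝒢).degree b ≤
      ((b : Finset (Finset V)) ×ˢ ((b : Finset (Finset V)).sup id ×ˢ (b : Finset (Finset V)).sup id)).card := by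
    rw [← SimpleGraph.card_neighborFinset_eq_degree]
    apply Finset.card_le_card_of_injOn f
    · intro b' hb'
      rw [Finset.mem_coe] at hb'
      simp only [f, dif_pos hb', Finset.mem_coe, Finset.mem_product]
      exact ⟨hTmem b' hb', hus b' hb', hws b' hb'⟩
    · intro x hx y hy hxy
      rw [Finset.mem_coe] at hx hy
      simp only [f, dif_pos hx, dif_pos hy, Prod.mk.injEq] at hxy
      obtain ⟨hT, hu, hw⟩ := hxy
      -- S₂f x hx = S₂f y hy by linearity
      have hSS : S₂f x hx = S₂f y hy := by
        by_contra hne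
        have := hlin _ (hS₂G x hx) _ (hS₂G y hy) hne
        have h2 : ({uf x hx, wf x hx} : Finset V) ⊆ S₂f x hx ∩ S₂f y hy := by
          intro z hz
          simp only [Finset.mem_insert, Finset.mem_singleton] at hz
          rcases hz with rfl | rfl
          · exact Finset.mem_inter.mpr ⟨huS x hx, hu ▸ huS y hy⟩
          · exact Finset.mem_inter.mpr ⟨hwS x hx, hw ▸ hwS y hy⟩
        have h22 : ({uf x hx, wf x hx} : Finset V).card = 2 := by
          rw [Finset.card_insert_of_notMem (by simpa using hneuw x hx),
            Finset.card_singleton]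
        have := (Finset.card_le_card h2).trans this
        omega
      apply Subtype.ext
      rw [hpair x hx, hpair y hy, hSS, hT]
  refine hcard.trans ?_
  rw [Finset.card_product, Finset.card_product]
  have h1 : (b : Finset (Finset V)).card = 2 := bowtie_card b.2
  have h2 : ((b : Finset (Finset V)).sup id).card ≤ 2 * r := by
    obtain ⟨S, T, hS, hT, hne, -, hb⟩ := b.2
    rw [hb]
    have : ({S, T} : Finset (Finset V)).sup id = S ∪ T := by
      simp [Finset.sup_insert, Finset.sup_singleton]
    rw [this]
    calc (S ∪ T).card ≤ S.card + T.card := Finset.card_union_le _ _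
      _ = 2 * r := by rw [hunif S hS, hunif T hT]; ring
  calc (b : Finset (Finset V)).card * (((b:Finset (Finset V)).sup id).card * ((b:Finset (Finset V)).sup id).card)
      ≤ 2 * ((2*r) * (2*r)) := by
        rw [h1]; gcongr
    _ = 8 * r^2 := by ring

end DegBound

/-- If `S₂` meets `S₁` in a vertex outside `T` and meets `T`, and `S₁ ∪ T ⊆ A`,
then adding `S₂` to `A` adds at most `|S₂| - 2` new vertices. -/
lemma union_step {V : Type*} [DecidableEq V] {S₁ S₂ T A : Finset V} {r : ℕ}
    (hcS₂ : S₂.card = r)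
    (h12 : (S₁ ∩ S₂).card = 1) (hdisj : S₁ ∩ S₂ ∩ T = ∅) (hST : (S₂ ∩ T).card = 1)
    (hS₁A : S₁ ⊆ A) (hTA : T ⊆ A) :
    (A ∪ S₂).card ≤ A.card + (r - 2) := by
  obtain ⟨u, hu⟩ := Finset.card_pos.mp (h12 ▸ Nat.one_pos)
  obtain ⟨w, hw⟩ := Finset.card_pos.mp (hST ▸ Nat.one_pos)
  rw [Finset.mem_inter] at hu hw
  have hunotT : u ∉ T := fun hT => by
    have : u ∈ S₁ ∩ S₂ ∩ T := by simp [Finset.mem_inter, hu.1, hu.2, hT]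
    rw [hdisj] at this; exact absurd this (Finset.notMem_empty u)
  have huw : u ≠ w := fun h => hunotT (h ▸ hw.2)
  have hsub : S₂ \ A ⊆ S₂ \ {u, w} := by
    intro z hz
    rw [Finset.mem_sdiff] at hz ⊢
    refine ⟨hz.1, fun hmem => hz.2 ?_⟩
    simp only [Finset.mem_insert, Finset.mem_singleton] at hmem
    rcases hmem with rfl | rfl
    · exact hS₁A hu.1
    · exact hTA hw.2
  have huwS : ({u, w} : Finset V) ⊆ S₂ := by
    intro z hz
    simp only [Finset.mem_insert, Finset.mem_singleton] at hz
    rcases hz with rfl | rfl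
    · exact hu.2
    · exact hw.1
  have hcuw : ({u, w} : Finset V).card = 2 := by
    rw [Finset.card_insert_of_notMem (by simpa using huw), Finset.card_singleton]
  calc (A ∪ S₂).card = (S₂ \ A).card + A.card := by
        rw [Finset.union_comm, Finset.card_sdiff_add_card]
    _ ≤ A.card + (r - 2) := by
        have := Finset.card_sdiff_of_subset huwS
        have h2 := Finset.card_le_card hsub
        omega

lemma bowtie_subset {V : Type*} [DecidableEq V] {𝒢 b : Finset (Finset V)}
    (hb : IsBowtie 𝒢 b) : b ⊆ 𝒢 := by
  obtain ⟨S, T, hS, hT, -, -, rfl⟩ := hb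
  intro x hx
  simp only [Finset.mem_insert, Finset.mem_singleton] at hx
  rcases hx with rfl | rfl <;> assumption

set_option maxHeartbeats 2000000 in
lemma extract {V : Type*} [Fintype V] [DecidableEq V] {r k : ℕ}
    (hr : 3 ≤ r) (hk : 3 ≤ k) {𝒢 : Finset (Finset V)}
    (hlin : Linear 𝒢) (hunif : Uniform r 𝒢)
    (f : ℕ → {b : Finset (Finset V) // IsBowtie 𝒢 b}) {n : ℕ} (hn : n = k ^ 2)
    (hadj : ∀ i < n, (bowtieGraph 𝒢).Adj (f i) (f (i+1)))
    (hinj : ∀ i ≤ n, ∀ j ≤ n, f i = f j → i = j) :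
    ∃ 𝒦 : Finset (Finset V), 𝒦 ⊆ 𝒢 ∧ 𝒦.card = k ∧
      (𝒦.sup id).card ≤ (r - 2) * k + 3 := by
  set E : ℕ → Finset (Finset V) :=
    fun j => (Finset.range (j+1)).biUnion (fun i => (f i : Finset (Finset V))) with hE
  have hEsub : ∀ j, E j ⊆ 𝒢 := by
    intro j x hx
    simp only [hE, Finset.mem_biUnion] at hx
    obtain ⟨i, -, hx⟩ := hx
    exact bowtie_subset (f i).2 hx
  have hmemE : ∀ i j, i ≤ j → ∀ x ∈ (f i : Finset (Finset V)), x ∈ E j := by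
    intro i j hij x hx
    simp only [hE, Finset.mem_biUnion]
    exact ⟨i, Finset.mem_range.mpr (by omega), hx⟩
  have hEsucc : ∀ i, E (i+1) = (f (i+1) : Finset (Finset V)) ∪ E i := by
    intro i
    simp only [hE]
    rw [Finset.range_add_one, Finset.biUnion_insert]
  -- the per-step insert description
  have hstep : ∀ i < n, ∃ S₂ : Finset V, S₂ ∈ 𝒢 ∧ E (i+1) = insert S₂ (E i) ∧
      (S₂ ∉ E i → ((E (i+1)).sup id).card ≤ ((E i).sup id).card + (r - 2)) := by
    intro i hi
    obtain ⟨-, S₁, S₂, T, h1, h2, hc12, hdisj⟩ := hadj i hi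
    obtain ⟨hS₂G, hTG, hS₂T, hcS₂T⟩ := bowtie_pair (f (i+1)).2 h2
    have hTE : T ∈ E i := hmemE i i le_rfl T (by rw [h1]; simp)
    have hS₁E : S₁ ∈ E i := hmemE i i le_rfl S₁ (by rw [h1]; simp)
    have hins : E (i+1) = insert S₂ (E i) := by
      rw [hEsucc, h2, Finset.insert_union,
        Finset.union_eq_right.mpr (Finset.singleton_subset_iff.mpr hTE)]
    refine ⟨S₂, hS₂G, hins, fun hnotin => ?_⟩
    rw [hins, Finset.sup_insert]
    have hsup : (id S₂) ⊔ (E i).sup id = ((E i).sup id) ∪ S₂ := by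
      simp [Finset.union_comm]
    rw [hsup]
    exact union_step (hunif S₂ hS₂G) hc12 hdisj hcS₂T
      (Finset.le_sup (f := id) hS₁E) (Finset.le_sup (f := id) hTE)
  have hcard_succ : ∀ i < n, (E (i+1)).card ≤ (E i).card + 1 := by
    intro i hi
    obtain ⟨S₂, -, hins, -⟩ := hstep i hi
    rw [hins]
    exact Finset.card_insert_le _ _
  -- base facts
  have hE0 : (E 0).card = 2 := by
    have : E 0 = (f 0 : Finset (Finset V)) := by
      simp [hE]
    rw [this]; exact bowtie_card (f 0).2
  -- base case of the invariant
  have hnpos : 0 < n := by have : 9 ≤ k ^ 2 := by nlinarith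
                           omega
  have hbase : ((E 1).sup id).card ≤ (r - 2) * (E 1).card + 3 ∧ (E 1).card = 3 := by
    obtain ⟨-, S₁, S₂, T, h1, h2, hc12, hdisj⟩ := hadj 0 hnpos
    obtain ⟨hS₁G, hTG, hS₁T, hcS₁T⟩ := bowtie_pair (f 0).2 h1
    obtain ⟨hS₂G, -, hS₂T, hcS₂T⟩ := bowtie_pair (f 1).2 h2
    have hS₁S₂ : S₁ ≠ S₂ := by
      rintro rfl
      rw [Finset.inter_self] at hc12
      have := hunif S₁ hS₁G
      omega
    have hE1 : E 1 = {S₁, S₂, T} := by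
      ext x
      simp only [hE, Finset.mem_biUnion, Finset.mem_range]
      constructor
      · rintro ⟨i, hi, hx⟩
        interval_cases i
        · rw [h1] at hx
          simp only [Finset.mem_insert, Finset.mem_singleton] at hx ⊢
          tauto
        · rw [h2] at hx
          simp only [Finset.mem_insert, Finset.mem_singleton] at hx ⊢
          tauto
      · intro hx
        simp only [Finset.mem_insert, Finset.mem_singleton] at hx
        rcases hx with rfl | rfl | rfl
        · exact ⟨0, by omega, by rw [h1]; simp⟩
        · exact ⟨1, by omega, by rw [h2]; simp⟩
        · exact ⟨0, by omega, by rw [h1]; simp⟩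
    have hcE1 : (E 1).card = 3 := by
      rw [hE1]
      rw [Finset.card_insert_of_notMem (by simp [hS₁S₂, hS₁T]),
        Finset.card_insert_of_notMem (by simp [hS₂T]), Finset.card_singleton]
    constructor
    · rw [hE1]
      have hcE1' : ({S₁, S₂, T} : Finset (Finset V)).card = 3 := hE1 ▸ hcE1
      rw [hcE1']
      have hsup : ({S₁, S₂, T} : Finset (Finset V)).sup id = (S₁ ∪ T) ∪ S₂ := by
        simp only [Finset.sup_insert, Finset.sup_singleton, id]
        ext x; simp [Finset.mem_union]; tauto
      rw [hsup]
      have h1c : (S₁ ∪ T).card ≤ 2 * r - 1 := by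
        have := Finset.card_union_add_card_inter S₁ T
        have hu1 := hunif S₁ hS₁G
        have hu2 := hunif T hTG
        omega
      have h2c := union_step (A := S₁ ∪ T) (hunif S₂ hS₂G) hc12 hdisj hcS₂T
        Finset.subset_union_left Finset.subset_union_right
      have : (r - 2) * 3 + 3 = 3 * r - 3 := by omega
      omega
    · exact hcE1
  -- the invariant
  have hinv : ∀ j, 1 ≤ j → j ≤ n → ((E j).sup id).card ≤ (r - 2) * (E j).card + 3 := by
    intro j
    induction j with
    | zero => exact fun h => absurd h (by omega)
    | succ m ih =>
      intro _ hmn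
      rcases Nat.eq_zero_or_pos m with hm0 | hm0
      · subst hm0; exact hbase.1
      · have hm1 : 1 ≤ m := hm0
        have hmn' : m ≤ n := by omega
        have ihm := ih hm1 hmn'
        obtain ⟨S₂, -, hins, hgrow⟩ := hstep m (by omega)
        by_cases hS₂E : S₂ ∈ E m
        · rw [hins, Finset.insert_eq_self.mpr hS₂E]
          exact ihm
        · have hc : (E (m+1)).card = (E m).card + 1 := by
            rw [hins, Finset.card_insert_of_notMem hS₂E]
          rw [hc]
          calc ((E (m+1)).sup id).card ≤ ((E m).sup id).card + (r - 2) := hgrow hS₂E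
            _ ≤ (r - 2) * (E m).card + 3 + (r - 2) := by omega
            _ = (r - 2) * ((E m).card + 1) + 3 := by ring
  -- termination: some prefix has at least k distinct hyperedges
  have hterm : ∃ j ≤ n, k ≤ (E j).card := by
    by_contra hcon
    push_neg at hcon
    have hEn : (E n).card ≤ k - 1 := by have := hcon n le_rfl; omega
    have hcle : n + 1 ≤ ((E n).card).choose 2 := by
      have : (Finset.range (n+1)).card ≤ (Finset.powersetCard 2 (E n)).card := by
        apply Finset.card_le_card_of_injOn (fun i => ((f i) : Finset (Finset V)))
        · intro i hi
          simp only [Finset.mem_coe, Finset.mem_range] at hi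
          rw [Finset.mem_coe, Finset.mem_powersetCard]
          exact ⟨fun x hx => hmemE i n (by omega) x hx, bowtie_card (f i).2⟩
        · intro i hi j hj hij
          rw [Finset.mem_coe, Finset.mem_range] at hi hj
          exact hinj i (by omega) j (by omega) (Subtype.ext hij)
      rwa [Finset.card_range, Finset.card_powersetCard] at this
    have hmono := Nat.choose_le_choose 2 hEn
    have h2 : (k-1).choose 2 = (k-1) * (k-1-1) / 2 := Nat.choose_two_right (k-1)
    have h3 : (k-1) * (k-1-1) / 2 ≤ (k-1) * (k-1-1) := Nat.div_le_self _ _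
    have h4 : (k-1) * (k-1-1) ≤ k * k := Nat.mul_le_mul (by omega) (by omega)
    have h5 : k * k = n := by rw [hn]; ring
    omega
  -- minimal such j
  have hex : ∃ j, k ≤ (E j).card := ⟨hterm.choose, hterm.choose_spec.2⟩
  have hspec : k ≤ (E (Nat.find hex)).card := Nat.find_spec hex
  have hfn : Nat.find hex ≤ n :=
    (Nat.find_min' hex hterm.choose_spec.2).trans hterm.choose_spec.1
  have hpos : Nat.find hex ≠ 0 := by
    intro h0
    rw [h0] at hspec
    omega
  obtain ⟨j', hj'⟩ : ∃ j', Nat.find hex = j' + 1 := ⟨Nat.find hex - 1, by omega⟩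
  have hmin : ¬ k ≤ (E j').card := Nat.find_min hex (by omega)
  rw [hj'] at hspec hfn
  have hcsucc := hcard_succ j' (by omega)
  have hcardk : (E (j'+1)).card = k := by omega
  exact ⟨E (j'+1), hEsub _, hcardk, by
    have := hinv (j'+1) (by omega) hfn
    rwa [hcardk] at this⟩

/-- If the bowtie graph of a linear `r`-graph `𝒢` has a connected component with at
least `r^(10k²)` vertices (`r, k ≥ 3`), then `𝒢` contains `k` hyperedges spanned by
at most `(r-2)k + 3` vertices. -/
theorem stmt_16 {V : Type*} [Fintype V] [DecidableEq V] (r k : ℕ)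
    (hr : 3 ≤ r) (hk : 3 ≤ k)
    (𝒢 : Finset (Finset V)) (hlin : Linear 𝒢) (hunif : Uniform r 𝒢)
    (hcomp : ∃ c : (bowtieGraph 𝒢).ConnectedComponent,
      r ^ (10 * k ^ 2) ≤ (compSupp (bowtieGraph 𝒢) c).card) :
    ∃ 𝒦 : Finset (Finset V), 𝒦 ⊆ 𝒢 ∧ 𝒦.card = k ∧
      (𝒦.sup id).card ≤ (r - 2) * k + 3 := by
  classical
  obtain ⟨c, hc⟩ := hcomp
  have hpow : 0 < r ^ (10 * k ^ 2) := pow_pos (by omega) _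
  have hbne : (compSupp (bowtieGraph 𝒢) c).Nonempty :=
    Finset.card_pos.mp (hpow.trans_le hc)
  obtain ⟨b₀, hb₀⟩ := hbne
  have hb₀c : (bowtieGraph 𝒢).connectedComponentMk b₀ = c := (Finset.mem_filter.mp hb₀).2
  have hreach : ∀ u ∈ compSupp (bowtieGraph 𝒢) c, (bowtieGraph 𝒢).Reachable b₀ u := by
    intro u hu
    have huc := (Finset.mem_filter.mp hu).2
    exact SimpleGraph.ConnectedComponent.exact (hb₀c.trans huc.symm)
  have hk2 : 1 ≤ k ^ 2 := Nat.one_le_pow _ _ (by omega)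
  have hfar : ∃ u ∈ compSupp (bowtieGraph 𝒢) c, k ^ 2 ≤ (bowtieGraph 𝒢).dist b₀ u := by
    by_contra hcon
    push_neg at hcon
    have h1 : (compSupp (bowtieGraph 𝒢) c).card ≤ (8 * r ^ 2 + 1) ^ (k ^ 2 - 1) := by
      apply ball_card_le' (bowtieGraph 𝒢) (8 * r ^ 2)
        (bowtie_degree_le hlin hunif) b₀ (k ^ 2 - 1)
      intro u hu
      refine ⟨hreach u hu, ?_⟩
      have := hcon u hu
      omega
    have h2 : 8 * r ^ 2 + 1 ≤ r ^ 4 := by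
      have h9 : 9 ≤ r ^ 2 := by nlinarith
      calc 8 * r ^ 2 + 1 ≤ 9 * r ^ 2 := by nlinarith
        _ ≤ r ^ 2 * r ^ 2 := Nat.mul_le_mul_right _ h9
        _ = r ^ 4 := by ring
    have h3 : (8 * r ^ 2 + 1) ^ (k ^ 2 - 1) ≤ (r ^ 4) ^ (k ^ 2 - 1) :=
      Nat.pow_le_pow_left h2 _
    have h4 : (r ^ 4) ^ (k ^ 2 - 1) = r ^ (4 * (k ^ 2 - 1)) := by rw [← pow_mul]
    have h5 : r ^ (4 * (k ^ 2 - 1)) < r ^ (10 * k ^ 2) := by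
      apply Nat.pow_lt_pow_right (by omega)
      omega
    omega
  obtain ⟨u, hu, hdist⟩ := hfar
  obtain ⟨p0⟩ := hreach u hu
  have hq : p0.bypass.IsPath := SimpleGraph.Walk.bypass_isPath p0
  have hlen : k ^ 2 ≤ p0.bypass.length := hdist.trans (SimpleGraph.dist_le p0.bypass)
  have hsuplen : p0.bypass.support.length = p0.bypass.length + 1 :=
    SimpleGraph.Walk.length_support p0.bypass
  refine extract hr hk hlin hunif (fun i => p0.bypass.support.getD i b₀)
    (rfl : k ^ 2 = k ^ 2) ?_ ?_
  · intro i hi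
    have hi0 : i < p0.bypass.support.length := by omega
    have hi1 : i + 1 < p0.bypass.support.length := by omega
    have hchain := List.isChain_iff_getElem.mp
      (SimpleGraph.Walk.isChain_adj_support p0.bypass) i (by omega)
    have e0 : p0.bypass.support.getD i b₀ = p0.bypass.support.get ⟨i, hi0⟩ := by
      rw [List.getD_eq_getElem _ _ hi0, List.get_eq_getElem]
    have e1 : p0.bypass.support.getD (i+1) b₀ = p0.bypass.support.get ⟨i+1, hi1⟩ := by
      rw [List.getD_eq_getElem _ _ hi1, List.get_eq_getElem]
    simp only [e0, e1]
    exact hchain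
  · intro i hi j hj hij
    have hi0 : i < p0.bypass.support.length := by omega
    have hj0 : j < p0.bypass.support.length := by omega
    have hnd := hq.support_nodup
    rw [List.nodup_iff_injective_get] at hnd
    have e0 : p0.bypass.support.getD i b₀ = p0.bypass.support.get ⟨i, hi0⟩ := by
      rw [List.getD_eq_getElem _ _ hi0, List.get_eq_getElem]
    have e1 : p0.bypass.support.getD j b₀ = p0.bypass.support.get ⟨j, hj0⟩ := by
      rw [List.getD_eq_getElem _ _ hj0, List.get_eq_getElem]
    have hget : p0.bypass.support.get ⟨i, hi0⟩ = p0.bypass.support.get ⟨j, hj0⟩ := by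
      rw [← e0, ← e1]; exact hij
    simpa using hnd hget
end

section
/- Let 𝒢 be a linear r-graph (r ≥ 3) on n vertices whose bowtie graph B has at least β·n³ dense components, each of size at most r^{10k²}, where n > 2rk·r^{10k²}/β and k ≥ 3. Then there exist a vertex u₀, a hyperedge T₀ containing u₀, hyperedges T⁰₁,...,T⁰_{2rk} each containing u₀, and pairwise distinct dense components C¹,...,C^{2rk} of B such that the bowtie {T₀, T⁰_ℓ} belongs to C^ℓ for each ℓ. -/
open scoped Classical

/-- A component of the bowtie graph is dense if its average degree is at least `3(r-1)`. -/
noncomputable def DenseComp {W : Type*} [Fintype W] (r : ℕ) (B : SimpleGraph W)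
    (c : B.ConnectedComponent) : Prop :=
  (3 * (r - 1) : ℝ) ≤ compAvgDeg B c

/-- If the bowtie graph of a linear `r`-graph on `n > 2rk·r^(10k²)/β` vertices has at
least `β·n³` dense components, each of size at most `r^(10k²)`, then there are a vertex
`u₀`, a hyperedge `T₀ ∋ u₀`, `2rk` further distinct hyperedges `T⁰ℓ ∋ u₀` and pairwise
distinct dense components `Cℓ` with `{T₀, T⁰ℓ} ∈ Cℓ` for each `ℓ`. -/
theorem stmt_17 {V : Type*} [Fintype V] [DecidableEq V] (r k n : ℕ) (β : ℝ)
    (hr : 3 ≤ r) (hk : 3 ≤ k) (hβ : 0 < β)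
    (𝒢 : Finset (Finset V)) (hcard : Fintype.card V = n)
    (hlin : Linear 𝒢) (hunif : Uniform r 𝒢)
    (hn : ((2 * r * k * r ^ (10 * k ^ 2) : ℕ) : ℝ) / β < (n : ℝ))
    (hsize : ∀ c : (bowtieGraph 𝒢).ConnectedComponent,
      DenseComp r (bowtieGraph 𝒢) c → (compSupp (bowtieGraph 𝒢) c).card ≤ r ^ (10 * k ^ 2))
    (hmany : β * (n : ℝ) ^ 3 ≤
      ((Finset.univ.filter (fun c : (bowtieGraph 𝒢).ConnectedComponent =>
        DenseComp r (bowtieGraph 𝒢) c)).card : ℝ)) :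
    ∃ (u₀ : V) (T₀ : Finset V), T₀ ∈ 𝒢 ∧ u₀ ∈ T₀ ∧
      ∃ (T : Fin (2 * r * k) → Finset V)
        (C : Fin (2 * r * k) → (bowtieGraph 𝒢).ConnectedComponent),
        Function.Injective T ∧ Function.Injective C ∧
        ∀ ℓ : Fin (2 * r * k), T ℓ ∈ 𝒢 ∧ T ℓ ≠ T₀ ∧ u₀ ∈ T ℓ ∧
          DenseComp r (bowtieGraph 𝒢) (C ℓ) ∧
          ∃ b : {b : Finset (Finset V) // IsBowtie 𝒢 b},
            (b : Finset (Finset V)) = {T₀, T ℓ} ∧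
            (bowtieGraph 𝒢).connectedComponentMk b = C ℓ := by
  classical
  -- choose, for each component, a representative bowtie with its data
  have hrep : ∀ c : (bowtieGraph 𝒢).ConnectedComponent,
      ∃ (b : {b : Finset (Finset V) // IsBowtie 𝒢 b}) (S T : Finset V) (u : V),
        (bowtieGraph 𝒢).connectedComponentMk b = c ∧ S ∈ 𝒢 ∧ T ∈ 𝒢 ∧ S ≠ T ∧
        (b : Finset (Finset V)) = {S, T} ∧ S ∩ T = {u} := by
    intro c
    obtain ⟨b, hb⟩ := c.exists_rep
    obtain ⟨S, T, hS, hT, hne, hc1, hval⟩ := b.2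
    obtain ⟨u, hu⟩ := Finset.card_eq_one.mp hc1
    exact ⟨b, S, T, u, hb, hS, hT, hne, hval, hu⟩
  choose bb Sf Tf uf hmk hSf hTf hneST hval hint using hrep
  have hucmem : ∀ c, uf c ∈ Sf c ∩ Tf c := by
    intro c; rw [hint c]; exact Finset.mem_singleton_self _
  -- at most n hyperedges through a fixed vertex
  have hdeg : ∀ u : V, (𝒢.filter (fun S => u ∈ S)).card ≤ n := by
    intro u
    have hpick : ∀ S : Finset V, ∃ v, S ∈ 𝒢.filter (fun S => u ∈ S) → (v ∈ S ∧ v ≠ u) := by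
      intro S
      by_cases hS : S ∈ 𝒢.filter (fun S => u ∈ S)
      · have h1 : 1 < S.card := by
          rw [hunif S (Finset.mem_filter.mp hS).1]; omega
        obtain ⟨v, hv, hvu⟩ := Finset.exists_mem_ne h1 u
        exact ⟨v, fun _ => ⟨hv, hvu⟩⟩
      · exact ⟨u, fun h => absurd h hS⟩
    choose pv hpv using hpick
    have hinj : Set.InjOn pv (𝒢.filter (fun S => u ∈ S)) := by
      intro S hS S' hS' heq
      rw [Finset.mem_coe] at hS hS'
      by_contra hne'
      obtain ⟨hvS, hvu⟩ := hpv S hS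
      obtain ⟨hvS', _⟩ := hpv S' hS'
      have huS : u ∈ S := (Finset.mem_filter.mp hS).2
      have huS' : u ∈ S' := (Finset.mem_filter.mp hS').2
      have h2 : 1 < (S ∩ S').card :=
        Finset.one_lt_card.mpr ⟨u, Finset.mem_inter.mpr ⟨huS, huS'⟩,
          pv S, Finset.mem_inter.mpr ⟨hvS, heq ▸ hvS'⟩, fun h => hvu h.symm⟩
      exact absurd (hlin S (Finset.mem_filter.mp hS).1 S' (Finset.mem_filter.mp hS').1 hne')
        (by omega)
    calc (𝒢.filter (fun S => u ∈ S)).card ≤ Finset.univ.card :=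
          Finset.card_le_card_of_injOn pv (fun _ _ => Finset.mem_univ _) hinj
      _ = n := by rw [Finset.card_univ, hcard]
  -- the set of incident (vertex, edge) pairs has at most n² elements
  set P : Finset (V × Finset V) := (Finset.univ ×ˢ 𝒢).filter (fun p => p.1 ∈ p.2) with hPdef
  have hP : P.card ≤ n * n := by
    have hsub : P ⊆ Finset.univ.biUnion
        (fun u => (𝒢.filter (fun S => u ∈ S)).image (fun S => (u, S))) := by
      intro p hp
      rw [hPdef, Finset.mem_filter, Finset.mem_product] at hp
      exact Finset.mem_biUnion.mpr ⟨p.1, Finset.mem_univ _,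
        Finset.mem_image.mpr ⟨p.2, Finset.mem_filter.mpr ⟨hp.1.2, hp.2⟩, rfl⟩⟩
    calc P.card ≤ _ := Finset.card_le_card hsub
      _ ≤ ∑ u : V, ((𝒢.filter (fun S => u ∈ S)).image (fun S => (u, S))).card :=
          Finset.card_biUnion_le
      _ ≤ ∑ _u : V, n := Finset.sum_le_sum
          (fun u _ => le_trans Finset.card_image_le (hdeg u))
      _ = n * n := by rw [Finset.sum_const, smul_eq_mul, Finset.card_univ, hcard]
  -- numerics
  have hr0 : 0 < r := by omega
  have hk0 : 0 < k := by omega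
  have hrk1 : 0 < 2 * r * k := by positivity
  have hNpos : 0 < 2 * r * k * r ^ (10 * k ^ 2) := by positivity
  have hβn : ((2 * r * k * r ^ (10 * k ^ 2) : ℕ) : ℝ) < β * n := by
    rw [mul_comm β]
    exact (div_lt_iff₀ hβ).mp hn
  have hn0 : (0 : ℝ) < (n : ℝ) := by
    refine lt_trans (div_pos ?_ hβ) hn
    exact_mod_cast hNpos
  have hsmall : ((2 * r * k - 1 : ℕ) : ℝ) < β * n := by
    refine lt_of_lt_of_le ?_ hβn.le
    have : (2 * r * k - 1 : ℕ) < 2 * r * k * r ^ (10 * k ^ 2) := by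
      have h1 : 1 ≤ r ^ (10 * k ^ 2) := Nat.one_le_pow _ _ hr0
      calc 2 * r * k - 1 < 2 * r * k := by omega
        _ ≤ 2 * r * k * r ^ (10 * k ^ 2) := Nat.le_mul_of_pos_right _ (by positivity)
    exact_mod_cast this
  -- pigeonhole setup
  have hmapsto : ∀ c ∈ (Finset.univ.filter
      (fun c : (bowtieGraph 𝒢).ConnectedComponent => DenseComp r (bowtieGraph 𝒢) c)),
      (uf c, Sf c) ∈ P := by
    intro c _
    rw [hPdef, Finset.mem_filter, Finset.mem_product]
    exact ⟨⟨Finset.mem_univ _, hSf c⟩, (Finset.mem_inter.mp (hucmem c)).1⟩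
  have hlt : P.card * (2 * r * k - 1) <
      (Finset.univ.filter (fun c : (bowtieGraph 𝒢).ConnectedComponent =>
        DenseComp r (bowtieGraph 𝒢) c)).card := by
    have hreal : ((P.card * (2 * r * k - 1) : ℕ) : ℝ) <
        ((Finset.univ.filter (fun c : (bowtieGraph 𝒢).ConnectedComponent =>
          DenseComp r (bowtieGraph 𝒢) c)).card : ℝ) := by
      push_cast
      calc (P.card : ℝ) * ((2 * r * k - 1 : ℕ) : ℝ)
          ≤ ((n : ℝ) * n) * ((2 * r * k - 1 : ℕ) : ℝ) := by
            refine mul_le_mul_of_nonneg_right ?_ (by positivity)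
            exact_mod_cast hP
        _ < ((n : ℝ) * n) * (β * n) := by
            refine mul_lt_mul_of_pos_left hsmall (by positivity)
        _ = β * (n : ℝ) ^ 3 := by ring
        _ ≤ _ := hmany
    exact_mod_cast hreal
  obtain ⟨p, hpP, hfib⟩ :=
    Finset.exists_lt_card_fiber_of_mul_lt_card_of_maps_to hmapsto hlt
  obtain ⟨u₀, T₀⟩ := p
  rw [hPdef, Finset.mem_filter, Finset.mem_product] at hpP
  set F := (Finset.univ.filter (fun c : (bowtieGraph 𝒢).ConnectedComponent =>
      DenseComp r (bowtieGraph 𝒢) c)).filter (fun c => (uf c, Sf c) = (u₀, T₀)) with hFdef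
  have hF : 2 * r * k ≤ F.card := by
    have := hfib
    set m := 2 * r * k
    omega
  -- the components
  set Cfun : Fin (2 * r * k) → (bowtieGraph 𝒢).ConnectedComponent :=
    fun ℓ => ((F.equivFin.symm (Fin.castLE hF ℓ) : F) : (bowtieGraph 𝒢).ConnectedComponent)
    with hCdef
  have hCmem : ∀ ℓ, Cfun ℓ ∈ F := fun ℓ => (F.equivFin.symm (Fin.castLE hF ℓ)).2
  have hCinj : Function.Injective Cfun := by
    intro a b h
    have h1 : F.equivFin.symm (Fin.castLE hF a) = F.equivFin.symm (Fin.castLE hF b) :=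
      Subtype.ext h
    have h2 : Fin.castLE hF a = Fin.castLE hF b := F.equivFin.symm.injective h1
    exact Fin.ext (by simpa using congrArg Fin.val h2)
  have hkey : ∀ ℓ, uf (Cfun ℓ) = u₀ ∧ Sf (Cfun ℓ) = T₀ ∧
      DenseComp r (bowtieGraph 𝒢) (Cfun ℓ) := by
    intro ℓ
    have := hCmem ℓ
    rw [hFdef, Finset.mem_filter, Finset.mem_filter] at this
    obtain ⟨⟨-, hdense⟩, heq⟩ := this
    exact ⟨congrArg Prod.fst heq, congrArg Prod.snd heq, hdense⟩
  refine ⟨u₀, T₀, hpP.1.2, hpP.2, fun ℓ => Tf (Cfun ℓ), Cfun, ?_, hCinj, ?_⟩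
  · -- injectivity of the T's
    intro a b h
    simp only at h
    apply hCinj
    have hva : (bb (Cfun a) : Finset (Finset V)) = {T₀, Tf (Cfun a)} := by
      rw [hval (Cfun a), (hkey a).2.1]
    have hvb : (bb (Cfun b) : Finset (Finset V)) = {T₀, Tf (Cfun b)} := by
      rw [hval (Cfun b), (hkey b).2.1]
    have : bb (Cfun a) = bb (Cfun b) := Subtype.ext (by rw [hva, hvb, h])
    rw [← hmk (Cfun a), ← hmk (Cfun b), this]
  · intro ℓ
    obtain ⟨hu, hS, hdense⟩ := hkey ℓ
    refine ⟨hTf _, ?_, ?_, hdense, bb (Cfun ℓ), ?_, hmk _⟩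
    · rw [← hS]; exact (hneST (Cfun ℓ)).symm
    · rw [← hu]; exact (Finset.mem_inter.mp (hucmem (Cfun ℓ))).2
    · rw [hval (Cfun ℓ), hS]
end
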